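/- arXiv:2005.01695 — 7 statements merged into one kernel-verified Lean document; each statement's English description precedes it below -/
import Mathlib

section
/- Let ℓ be a natural number and let f be a trigonometric polynomial (a finite real linear combination of the functions cos(kx) and sin(kx), k ∈ ℕ) having at least ℓ zeros in an interval I ⊆ [0, 2π] of length η. Then sup_{x ∈ I} |f(x)| ≤ η^ℓ · sup_{x ∈ I} |f^{(ℓ)}(x)|, where f^{(ℓ)} denotes the ℓ-th derivative of f. -/
open Real
open scoped ContDiff

lemma key_bound (ℓ : ℕ) : ∀ f : ℝ → ℝ, ContDiff ℝ ∞ f → ∀ p q : ℝ, p ≤ q →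
    (∃ s : Finset ℝ, ℓ ≤ s.card ∧ ∀ x ∈ s, x ∈ Set.Icc p q ∧ f x = 0) →
    ∀ x ∈ Set.Icc p q,
      |f x| ≤ (q - p) ^ ℓ * sSup ((fun y => |iteratedDeriv ℓ f y|) '' Set.Icc p q) := by
  induction ℓ with
  | zero =>
    intro f hcd p q hpq _ x hx
    simp only [pow_zero, one_mul, iteratedDeriv_zero]
    exact le_csSup (isCompact_Icc.image (continuous_abs.comp hcd.continuous)).bddAbove
      ⟨x, hx, rfl⟩
  | succ ℓ ih =>
    intro f hcd p q hpq hzeros x hx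
    obtain ⟨s, hcard, hs⟩ := hzeros
    obtain ⟨t, hts, hcardt⟩ := Finset.exists_subset_card_eq hcard
    set e := t.orderIsoOfFin hcardt with he
    set g : Fin (ℓ + 1) → ℝ := fun i => (e i : ℝ) with hg
    have hgmono : StrictMono g := fun i j h => e.strictMono h
    have hz : ∀ i, g i ∈ Set.Icc p q ∧ f (g i) = 0 := fun i => hs _ (hts (e i).2)
    have hcont : Continuous f := hcd.continuous
    have hdf : ContDiff ℝ ∞ (deriv f) := (contDiff_infty_iff_deriv.mp hcd).2
    -- Rolle points
    have hrolle : ∀ i : Fin ℓ, ∃ c ∈ Set.Ioo (g i.castSucc) (g i.succ), deriv f c = 0 := by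
      intro i
      refine exists_deriv_eq_zero ?_ hcont.continuousOn ?_
      · exact hgmono (Fin.castSucc_lt_succ (i := i))
      · rw [(hz i.castSucc).2, (hz i.succ).2]
    choose c hc1 hc2 using hrolle
    have hcmono : StrictMono c := by
      intro i j hij
      have h1 : c i < g i.succ := (hc1 i).2
      have h2 : g j.castSucc < c j := (hc1 j).1
      have h3 : g i.succ ≤ g j.castSucc := by
        apply hgmono.monotone
        simp only [Fin.le_def, Fin.val_succ, Fin.coe_castSucc]
        exact hij
      linarith
    have hcIcc : ∀ i, c i ∈ Set.Icc p q := fun i =>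
      ⟨le_trans (hz i.castSucc).1.1 (hc1 i).1.le,
       le_trans (hc1 i).2.le (hz i.succ).1.2⟩
    -- apply ih to deriv f
    have hder : ∀ y ∈ Set.Icc p q,
        |deriv f y| ≤ (q - p) ^ ℓ *
          sSup ((fun y => |iteratedDeriv ℓ (deriv f) y|) '' Set.Icc p q) := by
      refine ih (deriv f) hdf p q hpq ⟨Finset.image c Finset.univ, ?_, ?_⟩
      · rw [Finset.card_image_of_injective _ hcmono.injective, Finset.card_univ,
          Fintype.card_fin]
      · intro y hy
        simp only [Finset.mem_image, Finset.mem_univ, true_and] at hy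
        obtain ⟨i, rfl⟩ := hy
        exact ⟨hcIcc i, hc2 i⟩
    have hiter : iteratedDeriv ℓ (deriv f) = iteratedDeriv (ℓ + 1) f :=
      iteratedDeriv_succ'.symm
    rw [hiter] at hder
    set S := sSup ((fun y => |iteratedDeriv (ℓ + 1) f y|) '' Set.Icc p q) with hS
    have hbddS : BddAbove ((fun y => |iteratedDeriv (ℓ + 1) f y|) '' Set.Icc p q) :=
      (isCompact_Icc.image
        (continuous_abs.comp (hcd.continuous_iteratedDeriv (ℓ + 1)
          (by exact_mod_cast le_top)))).bddAbove
    have hSnonneg : 0 ≤ S :=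
      le_trans (abs_nonneg _) (le_csSup hbddS ⟨p, ⟨le_refl p, hpq⟩, rfl⟩)
    have hpow : (0:ℝ) ≤ (q - p) ^ ℓ := pow_nonneg (by linarith) ℓ
    -- Mean value inequality from the zero g 0
    have hmv : |f x - f (g 0)| ≤ ((q - p) ^ ℓ * S) * |x - g 0| := by
      have := Convex.norm_image_sub_le_of_norm_deriv_le
        (f := f) (s := Set.Icc p q) (C := (q - p) ^ ℓ * S)
        (fun y _ => hcd.differentiable (by simp) y)
        (fun y hy => hder y hy) (convex_Icc p q) (hz 0).1 hx
      simpa [Real.norm_eq_abs] using this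
    have hxg : |x - g 0| ≤ q - p := by
      have h1 := (hz 0).1.1
      have h2 := (hz 0).1.2
      rw [abs_sub_le_iff]
      constructor <;> [linarith [hx.2]; linarith [hx.1]]
    calc |f x| = |f x - f (g 0)| := by rw [(hz 0).2, sub_zero]
      _ ≤ ((q - p) ^ ℓ * S) * |x - g 0| := hmv
      _ ≤ ((q - p) ^ ℓ * S) * (q - p) :=
          mul_le_mul_of_nonneg_left hxg (mul_nonneg hpow hSnonneg)
      _ = (q - p) ^ (ℓ + 1) * S := by ring

/-- Let `f(x) = ∑_{k=0}^N (a_k cos(kx) + b_k sin(kx))` be a trigonometric polynomial with at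
least `ℓ` zeros in an interval `I = [p,q] ⊆ [0,2π]` of length `η`.  Then
`sup_{x ∈ I} |f(x)| ≤ η^ℓ * sup_{x ∈ I} |f^{(ℓ)}(x)|`. -/
theorem stmt5 (ℓ N : ℕ) (a b : ℕ → ℝ) (p q η : ℝ) (hpq : p ≤ q)
    (hsub : Set.Icc p q ⊆ Set.Icc 0 (2 * π)) (hη : q - p = η)
    (f : ℝ → ℝ)
    (hf : f = fun x => ∑ k ∈ Finset.range (N + 1),
      (a k * Real.cos (k * x) + b k * Real.sin (k * x)))
    (hzeros : ∃ s : Finset ℝ, ℓ ≤ s.card ∧ ∀ x ∈ s, x ∈ Set.Icc p q ∧ f x = 0) :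
    sSup ((fun x => |f x|) '' Set.Icc p q) ≤
      η ^ ℓ * sSup ((fun x => |iteratedDeriv ℓ f x|) '' Set.Icc p q) := by
  subst hη
  have hcd : ContDiff ℝ ∞ f := by
    rw [hf]
    apply ContDiff.sum
    intro k _
    exact ((contDiff_const.mul (Real.contDiff_cos.comp (contDiff_const.mul contDiff_id))).add
      (contDiff_const.mul (Real.contDiff_sin.comp (contDiff_const.mul contDiff_id))))
  refine csSup_le ⟨|f p|, p, ⟨le_refl p, hpq⟩, rfl⟩ ?_
  rintro y ⟨x, hx, rfl⟩
  exact key_bound ℓ f hcd p q hpq hzeros x hx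
end

section
/- Set B(x) = 1/sin(x/2). For every x ∈ (0, π] and every natural number r, the r-th derivative of B satisfies |B^{(r)}(x)| ≤ (2^{r+3} · r!)/x^{r+1}. -/
open Real


private lemma half_re (z : ℂ) : (z / 2).re = z.re / 2 := by
  have : z / 2 = z * ((2:ℝ):ℂ)⁻¹ := by push_cast; ring
  rw [this, Complex.mul_re]
  simp
  ring

private lemma abs_sin_re_le (w : ℂ) : |Real.sin w.re| ≤ ‖Complex.sin w‖ := by
  have h : (Complex.sin w).re = Real.sin w.re * Real.cosh w.im := by
    rw [Complex.sin_eq]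
    simp [Complex.add_re, Complex.mul_re, Complex.sin_ofReal_re, Complex.sin_ofReal_im,
      Complex.cos_ofReal_re, Complex.cos_ofReal_im, Complex.cosh_ofReal_re,
      Complex.cosh_ofReal_im, Complex.sinh_ofReal_re, Complex.sinh_ofReal_im]
  calc |Real.sin w.re| ≤ |Real.sin w.re| * Real.cosh w.im := by
        nlinarith [Real.one_le_cosh w.im, abs_nonneg (Real.sin w.re)]
    _ = |(Complex.sin w).re| := by
        rw [h, abs_mul, abs_of_nonneg (Real.cosh_pos w.im).le]
    _ ≤ ‖Complex.sin w‖ := Complex.abs_re_le_norm _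

private lemma sin_lower {x : ℝ} (hx0 : 0 < x) (hxπ : x ≤ π) {z : ℂ}
    (hz : ‖z - (x:ℂ)‖ ≤ x / 2) :
    x / 8 ≤ ‖Complex.sin (z / 2)‖ := by
  have hre : |z.re - x| ≤ x / 2 := by
    have h := Complex.abs_re_le_norm (z - (x:ℂ))
    simpa using h.trans hz
  obtain ⟨hre1, hre2⟩ := abs_le.mp hre
  set u := z.re / 2 with hu
  have hu1 : x / 4 ≤ u := by rw [hu]; linarith
  have hu2 : u ≤ 3 * x / 4 := by rw [hu]; linarith
  have hπ4 : π ≤ 4 := Real.pi_le_four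
  have key : x / 8 ≤ Real.sin u := by
    rcases le_or_gt u (π / 2) with hcase | hcase
    · have hs := Real.mul_le_sin (x := u) (by linarith) hcase
      have e : 2 / π * u = 2 * u / π := by ring
      rw [e] at hs
      have h2 : x / 8 ≤ 2 * u / π := by
        rw [div_le_div_iff₀ (by norm_num) Real.pi_pos]
        nlinarith [mul_le_mul_of_nonneg_left hπ4 hx0.le]
      linarith
    · have h1 : Real.sin u = Real.sin (π - u) := (Real.sin_pi_sub u).symm
      have h4 := Real.mul_le_sin (x := π - u) (by linarith) (by linarith)
      have e : 2 / π * (π - u) = 2 * (π - u) / π := by ring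
      rw [e] at h4
      have h6 : (1:ℝ) / 2 ≤ 2 * (π - u) / π := by
        rw [div_le_div_iff₀ (by norm_num) Real.pi_pos]
        linarith
      have h7 : x / 8 ≤ 1 / 2 := by linarith
      linarith
  calc x / 8 ≤ Real.sin u := key
    _ ≤ |Real.sin u| := le_abs_self _
    _ ≤ ‖Complex.sin (z / 2)‖ := by
        have h := abs_sin_re_le (z / 2)
        rwa [half_re] at h

/-- For `B(x) = 1 / sin(x/2)`, every `x ∈ (0, π]` and every `r ∈ ℕ`,
`|B^{(r)}(x)| ≤ 2^{r+3} r! / x^{r+1}`. -/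
theorem stmt6 (r : ℕ) (x : ℝ) (hx : x ∈ Set.Ioc (0 : ℝ) π) :
    |iteratedDeriv r (fun y => 1 / Real.sin (y / 2)) x| ≤
      2 ^ (r + 3) * (r.factorial : ℝ) / x ^ (r + 1) := by
  obtain ⟨hx0, hxπ⟩ := hx
  set f : ℂ → ℂ := fun z => 1 / Complex.sin (z / 2) with hf
  set U : Set ℂ := Complex.re ⁻¹' Set.Ioo 0 (2 * π) with hUdef
  have hUopen : IsOpen U := isOpen_Ioo.preimage Complex.continuous_re
  have hne : ∀ z ∈ U, Complex.sin (z / 2) ≠ 0 := by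
    intro z hz h0
    have h1 : 0 < Real.sin ((z / 2).re) := by
      rw [half_re]
      exact Real.sin_pos_of_pos_of_lt_pi (by have := hz.1; linarith) (by have := hz.2; linarith)
    have h2 := abs_sin_re_le (z / 2)
    rw [h0] at h2
    simp at h2
    rw [half_re] at h1
    exact h1.ne' h2
  have hdiff : ∀ z ∈ U, DifferentiableAt ℂ f z := by
    intro z hz
    have h1 : DifferentiableAt ℂ (fun z : ℂ => Complex.sin (z / 2)) z :=
      (Complex.differentiable_sin.comp (differentiable_id.div_const 2)) z
    exact (differentiableAt_const 1).div h1 (hne z hz)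
  have hDon : DifferentiableOn ℂ f U := fun z hz => (hdiff z hz).differentiableWithinAt
  have hanal : AnalyticOnNhd ℂ f U := hDon.analyticOnNhd hUopen
  have hderiv : ∀ (n : ℕ), ∀ z ∈ U, HasDerivAt (iteratedDeriv n f) (iteratedDeriv (n + 1) f z) z := by
    intro n z hz
    have h1 : AnalyticOnNhd ℂ (iteratedDeriv n f) U := by
      rw [iteratedDeriv_eq_iterate]; exact hanal.iterated_deriv n
    have h2 := ((h1 z hz).differentiableAt).hasDerivAt
    rwa [show iteratedDeriv (n + 1) f = deriv (iteratedDeriv n f) from iteratedDeriv_succ]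
  have hmem' : ∀ y : ℝ, y ∈ Set.Ioo (0 : ℝ) (2 * π) → (y : ℂ) ∈ U := by
    intro y hy; simpa [hUdef] using hy
  have hbridge : ∀ n : ℕ, ∀ y ∈ Set.Ioo (0 : ℝ) (2 * π),
      iteratedDeriv n (fun t : ℝ => 1 / Real.sin (t / 2)) y = (iteratedDeriv n f ↑y).re := by
    intro n
    induction n with
    | zero =>
      intro y hy
      simp only [iteratedDeriv_zero, hf]
      have h1 : ((y : ℂ)) / 2 = ((y / 2 : ℝ) : ℂ) := by push_cast; ring
      rw [h1, ← Complex.ofReal_sin, ← Complex.ofReal_one, ← Complex.ofReal_div, Complex.ofReal_re]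
    | succ n ih =>
      intro y hy
      have hEq : iteratedDeriv n (fun t : ℝ => 1 / Real.sin (t / 2)) =ᶠ[nhds y]
          fun t => (iteratedDeriv n f ↑t).re :=
        Filter.eventuallyEq_of_mem (Ioo_mem_nhds hy.1 hy.2) ih
      rw [iteratedDeriv_succ, hEq.deriv_eq]
      exact ((hderiv n ↑y (hmem' y hy)).real_of_complex).deriv
  have hxIoo : x ∈ Set.Ioo (0 : ℝ) (2 * π) := ⟨hx0, by linarith [Real.pi_pos]⟩
  rw [hbridge r x hxIoo]
  -- Cauchy estimates
  set R : NNReal := ⟨x / 2, by positivity⟩ with hR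
  have hRx : (R : ℝ) = x / 2 := rfl
  have hball : Metric.closedBall (x : ℂ) R ⊆ U := by
    intro z hz
    rw [Metric.mem_closedBall, dist_eq_norm] at hz
    have h := Complex.abs_re_le_norm (z - (x : ℂ))
    rw [Complex.sub_re, Complex.ofReal_re] at h
    have h2 : |z.re - x| ≤ x / 2 := le_trans h (by rwa [hRx] at hz)
    obtain ⟨h3, h4⟩ := abs_le.mp h2
    have hmem : z.re ∈ Set.Ioo (0 : ℝ) (2 * π) :=
      ⟨by linarith, by linarith [Real.pi_pos]⟩
    exact hmem
  have hRpos : 0 < R := by rw [← NNReal.coe_pos, hRx]; positivity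
  have hps : HasFPowerSeriesOnBall f (cauchyPowerSeries f ↑x ↑R) ↑x ↑R :=
    DifferentiableOn.hasFPowerSeriesOnBall (hDon.mono hball) hRpos
  set p := cauchyPowerSeries f ↑x ↑R with hp
  have hfac := hps.factorial_smul (1 : ℂ) r
  have h1 : ∀ θ : ℝ, ‖circleMap ↑x ↑R θ - ↑x‖ ≤ x / 2 := by
    intro θ
    rw [circleMap_sub_center, norm_circleMap_zero, hRx, abs_of_nonneg (by positivity)]
  have hsinpos : ∀ θ : ℝ, 0 < ‖Complex.sin (circleMap ↑x ↑R θ / 2)‖ :=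
    fun θ => lt_of_lt_of_le (by positivity) (sin_lower hx0 hxπ (h1 θ))
  have hne' : ∀ θ : ℝ, Complex.sin (circleMap ↑x ↑R θ / 2) ≠ 0 := by
    intro θ h0
    have := hsinpos θ
    rw [h0] at this; simp at this
  have hcirc : ∀ θ : ℝ, ‖f (circleMap ↑x ↑R θ)‖ ≤ 8 / x := by
    intro θ
    have h2 := sin_lower hx0 hxπ (h1 θ)
    have h3 : ‖f (circleMap ↑x ↑R θ)‖
        = 1 / ‖Complex.sin (circleMap ↑x ↑R θ / 2)‖ := by
      simp [hf, map_div₀]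
    rw [h3, div_le_div_iff₀ (hsinpos θ) hx0]
    nlinarith [hsinpos θ]
  have hcont : Continuous fun θ : ℝ => ‖f (circleMap ↑x ↑R θ)‖ := by
    have hc1 : Continuous fun θ : ℝ => Complex.sin (circleMap ↑x ↑R θ / 2) :=
      Complex.continuous_sin.comp ((continuous_circleMap _ _).div_const 2)
    exact (continuous_const.div hc1 hne').norm
  have hint : (∫ θ in (0:ℝ)..2 * π, ‖f (circleMap ↑x ↑R θ)‖) ≤ 2 * π * (8 / x) := by
    calc (∫ θ in (0:ℝ)..2 * π, ‖f (circleMap ↑x ↑R θ)‖)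
        ≤ ∫ _ in (0:ℝ)..2 * π, 8 / x :=
          intervalIntegral.integral_mono_on Real.two_pi_pos.le
            (hcont.intervalIntegrable _ _) intervalIntegrable_const (fun θ _ => hcirc θ)
      _ = 2 * π * (8 / x) := by simp; ring
  have hnorm : ‖p r‖ ≤ 8 / x * |(R : ℝ)|⁻¹ ^ r := by
    refine (norm_cauchyPowerSeries_le f ↑x ↑R r).trans ?_
    have : (2 * π)⁻¹ * (∫ θ in (0:ℝ)..2 * π, ‖f (circleMap ↑x ↑R θ)‖) ≤ 8 / x := by
      calc (2 * π)⁻¹ * (∫ θ in (0:ℝ)..2 * π, ‖f (circleMap ↑x ↑R θ)‖)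
          ≤ (2 * π)⁻¹ * (2 * π * (8 / x)) := by
            apply mul_le_mul_of_nonneg_left hint (by positivity)
        _ = 8 / x := by rw [inv_mul_cancel_left₀ Real.two_pi_pos.ne']
    exact mul_le_mul_of_nonneg_right this (by positivity)
  have hiter : ‖iteratedDeriv r f ↑x‖ ≤ (r.factorial : ℝ) * (8 / x * |(R : ℝ)|⁻¹ ^ r) := by
    rw [iteratedDeriv_eq_iteratedFDeriv, ← hfac]
    calc ‖r.factorial • p r fun _ => (1:ℂ)‖
        = (r.factorial : ℝ) * ‖p r fun _ => (1:ℂ)‖ := by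
          rw [nsmul_eq_mul, norm_mul, Complex.norm_natCast]
      _ ≤ (r.factorial : ℝ) * ‖p r‖ := by
          apply mul_le_mul_of_nonneg_left _ (by positivity)
          have h := (p r).le_opNorm (fun _ => (1:ℂ))
          simpa using h
      _ ≤ (r.factorial : ℝ) * (8 / x * |(R : ℝ)|⁻¹ ^ r) :=
          mul_le_mul_of_nonneg_left hnorm (by positivity)
  have hre : |(iteratedDeriv r f ↑x).re| ≤ ‖iteratedDeriv r f ↑x‖ := by
    exact Complex.abs_re_le_norm _
  refine (hre.trans hiter).trans (le_of_eq ?_)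
  rw [hRx, abs_of_pos (by positivity : (0:ℝ) < x / 2)]
  rw [pow_add, pow_succ]
  field_simp
  have hxr : x ^ r * x⁻¹ ^ r = 1 := by rw [← mul_pow, mul_inv_cancel₀ hx0.ne', one_pow]
  linear_combination (x * 2 ^ r * 8) * hxr
end

section
/- Let g be a trigonometric polynomial with deg(g) ≤ m. Then the set E(g) = {x ∈ (0, π] : |g(x) − 1/2| < s(x)} can be written as a union of at most 8m + 4 intervals. -/
open Real

/-- `s(x) = 1 / (2 sin (x/2))`. -/
noncomputable def sfun (x : ℝ) : ℝ := (2 * Real.sin (x / 2))⁻¹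

section Aux

open Complex Polynomial Finset

/-- Auxiliary polynomial: `G1(z) = (g(x) - 1/2) z^m` when `z = exp(x i)`. -/
noncomputable def G1 (m : ℕ) (a b : ℕ → ℝ) : ℂ[X] :=
  (∑ k ∈ range (m+1),
    (C ((a k : ℂ) / 2) * (X ^ (m + k) + X ^ (m - k))
      + C ((b k : ℂ) * (-I) / 2) * (X ^ (m + k) - X ^ (m - k))))
  - C (1/2 : ℂ) * X ^ m

lemma G1_natDegree (m : ℕ) (a b : ℕ → ℝ) : (G1 m a b).natDegree ≤ 2 * m := by
  unfold G1
  apply le_trans (natDegree_sub_le _ _)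
  apply max_le
  · apply natDegree_sum_le_of_forall_le
    intro k hk
    have hk' : k ≤ m := by simpa using Nat.lt_succ_iff.mp (mem_range.mp hk)
    apply le_trans (natDegree_add_le _ _)
    apply max_le
    · apply le_trans (natDegree_C_mul_le _ _)
      apply le_trans (natDegree_add_le _ _)
      simp [natDegree_X_pow]
      omega
    · apply le_trans (natDegree_C_mul_le _ _)
      apply le_trans (natDegree_sub_le _ _)
      simp [natDegree_X_pow]
      omega
  · apply le_trans (natDegree_C_mul_le _ _)
    simp [natDegree_X_pow]
    omega

lemma G1_eval (m : ℕ) (a b : ℕ → ℝ) (x : ℝ) :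
    (G1 m a b).eval (Complex.exp (x * I)) =
      ((∑ k ∈ range (m+1), (a k * Real.cos (k * x) + b k * Real.sin (k * x)) : ℝ) - 1/2 : ℂ)
        * Complex.exp (x * I) ^ m := by
  set z := Complex.exp (x * I) with hz
  have hz0 : z ≠ 0 := Complex.exp_ne_zero _
  unfold G1
  rw [eval_sub, eval_finset_sum]
  push_cast
  rw [sub_mul, Finset.sum_mul]
  congr 1
  · apply Finset.sum_congr rfl
    intro k hk
    have hk' : k ≤ m := Nat.lt_succ_iff.mp (mem_range.mp hk)
    set c := Complex.cos ((k:ℂ) * x) with hc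
    set s := Complex.sin ((k:ℂ) * x) with hs
    have hw : z ^ k = c + s * I := by
      rw [hz, ← Complex.exp_nat_mul]
      have h2 : (k:ℂ) * ((x:ℂ) * I) = ((k:ℂ) * x) * I := by ring
      rw [h2, Complex.exp_mul_I]
    have hone : (c + s*I) * (c - s*I) = 1 := by
      linear_combination Complex.sin_sq_add_cos_sq ((k:ℂ)*x) - s^2 * Complex.I_sq
    have h1 : z ^ (m-k) * z ^ k = z ^ m := by rw [← pow_add]; congr 1; omega
    have hmk : z ^ (m - k) = z ^ m * (c - s*I) := by
      calc z^(m-k) = z^(m-k) * ((c+s*I)*(c-s*I)) := by rw [hone, mul_one]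
        _ = (z^(m-k) * z^k) * (c - s*I) := by rw [hw]; ring
        _ = z^m * (c-s*I) := by rw [h1]
    have hpk : z ^ (m+k) = z ^ m * (c + s*I) := by rw [pow_add, hw]
    simp only [eval_add, eval_mul, eval_sub, eval_pow, eval_C, eval_X]
    rw [hpk, hmk]
    linear_combination (-(b k : ℂ) * z^m * s) * Complex.I_sq
  · simp

/-- Polynomial whose roots on the unit circle control the zeros of
`F(x) = 1 - 2 (1 - cos x)(g(x) - 1/2)^2`. -/
noncomputable def Ppoly (m : ℕ) (a b : ℕ → ℝ) : ℂ[X] :=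
  X ^ (2*m+1) + (X - 1)^2 * (G1 m a b)^2

lemma Ppoly_ne_zero (m : ℕ) (a b : ℕ → ℝ) : Ppoly m a b ≠ 0 := by
  intro h
  have : (Ppoly m a b).eval 1 = 1 := by
    unfold Ppoly; simp
  rw [h] at this
  simp at this

lemma Ppoly_natDegree (m : ℕ) (a b : ℕ → ℝ) :
    (Ppoly m a b).natDegree ≤ 4*m + 2 := by
  have hG := G1_natDegree m a b
  unfold Ppoly
  apply le_trans (natDegree_add_le _ _)
  apply max_le
  · simp [natDegree_X_pow]; omega
  · apply le_trans (natDegree_mul_le)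
    have h1 : ((X - 1 : ℂ[X])^2).natDegree ≤ 2 := by
      apply le_trans natDegree_pow_le
      have : (X - 1 : ℂ[X]).natDegree ≤ 1 := by
        simpa using natDegree_sub_le (X : ℂ[X]) 1
      omega
    have h2 : ((G1 m a b)^2).natDegree ≤ 2 * (2*m) := by
      apply le_trans natDegree_pow_le
      omega
    omega

lemma Ppoly_eval (m : ℕ) (a b : ℕ → ℝ) (x : ℝ) :
    (Ppoly m a b).eval (Complex.exp (x * I)) =
      ((1 - 2*(1 - Real.cos x) *
        ((∑ k ∈ range (m+1), (a k * Real.cos (k * x) + b k * Real.sin (k * x))) - 1/2)^2 : ℝ) : ℂ)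
        * Complex.exp (x * I) ^ (2*m+1) := by
  have hG1 := G1_eval m a b x
  set z := Complex.exp (x * I) with hz
  have key : (z - 1)^2 = -2*(1 - Complex.cos x) * z := by
    rw [hz, Complex.exp_mul_I]
    linear_combination (Complex.sin (x:ℂ))^2 * Complex.I_sq - Complex.sin_sq_add_cos_sq (x:ℂ)
  unfold Ppoly
  simp only [eval_add, eval_mul, eval_pow, eval_sub, eval_X, eval_one]
  rw [hG1, key]
  push_cast
  ring

lemma exp_injOn : Set.InjOn (fun x : ℝ => Complex.exp (x * I)) (Set.Ioo 0 Real.pi) := by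
  intro x hx y hy hxy
  simp only at hxy
  rw [Complex.exp_eq_exp_iff_exists_int] at hxy
  obtain ⟨n, hn⟩ := hxy
  have h1 : ((x : ℂ)) = (y : ℂ) + n * (2 * Real.pi) := by
    have := mul_right_cancel₀ Complex.I_ne_zero (by linear_combination hn :
      (x : ℂ) * I = ((y : ℂ) + n * (2 * Real.pi)) * I)
    exact this
  have h2 : x = y + n * (2 * Real.pi) := by
    exact_mod_cast h1
  have hpi := Real.pi_pos
  rcases lt_trichotomy n 0 with hn0 | hn0 | hn0
  · have : (n : ℝ) ≤ -1 := by exact_mod_cast (by omega : n ≤ -1)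
    nlinarith [hx.1, hx.2, hy.1, hy.2]
  · simp [hn0] at h2; linarith [h2]
  · have : (1 : ℝ) ≤ n := by exact_mod_cast hn0
    nlinarith [hx.1, hx.2, hy.1, hy.2]

end Aux

lemma sfun_equiv (x : ℝ) (hx : x ∈ Set.Ioc (0:ℝ) Real.pi) (u : ℝ) :
    |u| < sfun x ↔ 0 < 1 - 2*(1 - Real.cos x) * u^2 := by
  have hs : 0 < Real.sin (x/2) := by
    apply Real.sin_pos_of_pos_of_lt_pi
    · linarith [hx.1]
    · nlinarith [hx.2, Real.pi_pos]
  have hcos : 1 - Real.cos x = 2 * Real.sin (x/2)^2 := by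
    have h2 : Real.cos x = Real.cos (2 * (x/2)) := by ring_nf
    rw [h2, Real.cos_two_mul]
    linear_combination (-2) * Real.sin_sq_add_cos_sq (x/2)
  rw [hcos]
  unfold sfun
  set s := Real.sin (x/2)
  have hinv : (2*s) * (2*s)⁻¹ = 1 := mul_inv_cancel₀ (by positivity)
  constructor
  · intro h
    have h1 : 2*s*|u| < 1 := by
      calc 2*s*|u| < 2*s*(2*s)⁻¹ := by
            apply mul_lt_mul_of_pos_left h (by positivity)
        _ = 1 := hinv
    have ht0 : 0 ≤ 2*s*|u| := by positivity
    have h2 : (2*s*|u|)^2 < 1 := by nlinarith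
    nlinarith [_root_.sq_abs u, h2]
  · intro h
    by_contra hc
    push_neg at hc
    have h1 : 1 ≤ 2*s*|u| := by
      calc (1:ℝ) = 2*s*(2*s)⁻¹ := hinv.symm
        _ ≤ 2*s*|u| := by apply mul_le_mul_of_nonneg_left hc (by positivity)
    nlinarith [_root_.sq_abs u, abs_nonneg u, hs, sq_nonneg (2*s*|u| - 1)]

lemma interval_decomp (F : ℝ → ℝ) (hF : Continuous F) (N : ℕ)
    (Z : Finset ℝ) (hZ : ∀ x ∈ Set.Ioo (0:ℝ) π, F x = 0 → x ∈ Z) (hcard : Z.card ≤ N) :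
    ∃ t : ℕ, t ≤ N + 2 ∧ ∃ I : Fin t → Set ℝ, (∀ i, (I i).OrdConnected) ∧
      {x ∈ Set.Ioc (0:ℝ) π | 0 < F x} = ⋃ i, I i := by
  classical
  set S : Finset ℝ := insert (0:ℝ) Z with hS
  set L : List ℝ := S.toList with hL
  have hLlen : L.length = S.card := Finset.length_toList S
  set J : ℝ → Set ℝ := fun p =>
    {x | x ∈ Set.Ioo (0:ℝ) π ∧ 0 < F x ∧ p < x ∧ ∀ q ∈ Z, q ≤ p ∨ x ≤ q} with hJ
  refine ⟨L.length + 1, ?_, ?_⟩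
  · have : S.card ≤ Z.card + 1 := by
      simpa using Finset.card_insert_le (0:ℝ) Z
    omega
  refine ⟨fun i => if h : (i : ℕ) < L.length then J (L.get ⟨i, h⟩)
      else {x | x = π ∧ 0 < F x}, ?_, ?_⟩
  · intro i
    by_cases h : (i : ℕ) < L.length
    · simp only [h, dif_pos]
      set p := L.get ⟨i, h⟩
      constructor
      intro x hx y hy c hc
      obtain ⟨hx1, hx2, hx3, hx4⟩ := hx
      obtain ⟨hy1, hy2, hy3, hy4⟩ := hy
      obtain ⟨hc1, hc2⟩ := hc
      have hcIoo : c ∈ Set.Ioo (0:ℝ) π := ⟨lt_of_lt_of_le hx1.1 hc1, lt_of_le_of_lt hc2 hy1.2⟩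
      have hFc : 0 < F c := by
        by_contra hFc
        push_neg at hFc
        have hxc : x ≤ c := hc1
        have : (0:ℝ) ∈ Set.Icc (F c) (F x) := ⟨hFc, le_of_lt hx2⟩
        have him := intermediate_value_Icc' hxc (hF.continuousOn) this
        obtain ⟨z, hz1, hz2⟩ := him
        have hzIoo : z ∈ Set.Ioo (0:ℝ) π :=
          ⟨lt_of_lt_of_le hx1.1 hz1.1, lt_of_le_of_lt (le_trans hz1.2 hc2) hy1.2⟩
        have hzZ : z ∈ Z := hZ z hzIoo hz2
        rcases hy4 z hzZ with h1 | h2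
        · exact absurd (lt_of_lt_of_le hx3 hz1.1) (not_lt.mpr h1)
        · have : z = y := le_antisymm (le_trans hz1.2 hc2) h2
          rw [this] at hz2
          exact absurd hz2 (ne_of_gt hy2)
      refine ⟨hcIoo, hFc, lt_of_lt_of_le hx3 hc1, ?_⟩
      intro q hq
      rcases hy4 q hq with h1 | h2
      · exact Or.inl h1
      · exact Or.inr (le_trans hc2 h2)
    · simp only [h, dif_neg]
      constructor
      intro x hx y hy c hc
      have hxy : x = y := hx.1.trans hy.1.symm
      have : c = π := le_antisymm (hy.1 ▸ hc.2) (hx.1 ▸ hc.1)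
      exact ⟨this, this ▸ (hy.1 ▸ hy.2)⟩
  · ext x
    simp only [Set.mem_setOf_eq, Set.mem_iUnion, Set.mem_sep_iff]
    constructor
    · rintro ⟨hx1, hx2⟩
      rcases eq_or_lt_of_le hx1.2 with hpi | hpi
      · refine ⟨⟨L.length, Nat.lt_succ_self _⟩, ?_⟩
        rw [dif_neg (by simp)]
        exact ⟨hpi, hx2⟩
      · have hxIoo : x ∈ Set.Ioo (0:ℝ) π := ⟨hx1.1, hpi⟩
        set T := S.filter (fun q => q < x) with hT
        have hTne : T.Nonempty := ⟨0, by simp [hT, hS, hx1.1]⟩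
        set p := T.max' hTne with hp
        have hpT : p ∈ T := T.max'_mem hTne
        have hpS : p ∈ S := (Finset.mem_filter.mp hpT).1
        have hpx : p < x := (Finset.mem_filter.mp hpT).2
        have hpL : p ∈ L := (Finset.mem_toList).mpr hpS
        obtain ⟨i, hi⟩ := List.mem_iff_get.mp hpL
        refine ⟨⟨i, lt_of_lt_of_le i.isLt (Nat.le_succ _)⟩, ?_⟩
        rw [dif_pos (by simpa using i.isLt)]
        have : L.get ⟨(i:ℕ), by simpa using i.isLt⟩ = p := by
          simpa using hi
        rw [this]
        refine ⟨hxIoo, hx2, hpx, ?_⟩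
        intro q hq
        by_cases hqx : q < x
        · left
          exact T.le_max' q (Finset.mem_filter.mpr ⟨by simp [hS, hq], hqx⟩)
        · right; exact le_of_not_gt hqx
    · rintro ⟨i, hi⟩
      by_cases h : (i : ℕ) < L.length
      · rw [dif_pos h] at hi
        exact ⟨⟨hi.1.1, le_of_lt hi.1.2⟩, hi.2.1⟩
      · rw [dif_neg h] at hi
        refine ⟨?_, hi.2⟩
        rw [hi.1]
        exact Set.right_mem_Ioc.mpr pi_pos

/-- Let `g(x) = ∑_{k=0}^m (a_k cos(kx) + b_k sin(kx))` be a trigonometric polynomial of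
degree at most `m`.  Then `E(g) = {x ∈ (0,π] : |g(x) - 1/2| < s(x)}` is a union of at
most `8m + 4` intervals. -/
theorem stmt10 (m : ℕ) (a b : ℕ → ℝ) (g : ℝ → ℝ)
    (hg : g = fun x => ∑ k ∈ Finset.range (m + 1),
      (a k * Real.cos (k * x) + b k * Real.sin (k * x))) :
    ∃ t : ℕ, t ≤ 8 * m + 4 ∧ ∃ I : Fin t → Set ℝ,
      (∀ i, (I i).OrdConnected) ∧
      {x ∈ Set.Ioc (0 : ℝ) π | |g x - 1 / 2| < sfun x} = ⋃ i, I i := by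
  classical
  set F : ℝ → ℝ := fun x => 1 - 2*(1 - Real.cos x) * (g x - 1/2)^2 with hF
  have hgc : Continuous g := by
    rw [hg]
    apply continuous_finset_sum
    intro k _
    fun_prop
  have hFcont : Continuous F := by
    rw [hF]
    fun_prop
  -- zeros of F in (0, π) inject into the roots of Ppoly
  have hPeval : ∀ x : ℝ, (Ppoly m a b).eval (Complex.exp (x * Complex.I)) =
      ((F x : ℝ) : ℂ) * Complex.exp (x * Complex.I) ^ (2*m+1) := by
    intro x
    rw [Ppoly_eval m a b x]
    congr 2
    rw [hF, hg]
  set Zset : Set ℝ := {x : ℝ | x ∈ Set.Ioo 0 π ∧ F x = 0} with hZset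
  have hsub : (fun x : ℝ => Complex.exp (x * Complex.I)) '' Zset ⊆
      ↑(Ppoly m a b).roots.toFinset := by
    rintro _ ⟨x, hx, rfl⟩
    simp only [Finset.coe_sort_coe, Multiset.mem_toFinset, Finset.mem_coe]
    rw [Polynomial.mem_roots (Ppoly_ne_zero m a b)]
    rw [Polynomial.IsRoot, hPeval x, hx.2]
    simp
  have hinj' : Set.InjOn (fun x : ℝ => Complex.exp (x * Complex.I)) Zset :=
    exp_injOn.mono (fun x hx => hx.1)
  have hfinim : ((fun x : ℝ => Complex.exp (x * Complex.I)) '' Zset).Finite :=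
    Set.Finite.subset ((Ppoly m a b).roots.toFinset.finite_toSet) hsub
  have hfin : Zset.Finite := Set.Finite.of_finite_image hfinim hinj'
  have hcard : hfin.toFinset.card ≤ 4*m + 2 := by
    have e1 : hfin.toFinset.card = Zset.ncard := (Set.ncard_eq_toFinset_card Zset hfin).symm
    have e2 : Zset.ncard = ((fun x : ℝ => Complex.exp (x * Complex.I)) '' Zset).ncard :=
      (Set.ncard_image_of_injOn hinj').symm
    have e3 : ((fun x : ℝ => Complex.exp (x * Complex.I)) '' Zset).ncard ≤
        (↑(Ppoly m a b).roots.toFinset : Set ℂ).ncard :=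
      Set.ncard_le_ncard hsub ((Ppoly m a b).roots.toFinset.finite_toSet)
    have e4 : (↑(Ppoly m a b).roots.toFinset : Set ℂ).ncard = (Ppoly m a b).roots.toFinset.card :=
      Set.ncard_coe_finset _
    have e5 : (Ppoly m a b).roots.toFinset.card ≤ (Ppoly m a b).natDegree :=
      (Multiset.toFinset_card_le _).trans (Polynomial.card_roots' _)
    have e6 := Ppoly_natDegree m a b
    omega
  obtain ⟨t, ht, I, hI, hset⟩ := interval_decomp F hFcont (4*m+2) hfin.toFinset
    (fun x hx h0 => by
      rw [Set.Finite.mem_toFinset]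
      exact ⟨hx, h0⟩) hcard
  refine ⟨t, by omega, I, hI, ?_⟩
  rw [← hset]
  ext x
  simp only [Set.mem_sep_iff]
  constructor
  · rintro ⟨hx1, hx2⟩
    exact ⟨hx1, (sfun_equiv x hx1 (g x - 1/2)).mp hx2⟩
  · rintro ⟨hx1, hx2⟩
    exact ⟨hx1, (sfun_equiv x hx1 (g x - 1/2)).mpr hx2⟩
end

section
/- Let n be a natural number, set T = n + 1/2, let g be a continuous function on [0, π], and set f = D_n − g. If I is an interval contained in E(g) = {x ∈ (0, π] : |g(x) − 1/2| < s(x)}, then the number of zeros of f in I satisfies Z_I(f) ≥ ⌊(T/(2π))·|I|⌋, where |I| is the length of I. -/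
open Real

/-- The Dirichlet-type kernel `D_n(x) = ∑_{k=0}^n cos (k x)`. -/
noncomputable def Dker (n : ℕ) : ℝ → ℝ := fun x => ∑ k ∈ Finset.range (n + 1), Real.cos (k * x)

lemma dker_id (n : ℕ) (x : ℝ) :
    Real.sin (((n:ℝ) + 1/2) * x) = (2 * Dker n x - 1) * Real.sin (x/2) := by
  induction n with
  | zero => norm_num [Dker]; congr 1; ring
  | succ n ih =>
    have hD : Dker (n+1) x = Dker n x + Real.cos (((n:ℝ)+1)*x) := by
      simp [Dker, Finset.sum_range_succ]
    have h : Real.sin (((n:ℝ)+1+1/2)*x) - Real.sin (((n:ℝ)+1/2)*x)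
        = 2 * Real.sin (((((n:ℝ)+1+1/2)*x) - (((n:ℝ)+1/2)*x))/2)
          * Real.cos (((((n:ℝ)+1+1/2)*x) + (((n:ℝ)+1/2)*x))/2) := Real.sin_sub_sin _ _
    have e1 : ((((n:ℝ)+1+1/2)*x) - (((n:ℝ)+1/2)*x))/2 = x/2 := by ring
    have e2 : ((((n:ℝ)+1+1/2)*x) + (((n:ℝ)+1/2)*x))/2 = ((n:ℝ)+1)*x := by ring
    rw [e1, e2] at h
    push_cast
    rw [hD]
    nlinarith [h, ih]

lemma sin_half_int (k : ℤ) : Real.sin (((k:ℝ) + 1/2) * π) = (-1)^k := by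
  have e : ((k:ℝ) + 1/2) * π = k * π + π/2 := by ring
  rw [e, Real.sin_add, Real.sin_int_mul_pi, Real.cos_pi_div_two, Real.sin_pi_div_two]
  have h := Real.cos_int_mul_pi_sub 0 k
  simp at h
  simp [h]

lemma fsign_pos (n : ℕ) (g : ℝ → ℝ) (x₀ : ℝ) (h1 : 0 < x₀) (h2 : x₀ ≤ π)
    (hb : |g x₀ - 1/2| < sfun x₀) (hs : Real.sin (((n:ℝ)+1/2) * x₀) = 1) :
    0 < Dker n x₀ - g x₀ := by
  have hsin : 0 < Real.sin (x₀/2) :=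
    Real.sin_pos_of_pos_of_lt_pi (by linarith) (by linarith [Real.pi_pos])
  have hid := dker_id n x₀
  rw [hs] at hid
  have h2s : (0:ℝ) < 2 * Real.sin (x₀/2) := by linarith
  have hD : Dker n x₀ - 1/2 = sfun x₀ := by
    rw [sfun, inv_eq_one_div, eq_div_iff (ne_of_gt h2s)]
    nlinarith [hid]
  have habs := abs_lt.mp hb
  linarith [habs.2, hD]

lemma fsign_neg (n : ℕ) (g : ℝ → ℝ) (x₀ : ℝ) (h1 : 0 < x₀) (h2 : x₀ ≤ π)
    (hb : |g x₀ - 1/2| < sfun x₀) (hs : Real.sin (((n:ℝ)+1/2) * x₀) = -1) :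
    Dker n x₀ - g x₀ < 0 := by
  have hsin : 0 < Real.sin (x₀/2) :=
    Real.sin_pos_of_pos_of_lt_pi (by linarith) (by linarith [Real.pi_pos])
  have hid := dker_id n x₀
  rw [hs] at hid
  have h2s : (0:ℝ) < 2 * Real.sin (x₀/2) := by linarith
  have hD : Dker n x₀ - 1/2 = - sfun x₀ := by
    rw [sfun, inv_eq_one_div, neg_div', eq_div_iff (ne_of_gt h2s)]
    nlinarith [hid]
  have habs := abs_lt.mp hb
  linarith [habs.1, hD]

/-- Let `T = n + 1/2`, let `g` be continuous on `[0, π]` and let `f = D_n - g`.  If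
`I = [a,b]` is an interval contained in `E(g) = {x ∈ (0,π] : |g(x) - 1/2| < s(x)}`, then
`f` has at least `⌊(T/2π)|I|⌋` zeros in `I`. -/
theorem stmt12 (n : ℕ) (g : ℝ → ℝ) (hg : ContinuousOn g (Set.Icc 0 π))
    (f : ℝ → ℝ) (hf : f = fun x => Dker n x - g x)
    (a b : ℝ) (hab : a ≤ b)
    (hI : Set.Icc a b ⊆ {x ∈ Set.Ioc (0 : ℝ) π | |g x - 1 / 2| < sfun x}) :
    (⌊((n : ℝ) + 1 / 2) / (2 * π) * (b - a)⌋₊ : ℕ∞) ≤ {x ∈ Set.Icc a b | f x = 0}.encard := by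
  have hπ := Real.pi_pos
  have hba : 0 ≤ b - a := sub_nonneg.mpr hab
  set T : ℝ := (n:ℝ) + 1/2 with hT
  have hTpos : 0 < T := by positivity
  set m : ℕ := ⌊T / (2*π) * (b-a)⌋₊ with hm
  rcases Nat.eq_zero_or_pos m with h0 | hm1
  · rw [h0]; simp
  have hfloor : (m:ℝ) ≤ T/(2*π)*(b-a) := Nat.floor_le (by positivity)
  have hfloor' : 2*π*(m:ℝ) ≤ T*(b-a) := by
    rw [div_mul_eq_mul_div, le_div_iff₀ (by positivity)] at hfloor
    linarith
  set k₀ : ℤ := ⌈T*a/π - 1/2⌉ with hk₀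
  set xp : ℤ → ℝ := fun k => ((k:ℝ)+1/2)*π/T with hxp
  have hmono : ∀ k l : ℤ, k ≤ l → xp k ≤ xp l := by
    intro k l hkl
    have h : (k:ℝ) ≤ l := by exact_mod_cast hkl
    simp only [hxp]
    gcongr
  have hmono' : ∀ k l : ℤ, k < l → xp k < xp l := by
    intro k l hkl
    have h : (k:ℝ) < l := by exact_mod_cast hkl
    simp only [hxp]
    gcongr
  -- a ≤ xp k₀
  have hceil : T*a/π - 1/2 ≤ (k₀:ℝ) := Int.le_ceil _
  have hceil' : (k₀:ℝ) < T*a/π - 1/2 + 1 := Int.ceil_lt_add_one _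
  have hTa : T*a ≤ ((k₀:ℝ)+1/2)*π := by
    have h' : T*a/π ≤ (k₀:ℝ)+1/2 := by linarith
    exact (div_le_iff₀ hπ).mp h'
  have ha : a ≤ xp k₀ := by
    simp only [hxp]
    rw [le_div_iff₀ hTpos]
    linarith
  -- xp (k₀ + m) ≤ b
  have hk₀π : (k₀:ℝ)*π < T*a + π/2 := by
    have := mul_lt_mul_of_pos_right hceil' hπ
    calc (k₀:ℝ)*π < (T*a/π - 1/2 + 1)*π := this
    _ = T*a/π*π + π/2 := by ring
    _ = T*a + π/2 := by rw [div_mul_cancel₀ _ (ne_of_gt hπ)]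
  have hmπ : π ≤ (m:ℝ)*π := by
    have : (1:ℝ) ≤ (m:ℝ) := by exact_mod_cast hm1
    nlinarith
  have hsin : ∀ k : ℤ, Real.sin (T * xp k) = (-1:ℝ)^k := by
    intro k
    have e : T * xp k = ((k:ℝ)+1/2)*π := by
      simp only [hxp]
      rw [mul_div_assoc', mul_comm, mul_div_assoc, div_self (ne_of_gt hTpos), mul_one]
    rw [e, sin_half_int]
  clear_value T m k₀ xp
  have hb : xp (k₀ + m) ≤ b := by
    have e : xp (k₀ + m) = (((k₀:ℝ) + (m:ℝ))+1/2)*π/T := by rw [hxp]; push_cast; ring_nf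
    rw [e, div_le_iff₀ hTpos]
    linarith [hk₀π, hmπ, hfloor']
  -- membership
  have hmem : ∀ k : ℤ, k₀ ≤ k → k ≤ k₀ + m → xp k ∈ Set.Icc a b :=
    fun k h1 h2 => ⟨ha.trans (hmono _ _ h1), (hmono _ _ h2).trans hb⟩
  -- sign facts
  have hpos : ∀ x₀ ∈ Set.Icc a b, Real.sin (T*x₀) = 1 → 0 < f x₀ := by
    intro x₀ hx₀ hs
    obtain ⟨hio, habs⟩ := hI hx₀
    rw [hf]
    rw [hT] at hs
    exact fsign_pos n g x₀ hio.1 hio.2 habs hs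
  have hneg : ∀ x₀ ∈ Set.Icc a b, Real.sin (T*x₀) = -1 → f x₀ < 0 := by
    intro x₀ hx₀ hs
    obtain ⟨hio, habs⟩ := hI hx₀
    rw [hf]
    rw [hT] at hs
    exact fsign_neg n g x₀ hio.1 hio.2 habs hs
  -- continuity of f on [a,b]
  have hIcc : Set.Icc a b ⊆ Set.Icc 0 π := by
    intro x hx; obtain ⟨hio, -⟩ := hI hx; exact ⟨le_of_lt hio.1, hio.2⟩
  have hfc : ContinuousOn f (Set.Icc a b) := by
    rw [hf]
    apply ContinuousOn.sub
    · apply Continuous.continuousOn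
      unfold Dker
      exact continuous_finset_sum _ (fun k _ => Real.continuous_cos.comp (continuous_const.mul continuous_id))
    · exact hg.mono hIcc
  -- key: zero in each interval
  have key : ∀ j : ℕ, j < m → ∃ z, z ∈ Set.Ioo (xp (k₀+j)) (xp (k₀+j+1)) ∧ f z = 0 := by
    intro j hj
    have hj1 : (j:ℤ) + 1 ≤ (m:ℤ) := by exact_mod_cast hj
    have hp : xp (k₀+j) ∈ Set.Icc a b := hmem _ (by omega) (by omega)
    have hq : xp (k₀+j+1) ∈ Set.Icc a b := hmem _ (by omega) (by omega)
    have hpq : xp (k₀+j) ≤ xp (k₀+j+1) := hmono _ _ (by omega)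
    have hsub : Set.Icc (xp (k₀+j)) (xp (k₀+j+1)) ⊆ Set.Icc a b :=
      Set.Icc_subset_Icc hp.1 hq.2
    have hc : ContinuousOn f (Set.Icc (xp (k₀+j)) (xp (k₀+j+1))) := hfc.mono hsub
    rcases Int.even_or_odd (k₀ + j) with he | ho
    · have h1 : Real.sin (T * xp (k₀+j)) = 1 := by rw [hsin]; exact Even.neg_one_zpow he
      have h2 : Real.sin (T * xp (k₀+j+1)) = -1 := by
        rw [hsin]; exact Odd.neg_one_zpow (by exact he.add_one)
      have hfp := hpos _ hp h1
      have hfq := hneg _ hq h2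
      have := intermediate_value_Ioo' hpq hc (Set.mem_Ioo.mpr ⟨hfq, hfp⟩)
      obtain ⟨z, hz, hfz⟩ := this
      exact ⟨z, hz, hfz⟩
    · have h1 : Real.sin (T * xp (k₀+j)) = -1 := by rw [hsin]; exact Odd.neg_one_zpow ho
      have h2 : Real.sin (T * xp (k₀+j+1)) = 1 := by
        rw [hsin]; exact Even.neg_one_zpow (by exact ho.add_one)
      have hfp := hneg _ hp h1
      have hfq := hpos _ hq h2
      obtain ⟨z, hz, hfz⟩ := intermediate_value_Ioo hpq hc (Set.mem_Ioo.mpr ⟨hfp, hfq⟩)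
      exact ⟨z, hz, hfz⟩
  choose z hz1 hz2 using key
  set w : Fin m → ℝ := fun j => z j j.2 with hw
  have hwmem : ∀ j : Fin m, w j ∈ {x ∈ Set.Icc a b | f x = 0} := by
    intro j
    have h1 := hz1 j j.2
    have hp : xp (k₀+j) ∈ Set.Icc a b := hmem _ (by omega) (by have := j.2; omega)
    have hq : xp (k₀+(j:ℕ)+1) ∈ Set.Icc a b := hmem _ (by omega) (by have := j.2; omega)
    exact ⟨⟨hp.1.trans (le_of_lt h1.1), (le_of_lt h1.2).trans hq.2⟩, hz2 j j.2⟩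
  have hwinj : Function.Injective w := by
    have hsm : StrictMono w := by
      intro i j hij
      have h1 := hz1 i i.2
      have h2 := hz1 j j.2
      have hle : xp (k₀+(i:ℕ)+1) ≤ xp (k₀+(j:ℕ)) := by
        apply hmono
        have : (i:ℕ) < (j:ℕ) := hij
        omega
      calc w i < xp (k₀+(i:ℕ)+1) := h1.2
      _ ≤ xp (k₀+(j:ℕ)) := hle
      _ < w j := h2.1
    exact hsm.injective
  calc (m : ℕ∞) = (Set.range w).encard := by
        rw [← Set.image_univ, hwinj.injOn.encard_image, Set.encard_univ]
        simp
  _ ≤ _ := Set.encard_le_encard (Set.range_subset_iff.mpr hwmem)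
end

section
/- For every ε > 0 there exists a natural number m_0 such that for all integers m ≥ m_0, all integers n ≥ m, and every integer j with m/2 ≤ j ≤ m − 1, the following holds: if f(x) = ∑_{k=0}^{n} cos(kx) − ∑_{k=0}^{m} ε_k cos(kx), where ε_0, …, ε_m are independent random variables taking values 0 and 1 each with probability 1/2, and I = [π j/m, π (j+1)/m], then P(f has at least one zero in I) ≥ 1/4 − ε. -/
open Real

/-- The random polynomial `f ~ F_{n,m}` determined by the Bernoulli outcomes
`e : Fin (m+1) → Bool`:  `f(x) = ∑_{k=0}^n cos(kx) - ∑_{k=0}^m ε_k cos(kx)`. -/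
noncomputable def F (n m : ℕ) (e : Fin (m + 1) → Bool) : ℝ → ℝ :=
  fun x => Dker n x - ∑ k : Fin (m + 1), (if e k then (1 : ℝ) else 0) * Real.cos ((k : ℕ) * x)

open Finset

lemma dker_mul (n : ℕ) (x : ℝ) :
    2 * Real.sin (x/2) * ∑ k ∈ Finset.range (n+1), Real.cos (k * x)
      = Real.sin ((n + 1/2) * x) + Real.sin (x/2) := by
  induction n with
  | zero =>
    have e : ((0:ℕ) + 1/2 : ℝ) * x = x/2 := by push_cast; ring
    rw [e]
    simp [Finset.range_one]
    ring
  | succ n ih =>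
    rw [Finset.sum_range_succ, mul_add, ih]
    have e1 : (((n:ℕ)+1 : ℕ) + 1/2 : ℝ) * x = (((n:ℕ)+1:ℕ):ℝ)*x + x/2 := by push_cast; ring
    have e2 : ((n : ℝ) + 1/2) * x = (((n:ℕ)+1:ℕ):ℝ)*x - x/2 := by push_cast; ring
    rw [e1, e2, Real.sin_add, Real.sin_sub]
    ring

lemma dker_bound {n : ℕ} {x : ℝ} (hs : 0 < Real.sin (x/2)) :
    |∑ k ∈ Finset.range (n+1), Real.cos (k * x)| ≤ 1/2 + 1/(2 * Real.sin (x/2)) := by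
  have hpos : (0:ℝ) < 2 * Real.sin (x/2) := by linarith
  have heq : ∑ k ∈ Finset.range (n+1), Real.cos (k * x)
      = (Real.sin ((n + 1/2) * x) + Real.sin (x/2)) / (2 * Real.sin (x/2)) := by
    rw [eq_div_iff (ne_of_gt hpos), mul_comm]
    exact dker_mul n x
  rw [heq, abs_div, abs_of_pos hpos, div_le_iff₀ hpos]
  have hb : |Real.sin ((n + 1/2) * x) + Real.sin (x/2)| ≤ 1 + Real.sin (x/2) := by
    calc |Real.sin ((n + 1/2) * x) + Real.sin (x/2)|
        ≤ |Real.sin ((n + 1/2) * x)| + |Real.sin (x/2)| := abs_add_le _ _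
      _ ≤ 1 + Real.sin (x/2) := by
          gcongr
          · exact Real.abs_sin_le_one _
          · rw [abs_of_pos hs]
  have he : (1/2 + 1/(2 * Real.sin (x/2))) * (2 * Real.sin (x/2)) = Real.sin (x/2) + 1 := by
    field_simp
  linarith

lemma cossq_lb {m : ℕ} {θ : ℝ} (hm : 1 ≤ m) (hθ : 2/(m:ℝ) ≤ Real.sin θ) :
    3*(m:ℝ)/8 ≤ ∑ k ∈ Finset.range (m+1), Real.cos (k * θ)^2 := by
  have hm0 : (0:ℝ) < m := by exact_mod_cast hm
  have hs : 0 < Real.sin ((2*θ)/2) := by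
    rw [show (2*θ)/2 = θ by ring]
    have h0 : (0:ℝ) < 2/(m:ℝ) := by positivity
    linarith
  have hb := dker_bound (n := m) (x := 2*θ) hs
  rw [show (2*θ)/2 = θ by ring] at hb hs
  have hsin : 1/(2 * Real.sin θ) ≤ (m:ℝ)/4 := by
    rw [div_le_div_iff₀ (by linarith) (by norm_num)]
    have h := mul_le_mul_of_nonneg_left hθ (le_of_lt hm0)
    have hm' : (m:ℝ) * (2/(m:ℝ)) = 2 := by field_simp
    nlinarith
  have hsum : ∑ k ∈ Finset.range (m+1), Real.cos (k * θ)^2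
      = (m+1)/2 + (∑ k ∈ Finset.range (m+1), Real.cos (k * (2*θ)))/2 := by
    have : ∀ k ∈ Finset.range (m+1), Real.cos (k * θ)^2 = 1/2 + Real.cos (k * (2*θ))/2 := by
      intro k _
      rw [Real.cos_sq]
      ring_nf
    rw [Finset.sum_congr rfl this, Finset.sum_add_distrib, Finset.sum_const, ← Finset.sum_div]
    simp
    ring
  rw [hsum]
  have h1 : -(1/2 + (m:ℝ)/4) ≤ ∑ k ∈ Finset.range (m+1), Real.cos (k * (2*θ)) := by
    have := abs_le.mp hb
    have h2 := this.1
    linarith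
  linarith

lemma cossq_pi (m : ℕ) :
    3*(m:ℝ)/8 ≤ ∑ k ∈ Finset.range (m+1), Real.cos (k * π)^2 := by
  have h : ∀ k ∈ Finset.range (m+1), (1:ℝ) ≤ Real.cos (k * π)^2 := by
    intro k _
    have : Real.cos ((k:ℝ) * π) = (-1)^k := by
      have := Real.cos_nat_mul_pi_sub (0:ℝ) k
      simpa using this
    rw [this]
    rcases Nat.even_or_odd k with he | ho
    · rw [he.neg_one_pow]; norm_num
    · rw [ho.neg_one_pow]; norm_num
  have := Finset.sum_le_sum h
  simp only [Finset.sum_const, Finset.card_range, nsmul_eq_mul, mul_one] at this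
  have hc : ((m:ℝ)+1) ≤ ∑ k ∈ Finset.range (m+1), Real.cos (k * π)^2 := by
    exact_mod_cast this
  linarith

lemma centralBinom_sq_le (n : ℕ) :
    ((Nat.centralBinom n : ℝ))^2 * (n+1) ≤ 16^n := by
  induction n with
  | zero => simp [Nat.centralBinom]
  | succ n ih =>
    have key : ((n:ℝ) + 1) * (Nat.centralBinom (n+1) : ℝ)
        = 2 * (2*(n:ℝ) + 1) * (Nat.centralBinom n : ℝ) := by
      exact_mod_cast Nat.succ_mul_centralBinom_succ n
    have hpos : (0:ℝ) < (n:ℝ) + 1 := by positivity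
    set A : ℝ := (Nat.centralBinom n : ℝ) with hA
    set B : ℝ := (Nat.centralBinom (n+1) : ℝ) with hB
    have key2 : ((n:ℝ)+1)^2 * B^2 = 4 * (2*(n:ℝ)+1)^2 * A^2 := by
      have : (((n:ℝ) + 1) * B)^2 = (2 * (2*(n:ℝ) + 1) * A)^2 := by rw [key]
      nlinarith [this]
    have hchain : B^2 * ((n:ℝ)+2) * ((n:ℝ)+1)^3 ≤ 16^(n+1) * ((n:ℝ)+1)^3 := by
      calc B^2 * ((n:ℝ)+2) * ((n:ℝ)+1)^3
          = ((n:ℝ)+1)^2 * B^2 * (((n:ℝ)+2)*((n:ℝ)+1)) := by ring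
        _ = 4*(2*(n:ℝ)+1)^2*A^2*(((n:ℝ)+2)*((n:ℝ)+1)) := by rw [key2]
        _ = 4*(2*(n:ℝ)+1)^2*((n:ℝ)+2) * (A^2*((n:ℝ)+1)) := by ring
        _ ≤ 4*(2*(n:ℝ)+1)^2*((n:ℝ)+2) * 16^n := by
            have hn : (0:ℝ) ≤ 4*(2*(n:ℝ)+1)^2*((n:ℝ)+2) := by positivity
            exact mul_le_mul_of_nonneg_left ih hn
        _ ≤ 16*((n:ℝ)+1)^3 * 16^n := by
            have h16 : (0:ℝ) < 16^n := by positivity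
            nlinarith [h16]
        _ = 16^(n+1) * ((n:ℝ)+1)^3 := by ring
    have := le_of_mul_le_mul_right hchain (by positivity : (0:ℝ) < ((n:ℝ)+1)^3)
    have hcast : (((n:ℕ)+1:ℕ):ℝ) + 1 = (n:ℝ)+2 := by push_cast; ring
    calc B^2 * ((((n:ℕ)+1:ℕ):ℝ) + 1)
        = B^2 * ((n:ℝ)+2) := by rw [hcast]
      _ ≤ 16^(n+1) := this

lemma cb_div_le (n : ℕ) : (Nat.centralBinom n : ℝ)/4^n ≤ 1/Real.sqrt (n+1) := by
  have h := centralBinom_sq_le n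
  have h4 : (0:ℝ) < 4^n := by positivity
  have hs : (0:ℝ) < Real.sqrt (n+1) := Real.sqrt_pos.mpr (by positivity)
  rw [div_le_div_iff₀ h4 hs]
  have e1 : (Nat.centralBinom n : ℝ) * Real.sqrt (n+1)
      = Real.sqrt ((Nat.centralBinom n : ℝ)^2 * (n+1)) := by
    rw [Real.sqrt_mul (by positivity), Real.sqrt_sq (by positivity)]
  have e2 : (1:ℝ) * 4^n = Real.sqrt ((16:ℝ)^n) := by
    rw [one_mul, show (16:ℝ)^n = (4^n)^2 by rw [← pow_mul, mul_comm, pow_mul]; norm_num,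
      Real.sqrt_sq (le_of_lt h4)]
  rw [e1, e2]
  exact Real.sqrt_le_sqrt h

lemma choose_middle_div_le {t : ℕ} (ht : 1 ≤ t) :
    (Nat.choose t (t/2) : ℝ) / 2^t ≤ Real.sqrt 2 / Real.sqrt t := by
  rcases Nat.even_or_odd t with ⟨n, hn⟩ | ⟨n, hn⟩
  · -- t = 2n
    subst hn
    have hn1 : 1 ≤ n := by omega
    have hdiv : (n + n) / 2 = n := by omega
    rw [hdiv]
    have hcb : (n + n).choose n = Nat.centralBinom n := by
      rw [Nat.centralBinom]; congr 1; omega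
    rw [hcb]
    have h2 : (2:ℝ)^(n+n) = 4^n := by
      rw [show n+n = 2*n by ring, pow_mul]; norm_num
    rw [h2]
    have hc : ((n+n : ℕ):ℝ) = (n:ℝ)+(n:ℝ) := by push_cast; ring
    rw [hc]
    calc (Nat.centralBinom n : ℝ)/4^n ≤ 1/Real.sqrt (n+1) := cb_div_le n
      _ ≤ Real.sqrt 2 / Real.sqrt ((n:ℝ)+(n:ℝ)) := by
          rw [div_le_div_iff₀ (Real.sqrt_pos.mpr (by positivity)) (Real.sqrt_pos.mpr (by positivity))]
          rw [one_mul, ← Real.sqrt_mul (by norm_num)]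
          apply Real.sqrt_le_sqrt
          push_cast
          linarith
  · -- t = 2n+1
    subst hn
    have hdiv : (2*n + 1) / 2 = n := by omega
    rw [hdiv]
    have hch : ((2*n+1).choose n : ℝ) ≤ 2 * Nat.centralBinom n := by
      rcases Nat.eq_zero_or_pos n with h0 | hp
      · subst h0; norm_num [Nat.centralBinom]
      · have hj' : n = (n-1) + 1 := by omega
        have hps : (2*n+1).choose n = (2*n).choose (n-1) + (2*n).choose n := by
          conv_lhs => rw [hj', show 2*((n-1)+1)+1 = (2*((n-1)+1))+1 by ring]
          rw [Nat.choose_succ_succ (2*((n-1)+1)) (n-1)]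
          rw [Nat.succ_eq_add_one, ← hj']
        have hm1 : (2*n).choose (n-1) ≤ (2*n).choose ((2*n)/2) := Nat.choose_le_middle (n-1) (2*n)
        have hm2 : (2*n).choose n ≤ (2*n).choose ((2*n)/2) := Nat.choose_le_middle n (2*n)
        have hmid : (2*n)/2 = n := by omega
        rw [hmid] at hm1 hm2
        have : (2*n+1).choose n ≤ 2 * Nat.centralBinom n := by
          rw [Nat.centralBinom]; omega
        exact_mod_cast this
    have h2 : (2:ℝ)^(2*n+1) = 2 * 4^n := by
      rw [pow_succ, pow_mul]; norm_num; ring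
    rw [h2]
    have hc : ((2*n+1 : ℕ):ℝ) = 2*(n:ℝ)+1 := by push_cast; ring
    rw [hc]
    calc ((2*n+1).choose n : ℝ) / (2 * 4^n)
        ≤ (2 * Nat.centralBinom n) / (2 * 4^n) := by
          exact div_le_div_of_nonneg_right hch (by positivity)
      _ = (Nat.centralBinom n : ℝ)/4^n := by
          rw [mul_div_mul_left _ _ (by norm_num : (2:ℝ) ≠ 0)]
      _ ≤ 1/Real.sqrt (n+1) := cb_div_le n
      _ ≤ Real.sqrt 2 / Real.sqrt (2*(n:ℝ)+1) := by
          rw [div_le_div_iff₀ (Real.sqrt_pos.mpr (by positivity)) (Real.sqrt_pos.mpr (by positivity))]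
          rw [one_mul, ← Real.sqrt_mul (by norm_num)]
          apply Real.sqrt_le_sqrt
          push_cast
          linarith

lemma skeleton {m : ℕ} (u v : (Fin (m+1) → Bool) → ℝ)
    (σ τ : (Fin (m+1) → Bool) ≃ (Fin (m+1) → Bool)) (c d : ℝ)
    (hσu : ∀ e, u (σ e) = u e) (hσv : ∀ e, v (σ e) = 2*c - v e)
    (hτu : ∀ e, u (τ e) = d - u e)
    (ε1 ε2 : ℝ)
    (h1 : (∑ e : Fin (m+1) → Bool, if |u e - d/2| ≤ |d|/2 then (1:ℝ) else 0) ≤ ε1 * 2^(m+1))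
    (h2 : (∑ e : Fin (m+1) → Bool, if |v e - c| ≤ |c| then (1:ℝ) else 0) ≤ ε2 * 2^(m+1)) :
    (1/4 - ε1 - ε2) * 2^(m+1)
      ≤ ∑ e : Fin (m+1) → Bool, if 0 < u e ∧ v e < 0 then (1:ℝ) else 0 := by
  classical
  set P : ℝ := 2^(m+1) with hP
  have hPpos : (0:ℝ) < P := by positivity
  have hcard : (∑ _e : Fin (m+1) → Bool, (1:ℝ)) = P := by
    rw [Finset.sum_const, Finset.card_univ, Fintype.card_fun]
    simp [hP]
  set T : ℝ := ∑ e : Fin (m+1) → Bool, if 0 < u e ∧ v e < 0 then (1:ℝ) else 0 with hT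
  set A : ℝ := ∑ e : Fin (m+1) → Bool, if 0 < u e then (1:ℝ) else 0 with hA
  -- swap identity via σ
  have hswap : T = ∑ e : Fin (m+1) → Bool, if 0 < u e ∧ 2*c < v e then (1:ℝ) else 0 := by
    rw [hT, ← Equiv.sum_comp σ (fun e => if 0 < u e ∧ v e < 0 then (1:ℝ) else 0)]
    apply Finset.sum_congr rfl
    intro e _
    rw [hσu, hσv]
    congr 1
    apply propext
    constructor <;> intro h <;> exact ⟨h.1, by linarith [h.2]⟩
  have hτA : A = ∑ e : Fin (m+1) → Bool, if u e < d then (1:ℝ) else 0 := by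
    rw [hA, ← Equiv.sum_comp τ (fun e => if 0 < u e then (1:ℝ) else 0)]
    apply Finset.sum_congr rfl
    intro e _
    rw [hτu]
    congr 1
    apply propext
    constructor <;> intro h <;> linarith
  -- pointwise inequality 1
  have key1 : A ≤ T + (∑ e : Fin (m+1) → Bool, if 0 < u e ∧ 2*c < v e then (1:ℝ) else 0)
      + (∑ e : Fin (m+1) → Bool, if |v e - c| ≤ |c| then (1:ℝ) else 0) := by
    rw [hA, hT, ← Finset.sum_add_distrib, ← Finset.sum_add_distrib]
    apply Finset.sum_le_sum
    intro e _
    by_cases hu : 0 < u e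
    · by_cases hv : v e < 0
      · simp [hu, hv]
        split_ifs <;> norm_num
      · by_cases hv2 : 2*c < v e
        · have h3 : (0:ℝ) ≤ if |v e - c| ≤ |c| then (1:ℝ) else 0 := by positivity
          simp [hu, hv, hv2]
          positivity
        · have habs : |v e - c| ≤ |c| := by
            push_neg at hv hv2
            rw [abs_of_nonneg (by linarith : (0:ℝ) ≤ c), abs_le]
            constructor <;> linarith
          simp [hu, hv, hv2, habs]
    · simp [hu]
      split_ifs <;> norm_num
  -- pointwise inequality 2
  have key2 : P ≤ A + (∑ e : Fin (m+1) → Bool, if u e < d then (1:ℝ) else 0)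
      + (∑ e : Fin (m+1) → Bool, if |u e - d/2| ≤ |d|/2 then (1:ℝ) else 0) := by
    rw [← hcard, hA, ← Finset.sum_add_distrib, ← Finset.sum_add_distrib]
    apply Finset.sum_le_sum
    intro e _
    by_cases hu : 0 < u e
    · simp [hu]
      split_ifs <;> norm_num
    · by_cases hd : u e < d
      · simp [hu, hd]
        positivity
      · have habs : |u e - d/2| ≤ |d|/2 := by
          push_neg at hu hd
          rw [abs_of_nonpos (by linarith : d ≤ 0), abs_le]
          constructor <;> linarith
        simp [hu, hd, habs]
  rw [← hswap] at key1
  rw [← hτA] at key2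
  have hn1 : (0:ℝ) ≤ ε1 * P := le_trans (Finset.sum_nonneg (fun e _ => by positivity)) h1
  have hn2 : (0:ℝ) ≤ ε2 * P := le_trans (Finset.sum_nonneg (fun e _ => by positivity)) h2
  have hk1 : A ≤ 2*T + ε2 * P := by linarith
  have hk2 : P ≤ 2*A + ε1 * P := by linarith
  have : (1/4 - ε1 - ε2) * P ≤ T := by nlinarith
  linarith

section
variable {m t : ℕ}

-- counting functions with given number of trues
lemma card_fiber_le (I : Type*) [Fintype I] [DecidableEq I] (i : ℕ) :
    (Finset.univ.filter (fun h1 : I → Bool =>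
      (Finset.univ.filter (fun k => h1 k = true)).card = i)).card
      ≤ (Fintype.card I).choose i := by
  classical
  have : (Finset.univ.filter (fun h1 : I → Bool =>
      (Finset.univ.filter (fun k => h1 k = true)).card = i)).card
      ≤ (Finset.powersetCard i (Finset.univ : Finset I)).card := by
    apply Finset.card_le_card_of_injOn (fun h1 => Finset.univ.filter (fun k => h1 k = true))
    · intro h1 hh1
      simp only [Finset.mem_coe, Finset.mem_filter, Finset.mem_univ, true_and] at hh1
      rw [Finset.mem_coe, Finset.mem_powersetCard]
      exact ⟨Finset.subset_univ _, hh1⟩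
    · intro h1 _ h2 _ heq
      funext k
      have := Finset.ext_iff.mp heq k
      simp only [Finset.mem_filter, Finset.mem_univ, true_and] at this
      cases hk1 : h1 k <;> cases hk2 : h2 k <;> simp_all
  rwa [Finset.card_powersetCard, Finset.card_univ] at this

lemma count_band (α : Fin (m+1) → ℝ) (T : Finset (Fin (m+1))) (c γ : ℝ)
    (hT : T.card = t) (ht : 2 ≤ t) (hc : 1/4 ≤ |c|) (hγ : 0 ≤ γ) (hγt : γ * t ≤ 1)
    (hband : ∀ k ∈ T, α k ∈ Set.Icc c (c+γ)) (u₀ : ℝ) :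
    (∑ e : Fin (m+1) → Bool,
        if (∑ k : Fin (m+1), (if e k then (1:ℝ) else 0) * α k) ∈ Set.Icc u₀ (u₀+4)
        then (1:ℝ) else 0)
      ≤ 21 * (Nat.choose t (t/2)) * 2^(m+1-t) := by
  classical
  have hc0 : c ≠ 0 := by
    intro h; rw [h] at hc; simp at hc; linarith
  set p : Fin (m+1) → Prop := (· ∈ T) with hp
  set I := {x : Fin (m+1) // p x}
  set Ic := {x : Fin (m+1) // ¬ p x}
  have hcardI : Fintype.card I = t := by
    rw [← hT]; exact Fintype.card_coe T
  have hcardIc : Fintype.card Ic = m + 1 - t := by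
    have h1 : Fintype.card Ic = Fintype.card (Fin (m+1)) - Fintype.card I := by
      rw [Fintype.card_subtype_compl]
    rw [h1, hcardI, Fintype.card_fin]
  -- inner sums
  set S1 : (I → Bool) → ℝ := fun h1 => ∑ k : I, (if h1 k then (1:ℝ) else 0) * α k.val with hS1
  set S2 : (Ic → Bool) → ℝ := fun h2 => ∑ k : Ic, (if h2 k then (1:ℝ) else 0) * α k.val with hS2
  set E := Equiv.piEquivPiSubtypeProd p (fun _ => Bool) with hE
  have hsplit : ∀ (h1 : I → Bool) (h2 : Ic → Bool),
      (∑ k : Fin (m+1), (if (E.symm (h1, h2)) k then (1:ℝ) else 0) * α k)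
        = S1 h1 + S2 h2 := by
    intro h1 h2
    have hmem1 : ∀ x : Fin (m+1), x ∈ Finset.univ.filter p ↔ p x := by
      intro x; simp
    have hmem2 : ∀ x : Fin (m+1), x ∈ Finset.univ.filter (fun x => ¬ p x) ↔ ¬ p x := by
      intro x; simp
    rw [← Finset.sum_filter_add_sum_filter_not Finset.univ p]
    congr 1
    · rw [Finset.sum_subtype (Finset.univ.filter p) hmem1
        (fun k => (if (E.symm (h1, h2)) k then (1:ℝ) else 0) * α k)]
      apply Finset.sum_congr rfl
      intro k _
      congr 1
      rw [Equiv.piEquivPiSubtypeProd_symm_apply]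
      rw [dif_pos k.prop]
    · rw [Finset.sum_subtype (Finset.univ.filter (fun x => ¬ p x)) hmem2
        (fun k => (if (E.symm (h1, h2)) k then (1:ℝ) else 0) * α k)]
      apply Finset.sum_congr rfl
      intro k _
      congr 1
      rw [Equiv.piEquivPiSubtypeProd_symm_apply]
      rw [dif_neg k.prop]
  -- inner bound
  have inner : ∀ z : ℝ,
      (∑ h1 : I → Bool, if S1 h1 + z ∈ Set.Icc u₀ (u₀+4) then (1:ℝ) else 0)
        ≤ 21 * (Nat.choose t (t/2)) := by
    intro z
    set N : (I → Bool) → ℕ := fun h1 => (Finset.univ.filter (fun k => h1 k = true)).card with hN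
    set ζ : ℝ := (u₀ - z + 3/2)/c with hζ
    set B : Finset ℕ := (Finset.range (t+1)).filter (fun i => |(i:ℝ) - ζ| ≤ 10) with hB
    have hgood : ∀ h1 : I → Bool, (S1 h1 + z ∈ Set.Icc u₀ (u₀+4)) → N h1 ∈ B := by
      intro h1 hin
      have hNle : N h1 ≤ t := by
        rw [hN, ← hcardI]
        exact le_trans (Finset.card_le_card (Finset.filter_subset _ _)) (by rw [Finset.card_univ])
      have hSval : S1 h1 = ∑ k ∈ Finset.univ.filter (fun k : I => h1 k = true), α k.val := by
        rw [hS1, Finset.sum_filter]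
        apply Finset.sum_congr rfl
        intro k _
        split_ifs <;> simp
      have hlow : c * N h1 ≤ S1 h1 := by
        rw [hSval, hN]
        calc c * ((Finset.univ.filter (fun k : I => h1 k = true)).card : ℝ)
            = ∑ _k ∈ Finset.univ.filter (fun k : I => h1 k = true), c := by
              rw [Finset.sum_const, nsmul_eq_mul]; ring
          _ ≤ ∑ k ∈ Finset.univ.filter (fun k : I => h1 k = true), α k.val := by
              apply Finset.sum_le_sum
              intro k _
              exact (hband k.val k.prop).1
      have hhigh : S1 h1 ≤ (c + γ) * N h1 := by
        rw [hSval, hN]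
        calc ∑ k ∈ Finset.univ.filter (fun k : I => h1 k = true), α k.val
            ≤ ∑ _k ∈ Finset.univ.filter (fun k : I => h1 k = true), (c + γ) := by
              apply Finset.sum_le_sum
              intro k _
              exact (hband k.val k.prop).2
          _ = (c + γ) * ((Finset.univ.filter (fun k : I => h1 k = true)).card : ℝ) := by
              rw [Finset.sum_const, nsmul_eq_mul]; ring
      have hγN : γ * (N h1 : ℝ) ≤ 1 := by
        calc γ * (N h1 : ℝ) ≤ γ * t := by
              apply mul_le_mul_of_nonneg_left _ hγ
              exact_mod_cast hNle
          _ ≤ 1 := hγt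
      obtain ⟨hin1, hin2⟩ := hin
      have hcN : |c * N h1 - (u₀ - z + 3/2)| ≤ 5/2 := by
        rw [abs_le]
        constructor <;> nlinarith
      have habs : |(N h1 : ℝ) - ζ| ≤ 10 := by
        have : |(N h1 : ℝ) - ζ| = |c * N h1 - (u₀ - z + 3/2)| / |c| := by
          rw [hζ, ← abs_div]
          congr 1
          field_simp
        rw [this]
        rw [div_le_iff₀ (by positivity)]
        calc |c * N h1 - (u₀ - z + 3/2)| ≤ 5/2 := hcN
          _ ≤ 10 * (1/4) := by norm_num
          _ ≤ 10 * |c| := by linarith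
      rw [hB, Finset.mem_filter, Finset.mem_range]
      exact ⟨by omega, habs⟩
    have hBcard : B.card ≤ 21 := by
      rcases Finset.eq_empty_or_nonempty B with h | h
      · rw [h]; simp
      · have hsub : B ⊆ Finset.Icc (B.min' h) (B.min' h + 20) := by
          intro i hi
          rw [Finset.mem_Icc]
          refine ⟨Finset.min'_le B i hi, ?_⟩
          have h1 : |(i:ℝ) - ζ| ≤ 10 := (Finset.mem_filter.mp hi).2
          have h2 : |((B.min' h : ℕ):ℝ) - ζ| ≤ 10 :=
            (Finset.mem_filter.mp (Finset.min'_mem B h)).2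
          rw [abs_le] at h1 h2
          have : (i:ℝ) ≤ (B.min' h : ℕ) + 20 := by linarith
          exact_mod_cast this
        calc B.card ≤ (Finset.Icc (B.min' h) (B.min' h + 20)).card := Finset.card_le_card hsub
          _ = 21 := by rw [Nat.card_Icc]; omega
    calc (∑ h1 : I → Bool, if S1 h1 + z ∈ Set.Icc u₀ (u₀+4) then (1:ℝ) else 0)
        ≤ ∑ h1 : I → Bool, if N h1 ∈ B then (1:ℝ) else 0 := by
          apply Finset.sum_le_sum
          intro h1 _
          by_cases hg : S1 h1 + z ∈ Set.Icc u₀ (u₀+4)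
          · rw [if_pos hg, if_pos (hgood h1 hg)]
          · rw [if_neg hg]; positivity
      _ = ((Finset.univ.filter (fun h1 : I → Bool => N h1 ∈ B)).card : ℝ) := by
          rw [Finset.sum_boole]
      _ ≤ ∑ i ∈ B, ((Finset.univ.filter (fun h1 : I → Bool => N h1 = i)).card : ℝ) := by
          have hsub : (Finset.univ.filter (fun h1 : I → Bool => N h1 ∈ B))
              ⊆ B.biUnion (fun i => Finset.univ.filter (fun h1 : I → Bool => N h1 = i)) := by
            intro h1 hh1
            rw [Finset.mem_biUnion]
            exact ⟨N h1, (Finset.mem_filter.mp hh1).2, Finset.mem_filter.mpr ⟨Finset.mem_univ _, rfl⟩⟩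
          calc ((Finset.univ.filter (fun h1 : I → Bool => N h1 ∈ B)).card : ℝ)
              ≤ ((B.biUnion (fun i => Finset.univ.filter (fun h1 : I → Bool => N h1 = i))).card : ℝ) := by
                exact_mod_cast Finset.card_le_card hsub
            _ ≤ ∑ i ∈ B, ((Finset.univ.filter (fun h1 : I → Bool => N h1 = i)).card : ℝ) := by
                exact_mod_cast Finset.card_biUnion_le
      _ ≤ ∑ i ∈ B, ((Nat.choose t (t/2) : ℝ)) := by
          apply Finset.sum_le_sum
          intro i _
          have h1 := card_fiber_le I i
          rw [hcardI] at h1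
          have h2 := Nat.choose_le_middle i t
          exact_mod_cast le_trans h1 h2
      _ = B.card * (Nat.choose t (t/2) : ℝ) := by
          rw [Finset.sum_const, nsmul_eq_mul]
      _ ≤ 21 * (Nat.choose t (t/2)) := by
          have : (B.card : ℝ) ≤ 21 := by exact_mod_cast hBcard
          apply mul_le_mul_of_nonneg_right this (by positivity)
  -- assemble
  calc (∑ e : Fin (m+1) → Bool,
        if (∑ k : Fin (m+1), (if e k then (1:ℝ) else 0) * α k) ∈ Set.Icc u₀ (u₀+4)
        then (1:ℝ) else 0)
      = ∑ q : (I → Bool) × (Ic → Bool),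
          if (∑ k : Fin (m+1), (if (E.symm q) k then (1:ℝ) else 0) * α k) ∈ Set.Icc u₀ (u₀+4)
          then (1:ℝ) else 0 := by
        rw [← Equiv.sum_comp E.symm (fun e => if (∑ k : Fin (m+1), (if e k then (1:ℝ) else 0) * α k) ∈ Set.Icc u₀ (u₀+4) then (1:ℝ) else 0)]
    _ = ∑ h1 : I → Bool, ∑ h2 : Ic → Bool,
          if S1 h1 + S2 h2 ∈ Set.Icc u₀ (u₀+4) then (1:ℝ) else 0 := by
        rw [Fintype.sum_prod_type]
        exact Finset.sum_congr rfl (fun h1 _ =>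
          Finset.sum_congr rfl (fun h2 _ => by rw [hsplit h1 h2]))
    _ = ∑ h2 : Ic → Bool, ∑ h1 : I → Bool,
          if S1 h1 + S2 h2 ∈ Set.Icc u₀ (u₀+4) then (1:ℝ) else 0 := Finset.sum_comm
    _ ≤ ∑ _h2 : Ic → Bool, (21 * (Nat.choose t (t/2)) : ℝ) := by
        apply Finset.sum_le_sum
        intro h2 _
        exact inner (S2 h2)
    _ = (Fintype.card (Ic → Bool) : ℝ) * (21 * (Nat.choose t (t/2))) := by
        rw [Finset.sum_const, Finset.card_univ, nsmul_eq_mul]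
    _ = 21 * (Nat.choose t (t/2)) * 2^(m+1-t) := by
        rw [Fintype.card_fun, hcardIc, Fintype.card_bool]
        push_cast
        ring

end

set_option maxHeartbeats 1000000 in
lemma smallball {m t : ℕ} {θ : ℝ} (ht : 2 ≤ t)
    (hsum : 3*(m:ℝ)/8 ≤ ∑ k ∈ Finset.range (m+1), Real.cos (k * θ)^2)
    (hmt : (t:ℝ)*(2*t^2+1) ≤ (m:ℝ)/8 - 1/4) (u₀ : ℝ) :
    (∑ e : Fin (m+1) → Bool,
        if (∑ k : Fin (m+1), (if e k then (1:ℝ) else 0) * Real.cos (k * θ)) ∈ Set.Icc u₀ (u₀+4)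
        then (1:ℝ) else 0)
      ≤ (21 * Real.sqrt 2 / Real.sqrt t) * 2^(m+1) := by
  classical
  have ht0 : (0:ℝ) < t := by positivity
  have ht2 : (0:ℝ) < (t:ℝ)^2 := by positivity
  -- step 1 : many large coefficients
  set K : Finset (Fin (m+1)) := Finset.univ.filter (fun k => 1/2 ≤ |Real.cos (k * θ)|) with hK
  have hKcard : (m:ℝ)/8 - 1/4 ≤ (K.card : ℝ) := by
    have hfin : ∑ k : Fin (m+1), Real.cos ((k:ℕ) * θ)^2
        = ∑ k ∈ Finset.range (m+1), Real.cos (k * θ)^2 :=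
      Fin.sum_univ_eq_sum_range (fun k => Real.cos (k * θ)^2) (m+1)
    have hsplit := Finset.sum_filter_add_sum_filter_not Finset.univ
      (fun k : Fin (m+1) => 1/2 ≤ |Real.cos (k * θ)|) (fun k => Real.cos ((k:ℕ) * θ)^2)
    have hb1 : ∑ k ∈ K, Real.cos ((k:ℕ) * θ)^2 ≤ (K.card : ℝ) := by
      calc ∑ k ∈ K, Real.cos ((k:ℕ) * θ)^2 ≤ ∑ _k ∈ K, (1:ℝ) := by
            apply Finset.sum_le_sum
            intro k _
            nlinarith [Real.neg_one_le_cos ((k:ℕ) * θ), Real.cos_le_one ((k:ℕ) * θ)]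
        _ = (K.card : ℝ) := by rw [Finset.sum_const, nsmul_eq_mul, mul_one]
    have hb2 : ∑ k ∈ Finset.univ.filter (fun k : Fin (m+1) => ¬ (1/2 ≤ |Real.cos (k * θ)|)),
        Real.cos ((k:ℕ) * θ)^2 ≤ ((m:ℝ)+1)/4 := by
      calc ∑ k ∈ Finset.univ.filter (fun k : Fin (m+1) => ¬ (1/2 ≤ |Real.cos (k * θ)|)),
            Real.cos ((k:ℕ) * θ)^2
          ≤ ∑ _k ∈ Finset.univ.filter (fun k : Fin (m+1) => ¬ (1/2 ≤ |Real.cos (k * θ)|)), (1/4:ℝ) := by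
            apply Finset.sum_le_sum
            intro k hk
            have := (Finset.mem_filter.mp hk).2
            push_neg at this
            have h1 : |Real.cos ((k:ℕ) * θ)| < 1/2 := this
            nlinarith [abs_nonneg (Real.cos ((k:ℕ) * θ)), sq_abs (Real.cos ((k:ℕ) * θ))]
        _ ≤ ((m:ℝ)+1)/4 := by
            rw [Finset.sum_const, nsmul_eq_mul]
            have : ((Finset.univ.filter (fun k : Fin (m+1) => ¬ (1/2 ≤ |Real.cos (k * θ)|))).card : ℝ)
                ≤ (m:ℝ)+1 := by
              have := Finset.card_filter_le Finset.univ
                (fun k : Fin (m+1) => ¬ (1/2 ≤ |Real.cos (k * θ)|))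
              rw [Finset.card_univ, Fintype.card_fin] at this
              exact_mod_cast this
            linarith
    have : 3*(m:ℝ)/8 ≤ (K.card : ℝ) + ((m:ℝ)+1)/4 := by
      rw [← hfin] at hsum
      rw [← hsplit] at hsum
      linarith
    linarith
  -- step 2 : pigeonhole into bands
  set f : Fin (m+1) → ℤ := fun k => ⌊Real.cos (k * θ) * t^2⌋ with hf
  have hmaps : ∀ k ∈ K, f k ∈ Finset.Icc (-(t^2 : ℤ)) (t^2 : ℤ) := by
    intro k _
    rw [Finset.mem_Icc]
    constructor
    · apply Int.le_floor.mpr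
      push_cast
      nlinarith [Real.neg_one_le_cos ((k:ℕ) * θ)]
    · have h1 : Real.cos ((k:ℕ) * θ) * t^2 ≤ (t:ℝ)^2 := by
        nlinarith [Real.cos_le_one ((k:ℕ) * θ)]
      have := Int.floor_le (Real.cos ((k:ℕ) * θ) * t^2)
      have h2 : ((f k : ℤ) : ℝ) ≤ ((t^2 : ℤ) : ℝ) := by push_cast; linarith
      exact_mod_cast h2
  have hcard_mul : (Finset.Icc (-(t^2 : ℤ)) (t^2 : ℤ)).card * t ≤ K.card := by
    have hicc : (Finset.Icc (-(t^2 : ℤ)) (t^2 : ℤ)).card = 2*t^2+1 := by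
      rw [Int.card_Icc]
      have h : ((t:ℤ)^2 + 1 - (-((t:ℤ)^2))) = ((2*t^2+1 : ℕ) : ℤ) := by push_cast; ring
      rw [show ((t^2:ℤ) + 1 - (-(t^2:ℤ))) = ((2*t^2+1 : ℕ) : ℤ) from h]
      exact Int.toNat_natCast _
    rw [hicc]
    have : ((2*t^2+1)*t : ℝ) ≤ (K.card : ℝ) := by
      push_cast
      push_cast at hmt
      nlinarith
    exact_mod_cast this
  obtain ⟨i, _, hfiber⟩ := Finset.exists_le_card_fiber_of_mul_le_card_of_maps_to hmaps
    (by rw [Finset.nonempty_Icc]; exact neg_le_self (sq_nonneg _)) hcard_mul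
  obtain ⟨T, hTsub, hTcard⟩ := Finset.exists_subset_card_eq hfiber
  -- band parameters
  set c : ℝ := (i:ℝ)/t^2 with hc'
  set γ : ℝ := 1/(t:ℝ)^2 with hγ'
  have hband : ∀ k ∈ T, Real.cos ((k:ℕ) * θ) ∈ Set.Icc c (c + γ) := by
    intro k hk
    have hk' := hTsub hk
    have hfk : f k = i := (Finset.mem_filter.mp hk').2
    have h1 : (i:ℝ) ≤ Real.cos ((k:ℕ) * θ) * t^2 := by
      rw [← hfk]; exact Int.floor_le _
    have h2 : Real.cos ((k:ℕ) * θ) * t^2 < (i:ℝ) + 1 := by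
      rw [← hfk]; exact Int.lt_floor_add_one _
    constructor
    · rw [hc', div_le_iff₀ ht2]; linarith
    · rw [hc', hγ']
      rw [show (i:ℝ)/(t:ℝ)^2 + 1/(t:ℝ)^2 = ((i:ℝ)+1)/(t:ℝ)^2 by ring]
      rw [le_div_iff₀ ht2]; linarith
  have h2t : (2:ℝ) ≤ (t:ℝ) := by exact_mod_cast ht
  have ht4 : (4:ℝ) ≤ (t:ℝ)^2 := by nlinarith [h2t, sq_nonneg ((t:ℝ) - 2)]
  have hγ4 : γ ≤ 1/4 := by
    rw [hγ']
    rw [div_le_div_iff₀ ht2 (by norm_num : (0:ℝ) < 4)]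
    linarith
  have hcabs : 1/4 ≤ |c| := by
    obtain ⟨k, hk⟩ : T.Nonempty := by
      rw [← Finset.card_pos, hTcard]; omega
    have hkK : k ∈ K := (Finset.mem_filter.mp (hTsub hk)).1
    have hk12 : 1/2 ≤ |Real.cos ((k:ℕ) * θ)| := (Finset.mem_filter.mp hkK).2
    have hck := hband k hk
    rcases le_or_gt 0 c with hc0 | hc0
    · have hcosnn : 0 ≤ Real.cos ((k:ℕ) * θ) := le_trans hc0 hck.1
      rw [abs_of_nonneg hcosnn] at hk12
      rw [abs_of_nonneg hc0]
      have := hck.2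
      linarith
    · have hi : (i:ℝ) < 0 := by
        by_contra hcon
        push_neg at hcon
        rw [hc'] at hc0
        exact absurd (div_nonneg hcon (le_of_lt ht2)) (not_le.mpr hc0)
      have hi1 : (i:ℝ) ≤ -1 := by
        have : i < 0 := by exact_mod_cast hi
        have : i ≤ -1 := by omega
        exact_mod_cast this
      have hcγ : c + γ ≤ 0 := by
        rw [hc', hγ']
        rw [show (i:ℝ)/(t:ℝ)^2 + 1/(t:ℝ)^2 = ((i:ℝ)+1)/(t:ℝ)^2 by ring]
        apply div_nonpos_of_nonpos_of_nonneg (by linarith) (le_of_lt ht2)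
      have hcosnp : Real.cos ((k:ℕ) * θ) ≤ 0 := le_trans hck.2 hcγ
      rw [abs_of_nonpos hcosnp] at hk12
      rw [abs_of_neg hc0]
      have := hck.1
      linarith
  have hγt : γ * t ≤ 1 := by
    rw [hγ', div_mul_eq_mul_div, one_mul, div_le_one ht2]
    nlinarith [h2t, sq_nonneg ((t:ℝ) - 1)]
  have hcb := count_band (fun k : Fin (m+1) => Real.cos ((k:ℕ) * θ)) T c γ hTcard ht hcabs
    (by rw [hγ']; positivity) hγt hband u₀
  -- step 4 : combine
  have htm : t ≤ m + 1 := by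
    have h1 : (t:ℝ) ≤ (t:ℝ)*(2*t^2+1) := by nlinarith
    have h2 : (t:ℝ) ≤ (m:ℝ) := by
      have : (m:ℝ)/8 - 1/4 ≤ (m:ℝ) := by
        have : (0:ℝ) ≤ (m:ℝ) := by positivity
        linarith
      linarith
    have : t ≤ m := by exact_mod_cast h2
    omega
  have hchoose := choose_middle_div_le (t := t) (by omega)
  calc (∑ e : Fin (m+1) → Bool,
        if (∑ k : Fin (m+1), (if e k then (1:ℝ) else 0) * Real.cos (k * θ)) ∈ Set.Icc u₀ (u₀+4)
        then (1:ℝ) else 0)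
      ≤ 21 * (Nat.choose t (t/2)) * 2^(m+1-t) := hcb
    _ ≤ 21 * ((Real.sqrt 2 / Real.sqrt t) * 2^t) * 2^(m+1-t) := by
        have h1 : (Nat.choose t (t/2) : ℝ) ≤ (Real.sqrt 2 / Real.sqrt t) * 2^t := by
          rw [← div_le_iff₀ (by positivity : (0:ℝ) < (2:ℝ)^t)]
          exact hchoose
        apply mul_le_mul_of_nonneg_right _ (by positivity : (0:ℝ) ≤ 2^(m+1-t))
        exact mul_le_mul_of_nonneg_left h1 (by norm_num)
    _ = (21 * Real.sqrt 2 / Real.sqrt t) * 2^(m+1) := by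
        rw [show (21 : ℝ) * ((Real.sqrt 2 / Real.sqrt t) * 2^t) * 2^(m+1-t)
            = (21 * Real.sqrt 2 / Real.sqrt t) * (2^t * 2^(m+1-t)) by ring]
        congr 1
        rw [← pow_add]
        congr 1
        omega

open scoped Classical in
lemma main_core {m n t : ℕ} (A B x y : ℝ) (rx ry : ℕ)
    (ht2 : 2 ≤ t)
    (hmt : (t:ℝ)*(2*t^2+1) ≤ (m:ℝ)/8 - 1/4)
    (hx1 : π/2 ≤ x) (hx2 : x ≤ π) (hy1 : π/2 ≤ y) (hy2 : y ≤ π)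
    (hmx : (m:ℝ) * x = (rx:ℝ) * π) (hmy : (m:ℝ) * y = (ry:ℝ) * π)
    (hrx : Even rx) (hry : Odd ry)
    (hsx : 3*(m:ℝ)/8 ≤ ∑ k ∈ Finset.range (m+1), Real.cos (k*x)^2)
    (hsy : 3*(m:ℝ)/8 ≤ ∑ k ∈ Finset.range (m+1), Real.cos (k*y)^2)
    (hIVT : ∀ e : Fin (m+1) → Bool, 0 < F n m e x → F n m e y < 0 →
        ∃ z ∈ Set.Icc A B, F n m e z = 0) :
    (1/4 - 2*(21*Real.sqrt 2/Real.sqrt t)) * 2^(m+1)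
      ≤ ∑ e : Fin (m+1) → Bool, if ∃ z ∈ Set.Icc A B, F n m e z = 0 then (1:ℝ) else 0 := by
  classical
  set S : ℝ → (Fin (m+1) → Bool) → ℝ :=
    fun w e => ∑ k : Fin (m+1), (if e k then (1:ℝ) else 0) * Real.cos ((k:ℕ) * w) with hS
  have hFdef : ∀ (e : Fin (m+1) → Bool) (w : ℝ), F n m e w = Dker n w - S w e :=
    fun e w => rfl
  -- the two involutions
  set σ : (Fin (m+1) → Bool) ≃ (Fin (m+1) → Bool) :=
    Function.Involutive.toPerm (fun e => fun k => e (Fin.rev k))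
      (fun e => by funext k; simp [Fin.rev_rev]) with hσ
  set τ : (Fin (m+1) → Bool) ≃ (Fin (m+1) → Bool) :=
    Function.Involutive.toPerm (fun e => fun k => !(e k))
      (fun e => by funext k; simp) with hτ
  have hσapp : ∀ (e : Fin (m+1) → Bool) (k : Fin (m+1)), σ e k = e (Fin.rev k) := fun e k => rfl
  have hτapp : ∀ (e : Fin (m+1) → Bool) (k : Fin (m+1)), τ e k = !(e k) := fun e k => rfl
  -- sums over Fin vs range
  have hA : ∀ w : ℝ, (∑ k : Fin (m+1), Real.cos ((k:ℕ)*w)) = Dker m w := by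
    intro w
    exact Fin.sum_univ_eq_sum_range (fun k => Real.cos (k * w)) (m+1)
  have hm0 : (0:ℝ) < m := by
    have h2t : (2:ℝ) ≤ t := by exact_mod_cast ht2
    nlinarith
  -- behaviour of S under σ
  have hSσ : ∀ (r : ℕ) (w : ℝ), (m:ℝ) * w = (r:ℝ)*π →
      ∀ e, S w (σ e) = (-1)^r * S w e := by
    intro r w hw e
    have step1 : S w (σ e) = ∑ k : Fin (m+1),
        (if e k then (1:ℝ) else 0) * Real.cos (((Fin.rev k : Fin (m+1)):ℕ) * w) := by
      rw [hS]
      have := Equiv.sum_comp (Function.Involutive.toPerm Fin.rev Fin.rev_involutive)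
        (fun k : Fin (m+1) => (if e k then (1:ℝ) else 0) *
          Real.cos (((Fin.rev k : Fin (m+1)):ℕ) * w))
      rw [← this]
      apply Finset.sum_congr rfl
      intro k _
      have h1 : (Function.Involutive.toPerm Fin.rev Fin.rev_involutive) k = Fin.rev k := rfl
      rw [h1, hσapp, Fin.rev_rev]
    rw [step1]
    have step2 : ∀ k : Fin (m+1),
        Real.cos (((Fin.rev k : Fin (m+1)):ℕ) * w) = (-1)^r * Real.cos ((k:ℕ) * w) := by
      intro k
      have hkm : (k:ℕ) ≤ m := Nat.lt_succ_iff.mp k.isLt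
      have hval : ((Fin.rev k : Fin (m+1)):ℕ) = m - (k:ℕ) := by
        rw [Fin.val_rev]
        omega
      have hcast : (((Fin.rev k : Fin (m+1)):ℕ) : ℝ) = (m:ℝ) - ((k:ℕ):ℝ) := by
        rw [hval]
        push_cast [Nat.cast_sub hkm]
        ring
      have harg : (((Fin.rev k : Fin (m+1)):ℕ) : ℝ) * w = (r:ℝ) * π - ((k:ℕ):ℝ) * w := by
        rw [hcast]
        have : ((m:ℝ) - ((k:ℕ):ℝ)) * w = (m:ℝ)*w - ((k:ℕ):ℝ)*w := by ring
        rw [this, hw]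
      rw [harg]
      exact Real.cos_nat_mul_pi_sub (((k:ℕ):ℝ) * w) r
    calc ∑ k : Fin (m+1), (if e k then (1:ℝ) else 0) * Real.cos (((Fin.rev k : Fin (m+1)):ℕ) * w)
        = ∑ k : Fin (m+1), (-1)^r * ((if e k then (1:ℝ) else 0) * Real.cos ((k:ℕ) * w)) := by
          apply Finset.sum_congr rfl
          intro k _
          rw [step2 k]
          ring
      _ = (-1)^r * S w e := by rw [← Finset.mul_sum, hS]
  -- behaviour of S under τ
  have hSτ : ∀ (w : ℝ) (e : Fin (m+1) → Bool), S w (τ e) = Dker m w - S w e := by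
    intro w e
    rw [hS, ← hA w, ← Finset.sum_sub_distrib]
    apply Finset.sum_congr rfl
    intro k _
    rw [hτapp]
    cases e k <;> simp
  -- Dirichlet kernel bound
  have hDD : ∀ (w : ℝ), π/2 ≤ w → w ≤ π → ∀ n' : ℕ, |Dker n' w| ≤ 5/4 := by
    intro w hw1 hw2 n'
    have hpi := Real.pi_pos
    have hsin : 2/3 ≤ Real.sin (w/2) := by
      have hmono := Real.sin_le_sin_of_le_of_le_pi_div_two
        (x := π/4) (y := w/2) (by linarith) (by linarith) (by linarith)
      rw [Real.sin_pi_div_four] at hmono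
      have hs2 : (4/3:ℝ) ≤ Real.sqrt 2 := by
        rw [show (4/3:ℝ) = Real.sqrt ((4/3)^2) from (Real.sqrt_sq (by norm_num)).symm]
        apply Real.sqrt_le_sqrt
        norm_num
      linarith
    have hspos : 0 < Real.sin (w/2) := by linarith
    have hb := dker_bound (n := n') (x := w) hspos
    have h34 : 1/(2 * Real.sin (w/2)) ≤ 3/4 := by
      rw [div_le_div_iff₀ (by linarith) (by norm_num)]
      linarith
    calc |Dker n' w| = |∑ k ∈ Finset.range (n'+1), Real.cos (k * w)| := rfl
      _ ≤ 1/2 + 1/(2 * Real.sin (w/2)) := hb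
      _ ≤ 5/4 := by linarith
  -- set up skeleton data
  set u : (Fin (m+1) → Bool) → ℝ := fun e => F n m e x with hu
  set v : (Fin (m+1) → Bool) → ℝ := fun e => F n m e y with hv
  set c : ℝ := Dker n y with hc
  set d : ℝ := 2 * Dker n x - Dker m x with hd
  have hσu : ∀ e, u (σ e) = u e := by
    intro e
    rw [hu]
    simp only
    rw [hFdef, hFdef, hSσ rx x hmx e, hrx.neg_one_pow, one_mul]
  have hσv : ∀ e, v (σ e) = 2*c - v e := by
    intro e
    rw [hv]
    simp only
    rw [hFdef, hFdef, hSσ ry y hmy e, hry.neg_one_pow]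
    rw [hc]
    ring
  have hτu : ∀ e, u (τ e) = d - u e := by
    intro e
    rw [hu]
    simp only
    rw [hFdef, hFdef, hSτ x e, hd]
    ring
  -- bounds on c, d
  have hcb : |c| ≤ 5/4 := hDD y hy1 hy2 n
  have hdb : |d| ≤ 4 := by
    have h1 : |Dker n x| ≤ 5/4 := hDD x hx1 hx2 n
    have h2 : |Dker m x| ≤ 5/4 := hDD x hx1 hx2 m
    calc |d| = |2 * Dker n x - Dker m x| := by rw [hd]
      _ ≤ |2 * Dker n x| + |Dker m x| := abs_sub _ _
      _ = 2*|Dker n x| + |Dker m x| := by rw [abs_mul]; norm_num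
      _ ≤ 4 := by linarith
  -- small ball bounds
  set ε1 : ℝ := 21 * Real.sqrt 2 / Real.sqrt t with hε1
  have h1 : (∑ e : Fin (m+1) → Bool, if |u e - d/2| ≤ |d|/2 then (1:ℝ) else 0)
      ≤ ε1 * 2^(m+1) := by
    set u₁ : ℝ := Dker n x - d/2 - |d|/2 with hu₁
    calc (∑ e : Fin (m+1) → Bool, if |u e - d/2| ≤ |d|/2 then (1:ℝ) else 0)
        ≤ ∑ e : Fin (m+1) → Bool, if S x e ∈ Set.Icc u₁ (u₁+4) then (1:ℝ) else 0 := by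
          apply Finset.sum_le_sum
          intro e _
          by_cases h : |u e - d/2| ≤ |d|/2
          · rw [if_pos h, if_pos]
            rw [abs_le] at h
            have hue : u e = Dker n x - S x e := hFdef e x
            constructor
            · rw [hu₁]; linarith
            · rw [hu₁]; linarith
          · rw [if_neg h]; positivity
      _ ≤ ε1 * 2^(m+1) := smallball ht2 hsx hmt u₁
  have h2 : (∑ e : Fin (m+1) → Bool, if |v e - c| ≤ |c| then (1:ℝ) else 0)
      ≤ ε1 * 2^(m+1) := by
    set u₂ : ℝ := -|c| with hu₂
    calc (∑ e : Fin (m+1) → Bool, if |v e - c| ≤ |c| then (1:ℝ) else 0)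
        ≤ ∑ e : Fin (m+1) → Bool, if S y e ∈ Set.Icc u₂ (u₂+4) then (1:ℝ) else 0 := by
          apply Finset.sum_le_sum
          intro e _
          by_cases h : |v e - c| ≤ |c| 
          · rw [if_pos h, if_pos]
            rw [abs_le] at h
            have hve : v e = Dker n y - S y e := hFdef e y
            rw [← hc] at hve
            constructor
            · rw [hu₂]; linarith
            · rw [hu₂]; linarith
          · rw [if_neg h]; positivity
      _ ≤ ε1 * 2^(m+1) := smallball ht2 hsy hmt u₂
  have hskel := skeleton u v σ τ c d hσu hσv hτu ε1 ε1 h1 h2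
  have hmono : (∑ e : Fin (m+1) → Bool, if 0 < u e ∧ v e < 0 then (1:ℝ) else 0)
      ≤ ∑ e : Fin (m+1) → Bool, if ∃ z ∈ Set.Icc A B, F n m e z = 0 then (1:ℝ) else 0 := by
    apply Finset.sum_le_sum
    intro e _
    by_cases h : 0 < u e ∧ v e < 0
    · rw [if_pos h, if_pos (hIVT e h.1 h.2)]
    · rw [if_neg h]; positivity
  calc (1/4 - 2*(21*Real.sqrt 2/Real.sqrt t)) * 2^(m+1)
      = (1/4 - ε1 - ε1) * 2^(m+1) := by rw [hε1]; ring
    _ ≤ ∑ e : Fin (m+1) → Bool, if 0 < u e ∧ v e < 0 then (1:ℝ) else 0 := hskel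
    _ ≤ _ := hmono

set_option maxHeartbeats 2000000 in
open scoped Classical in
/-- For every `ε > 0` there is `m₀` such that for all `m ≥ m₀`, `n ≥ m` and every integer
`j` with `m/2 ≤ j ≤ m - 1`: if `f ~ F_{n,m}` and `I = [πj/m, π(j+1)/m]` then
`P(f has a zero in I) ≥ 1/4 - ε`, where the probability is computed as the proportion
of the `2^(m+1)` Bernoulli outcomes. -/
theorem stmt14 (εp : ℝ) (hεp : 0 < εp) :
    ∃ m₀ : ℕ, ∀ m n j : ℕ, m₀ ≤ m → m ≤ n →
      (m : ℝ) / 2 ≤ (j : ℝ) → (j : ℝ) ≤ (m : ℝ) - 1 →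
      1 / 4 - εp ≤
        (∑ e : Fin (m + 1) → Bool,
          if ∃ x ∈ Set.Icc (π * j / m) (π * (j + 1) / m), F n m e x = 0 then (1 : ℝ) else 0) /
          2 ^ (m + 1) := by
  classical
  set t : ℕ := ⌈(60/εp)^2⌉₊ + 2 with htdef
  have ht2 : 2 ≤ t := by omega
  have h2t : (2:ℝ) ≤ (t:ℝ) := by exact_mod_cast ht2
  have ht0 : (0:ℝ) < t := by linarith
  refine ⟨200 * t^3, ?_⟩
  intro m n j hm hmn hj1 hj2
  have hpi := Real.pi_pos
  -- numeric facts about m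
  have ht3 : 8 ≤ t^3 := by
    calc 8 = 2^3 := by norm_num
      _ ≤ t^3 := Nat.pow_le_pow_left ht2 3
  have hm1600 : 1600 ≤ m := le_trans (by omega) hm
  have hm1 : 1 ≤ m := by omega
  have hm0 : (0:ℝ) < m := by
    have : (1:ℝ) ≤ m := by exact_mod_cast hm1
    linarith
  have hmR : (200:ℝ)*(t:ℝ)^3 ≤ (m:ℝ) := by exact_mod_cast hm
  have h4t : (4:ℝ) ≤ (t:ℝ)^2 := by nlinarith [h2t]
  have hmt : (t:ℝ)*(2*(t:ℝ)^2+1) ≤ (m:ℝ)/8 - 1/4 := by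
    nlinarith [h2t, h4t, hmR, mul_le_mul_of_nonneg_left h4t (by linarith : (0:ℝ) ≤ (t:ℝ))]
  -- j facts
  have hjm : (j:ℝ) + 1 ≤ (m:ℝ) := by linarith
  have hjmN : j + 1 ≤ m := by exact_mod_cast hjm
  set a : ℝ := π * (j:ℝ) / m with ha
  set b : ℝ := π * ((j:ℝ) + 1) / m with hb
  have hax : π/2 ≤ a := by
    rw [ha, le_div_iff₀ hm0]
    nlinarith [hj1]
  have ha2 : a ≤ π - π/m := by
    rw [ha, div_le_iff₀ hm0]
    have h1 : (π - π/m) * m = π * m - π := by field_simp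
    rw [h1]
    nlinarith [hj2]
  have hab : a ≤ b := by
    rw [ha, hb]
    gcongr <;> linarith
  have hb2 : b ≤ π := by
    rw [hb, div_le_iff₀ hm0]
    nlinarith [hjm]
  have hb1 : π/2 ≤ b := le_trans hax hab
  have hax2 : a ≤ π := by
    have : 0 < π/m := by positivity
    linarith
  have hmxa : (m:ℝ) * a = (j:ℝ) * π := by
    rw [ha]
    field_simp
  have hmxb : (m:ℝ) * b = ((j+1:ℕ):ℝ) * π := by
    rw [hb]
    push_cast
    field_simp
  -- lower bound for sin on the relevant range
  have hsin_low : ∀ w : ℝ, π/2 ≤ w → w ≤ π - π/m → 2/(m:ℝ) ≤ Real.sin w := by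
    intro w h1 h2
    have hπm : 0 < π/m := by positivity
    have h3 : 0 ≤ π - w := by linarith
    have h4 : π - w ≤ π/2 := by linarith
    have h5 := Real.mul_le_sin h3 h4
    rw [Real.sin_pi_sub] at h5
    calc 2/(m:ℝ) = 2/π * (π/m) := by
          field_simp
      _ ≤ 2/π * (π - w) := by
          have h6 : π/m ≤ π - w := by linarith
          have h7 : (0:ℝ) ≤ 2/π := by positivity
          exact mul_le_mul_of_nonneg_left h6 h7
      _ ≤ Real.sin w := h5
  have hsa : 3*(m:ℝ)/8 ≤ ∑ k ∈ Finset.range (m+1), Real.cos (k*a)^2 :=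
    cossq_lb hm1 (hsin_low a hax ha2)
  have hsb : 3*(m:ℝ)/8 ≤ ∑ k ∈ Finset.range (m+1), Real.cos (k*b)^2 := by
    by_cases hcase : j + 1 = m
    · have hbπ : b = π := by
        rw [hb]
        have hc : (j:ℝ) + 1 = (m:ℝ) := by
          rw [← hcase]; push_cast; ring
        rw [hc]
        field_simp
      rw [hbπ]
      exact cossq_pi m
    · have hj1m : (j:ℝ) + 1 ≤ (m:ℝ) - 1 := by
        have : j + 1 ≤ m - 1 := by omega
        have h2 : ((j+1:ℕ):ℝ) ≤ ((m-1:ℕ):ℝ) := by exact_mod_cast this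
        push_cast at h2
        rw [Nat.cast_sub hm1] at h2
        push_cast at h2
        linarith
      have hb2' : b ≤ π - π/m := by
        rw [hb, div_le_iff₀ hm0]
        have h1 : (π - π/m) * m = π * m - π := by field_simp
        rw [h1]
        nlinarith [hj1m]
      exact cossq_lb hm1 (hsin_low b hb1 hb2')
  -- continuity
  have hcont : ∀ e : Fin (m+1) → Bool, Continuous (F n m e) := by
    intro e
    unfold F Dker
    apply Continuous.sub
    · apply continuous_finset_sum
      intro k _
      exact Real.continuous_cos.comp (continuous_const.mul continuous_id)
    · apply continuous_finset_sum
      intro k _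
      exact Continuous.mul continuous_const
        (Real.continuous_cos.comp (continuous_const.mul continuous_id))
  -- epsilon bound
  have hst : (0:ℝ) < Real.sqrt t := Real.sqrt_pos.mpr ht0
  have h60 : 60/εp ≤ Real.sqrt t := by
    have h1 : ((60/εp)^2 : ℝ) ≤ (t:ℝ) := by
      calc ((60/εp)^2 : ℝ) ≤ (⌈(60/εp)^2⌉₊ : ℝ) := Nat.le_ceil _
        _ ≤ (t:ℝ) := by
            rw [htdef]
            push_cast
            linarith
    calc 60/εp = Real.sqrt ((60/εp)^2) := (Real.sqrt_sq (by positivity)).symm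
      _ ≤ Real.sqrt t := Real.sqrt_le_sqrt h1
  have hs2 : Real.sqrt 2 ≤ 10/7 := by
    rw [show (10/7:ℝ) = Real.sqrt ((10/7)^2) from (Real.sqrt_sq (by norm_num)).symm]
    apply Real.sqrt_le_sqrt
    norm_num
  have hεbound : 2*(21*Real.sqrt 2/Real.sqrt t) ≤ εp := by
    rw [show 2*(21*Real.sqrt 2/Real.sqrt t) = 42*Real.sqrt 2/Real.sqrt t by ring]
    rw [div_le_iff₀ hst]
    have h1 : εp * (60/εp) ≤ εp * Real.sqrt t := by
      apply mul_le_mul_of_nonneg_left h60 (le_of_lt hεp)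
    have h2 : εp * (60/εp) = 60 := by field_simp
    nlinarith [Real.sqrt_nonneg 2]
  -- apply the core lemma depending on the parity of j
  have hcore : (1/4 - 2*(21*Real.sqrt 2/Real.sqrt t)) * 2^(m+1)
      ≤ ∑ e : Fin (m + 1) → Bool,
          if ∃ z ∈ Set.Icc a b, F n m e z = 0 then (1 : ℝ) else 0 := by
    rcases Nat.even_or_odd j with hpar | hpar
    · -- j even : x = a, y = b
      have hIVT : ∀ e : Fin (m+1) → Bool, 0 < F n m e a → F n m e b < 0 →
          ∃ z ∈ Set.Icc a b, F n m e z = 0 := by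
        intro e h1 h2
        have hsub := intermediate_value_Icc' hab (hcont e).continuousOn
        have h0 : (0:ℝ) ∈ Set.Icc (F n m e b) (F n m e a) := ⟨le_of_lt h2, le_of_lt h1⟩
        obtain ⟨z, hz, hz0⟩ := hsub h0
        exact ⟨z, hz, hz0⟩
      exact main_core a b a b j (j+1) ht2 hmt hax hax2 hb1 hb2 hmxa hmxb
        hpar (Even.add_one hpar) hsa hsb hIVT
    · -- j odd : x = b, y = a
      have hIVT : ∀ e : Fin (m+1) → Bool, 0 < F n m e b → F n m e a < 0 →
          ∃ z ∈ Set.Icc a b, F n m e z = 0 := by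
        intro e h1 h2
        have hsub := intermediate_value_Icc hab (hcont e).continuousOn
        have h0 : (0:ℝ) ∈ Set.Icc (F n m e a) (F n m e b) := ⟨le_of_lt h2, le_of_lt h1⟩
        obtain ⟨z, hz, hz0⟩ := hsub h0
        exact ⟨z, hz, hz0⟩
      exact main_core a b b a (j+1) j ht2 hmt hb1 hb2 hax hax2 hmxb hmxa
        (Odd.add_one hpar) hpar hsb hsa hIVT
  -- finish
  have hpow : (0:ℝ) < 2^(m+1) := by positivity
  rw [le_div_iff₀ hpow]
  calc (1/4 - εp) * 2^(m+1)
      ≤ (1/4 - 2*(21*Real.sqrt 2/Real.sqrt t)) * 2^(m+1) := by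
        apply mul_le_mul_of_nonneg_right _ (le_of_lt hpow)
        linarith
    _ ≤ _ := hcore
end

section
/- Let δ ∈ (0, 1/4), let n be a natural number, and let I be an interval contained in [2^{15}·(δ n)^{-1}, π] of length |I| = δ/n. Let g be a {0,1}-cosine polynomial with deg(g) ≤ n and set f = D_n − g. If there exists a point x_0 ∈ I with |g'(x_0)| > 2^{7}·n·s(x_0) (i.e. I is not contained in E'_n(g)), then the number of zeros of f in I satisfies Z_I(f) ≤ (log 3n)/(log(1/δ)) + 1. -/
open Real

/-- `zeros f S` : the number of zeros of `f` in the set `S`. -/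
noncomputable def zeros (f : ℝ → ℝ) (S : Set ℝ) : ℕ := {x ∈ S | f x = 0}.ncard

/-- One MVT step: if `h` vanishes somewhere in `[a,b]` and `|h'| ≤ C` there, then
`|h| ≤ (b-a) * C` on `[a,b]`. -/
lemma one_step (h h' : ℝ → ℝ) (a b : ℝ)
    (hd : ∀ x, HasDerivAt h (h' x) x) (C : ℝ)
    (hC : ∀ x ∈ Set.Icc a b, |h' x| ≤ C)
    (z : ℝ) (hz : z ∈ Set.Icc a b) (h0 : h z = 0) :
    ∀ x ∈ Set.Icc a b, |h x| ≤ (b - a) * C := by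
  intro x hx
  have key : ‖h x - h z‖ ≤ C * ‖x - z‖ :=
    Convex.norm_image_sub_le_of_norm_hasDerivWithin_le
      (fun y hy => (hd y).hasDerivWithinAt) (fun y hy => hC y hy)
      (convex_Icc a b) hz hx
  have hC0 : 0 ≤ C := le_trans (abs_nonneg _) (hC z hz)
  have hxz : |x - z| ≤ b - a := by
    rw [abs_sub_le_iff]
    constructor <;> [skip; skip] <;> · obtain ⟨h1, h2⟩ := hx; obtain ⟨h3, h4⟩ := hz; linarith
  rw [h0, sub_zero] at key
  calc |h x| ≤ C * |x - z| := key
    _ ≤ C * (b - a) := by exact mul_le_mul_of_nonneg_left hxz hC0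
    _ = (b - a) * C := mul_comm _ _


/-- Rolle for finsets of zeros: if `h` is differentiable, vanishes on a finset `T` with
`N+1` elements, then `deriv h` has `N` distinct zeros strictly inside `[min T, max T]`. -/
lemma rolle_finset (h : ℝ → ℝ) (hd : Differentiable ℝ h) :
    ∀ (N : ℕ) (T : Finset ℝ) (hT : T.Nonempty), T.card = N + 1 →
    (∀ z ∈ T, h z = 0) →
    ∃ S : Finset ℝ, S.card = N ∧
      (∀ y ∈ S, deriv h y = 0 ∧ T.min' hT ≤ y ∧ y < T.max' hT) := by
  intro N
  induction N with
  | zero => intro T hT hcard hzero; exact ⟨∅, rfl, by simp⟩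
  | succ N ih =>
    intro T hT hcard hzero
    set m := T.max' hT with hm
    have hmT : m ∈ T := T.max'_mem hT
    set T₂ := T.erase m with hT₂
    have hcard₂ : T₂.card = N + 1 := by
      rw [hT₂, Finset.card_erase_of_mem hmT, hcard]; omega
    have hT₂ne : T₂.Nonempty := Finset.card_pos.mp (by omega)
    set m₂ := T₂.max' hT₂ne with hm₂
    have hm₂T₂ : m₂ ∈ T₂ := T₂.max'_mem hT₂ne
    have hm₂T : m₂ ∈ T := Finset.mem_of_mem_erase hm₂T₂
    have hm₂m : m₂ < m := by
      have hle : m₂ ≤ m := T.le_max' _ hm₂T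
      have hne : m₂ ≠ m := Finset.ne_of_mem_erase hm₂T₂
      exact lt_of_le_of_ne hle hne
    obtain ⟨S₂, hS₂card, hS₂⟩ := ih T₂ hT₂ne hcard₂ (fun z hz => hzero z (Finset.mem_of_mem_erase hz))
    obtain ⟨c, hcIoo, hcderiv⟩ := exists_deriv_eq_zero hm₂m (hd.continuous.continuousOn)
      (by rw [hzero m₂ hm₂T, hzero m hmT])
    have hcS₂ : c ∉ S₂ := by
      intro hc
      have := (hS₂ c hc).2.2
      rw [← hm₂] at this
      exact absurd hcIoo.1 (not_lt.mpr this.le)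
    refine ⟨insert c S₂, by rw [Finset.card_insert_of_notMem hcS₂, hS₂card], ?_⟩
    intro y hy
    have hminle : T.min' hT ≤ T₂.min' hT₂ne := T.min'_le _ (Finset.mem_of_mem_erase (T₂.min'_mem hT₂ne))
    have hminm₂ : T.min' hT ≤ m₂ := T.min'_le _ hm₂T
    rcases Finset.mem_insert.mp hy with rfl | hy
    · exact ⟨hcderiv, le_trans hminm₂ hcIoo.1.le, hcIoo.2⟩
    · obtain ⟨h1, h2, h3⟩ := hS₂ y hy
      exact ⟨h1, le_trans hminle h2, lt_trans h3 (lt_of_le_of_lt (by rw [hm₂]) hm₂m)⟩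

/-- Iterated bound: if `F 0` has at least `r` zeros in `[a,b]` and `|F r| ≤ M` on `[a,b]`,
then `|F 0| ≤ (b-a)^r * M` on `[a,b]`, where the family satisfies `(F j)' = F (j+1)`. -/
lemma chain_bound : ∀ (r : ℕ) (F : ℕ → ℝ → ℝ),
    (∀ j x, HasDerivAt (F j) (F (j+1) x) x) →
    ∀ a b : ℝ, a ≤ b → ∀ M, (∀ x ∈ Set.Icc a b, |F r x| ≤ M) →
    ∀ (T : Finset ℝ), (↑T : Set ℝ) ⊆ Set.Icc a b → (∀ z ∈ T, F 0 z = 0) → r ≤ T.card →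
    ∀ x ∈ Set.Icc a b, |F 0 x| ≤ (b - a) ^ r * M := by
  intro r
  induction r with
  | zero => intro F hF a b hab M hM T hTsub hTzero hcard x hx
            simpa using hM x hx
  | succ r ih =>
    intro F hF a b hab M hM T hTsub hTzero hcard x hx
    have hTne : T.Nonempty := Finset.card_pos.mp (by omega)
    have hdiff : Differentiable ℝ (F 0) := fun y => (hF 0 y).differentiableAt
    obtain ⟨S, hScard, hS⟩ := rolle_finset (F 0) hdiff (T.card - 1) T hTne (by omega) hTzero
    have hminmem : T.min' hTne ∈ Set.Icc a b := hTsub (T.min'_mem hTne)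
    have hmaxmem : T.max' hTne ∈ Set.Icc a b := hTsub (T.max'_mem hTne)
    have hSsub : (↑S : Set ℝ) ⊆ Set.Icc a b := by
      intro y hy
      obtain ⟨_, h2, h3⟩ := hS y hy
      exact ⟨le_trans hminmem.1 h2, le_trans h3.le hmaxmem.2⟩
    have hSzero : ∀ z ∈ S, F 1 z = 0 := by
      intro z hz
      have := (hS z hz).1
      rwa [(hF 0 z).deriv] at this
    have hbound1 : ∀ y ∈ Set.Icc a b, |F 1 y| ≤ (b - a) ^ r * M :=
      ih (fun j => F (j + 1)) (fun j x => hF (j + 1) x) a b hab M hM S hSsub hSzero (by omega)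
    have := one_step (F 0) (F 1) a b (hF 0) ((b - a) ^ r * M) hbound1
      (T.min' hTne) hminmem (hTzero _ (T.min'_mem hTne)) x hx
    calc |F 0 x| ≤ (b - a) * ((b - a) ^ r * M) := this
      _ = (b - a) ^ (r + 1) * M := by ring


lemma sum_sin_mul (x : ℝ) (m : ℕ) :
    (∑ k ∈ Finset.range m, Real.sin (k * x)) * (2 * Real.sin (x / 2))
      = Real.cos (x / 2) - Real.cos (m * x - x / 2) := by
  induction m with
  | zero => simp
  | succ m ih =>
    rw [Finset.sum_range_succ, add_mul, ih]
    have h1 : Real.cos ((m : ℝ) * x - x / 2) = Real.cos ((m : ℝ) * x) * Real.cos (x/2) + Real.sin ((m : ℝ) * x) * Real.sin (x/2) := by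
      rw [Real.cos_sub]
    have h2 : Real.cos (((m : ℕ) + 1 : ℕ) * x - x / 2) = Real.cos ((m : ℝ) * x + x / 2) := by
      push_cast; ring_nf
    rw [h2, Real.cos_add, h1]
    ring

lemma sum_sin_abs_le (x : ℝ) (hx : 0 < Real.sin (x / 2)) (m : ℕ) :
    |∑ k ∈ Finset.range m, Real.sin (k * x)| ≤ 1 / Real.sin (x / 2) := by
  set S := ∑ k ∈ Finset.range m, Real.sin (k * x) with hS
  have h1 : |S * (2 * Real.sin (x / 2))| ≤ 2 := by
    rw [sum_sin_mul]
    calc |Real.cos (x / 2) - Real.cos (m * x - x / 2)| ≤ |Real.cos (x/2)| + |Real.cos ((m:ℝ) * x - x/2)| := abs_sub _ _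
      _ ≤ 1 + 1 := add_le_add (Real.abs_cos_le_one _) (Real.abs_cos_le_one _)
      _ = 2 := by norm_num
  rw [abs_mul, abs_of_pos (by linarith : (0:ℝ) < 2 * Real.sin (x/2))] at h1
  rw [le_div_iff₀ hx]
  nlinarith [abs_nonneg S]

/-- Abel-summation bound: `|∑_{k=0}^{n} k sin(kx)| ≤ 2 n / sin(x/2)`. -/
lemma weighted_sum_sin_abs_le (x : ℝ) (hx : 0 < Real.sin (x / 2)) (n : ℕ) :
    |∑ k ∈ Finset.range (n + 1), (k : ℝ) * Real.sin (k * x)| ≤ 2 * n / Real.sin (x / 2) := by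
  set S : ℕ → ℝ := fun m => ∑ k ∈ Finset.range m, Real.sin (k * x) with hSdef
  have key : ∀ N : ℕ, ∑ k ∈ Finset.range (N + 1), (k : ℝ) * Real.sin (k * x)
      = N * S (N + 1) - ∑ k ∈ Finset.range N, S (k + 1) := by
    intro N
    induction N with
    | zero => simp [hSdef]
    | succ N ih =>
      rw [Finset.sum_range_succ, ih, Finset.sum_range_succ]
      have hstep : Real.sin ((N + 1 : ℕ) * x) = S (N + 2) - S (N + 1) := by
        simp only [hSdef, Finset.sum_range_succ]
        push_cast
        ring
      rw [hstep]
      push_cast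
      ring
  rw [key n]
  have hSb : ∀ m, |S m| ≤ 1 / Real.sin (x / 2) := fun m => sum_sin_abs_le x hx m
  have h2 : |∑ k ∈ Finset.range n, S (k + 1)| ≤ n * (1 / Real.sin (x / 2)) := by
    calc |∑ k ∈ Finset.range n, S (k + 1)| ≤ ∑ k ∈ Finset.range n, |S (k + 1)| :=
          Finset.abs_sum_le_sum_abs _ _
      _ ≤ ∑ k ∈ Finset.range n, (1 / Real.sin (x / 2)) := Finset.sum_le_sum (fun k _ => hSb _)
      _ = n * (1 / Real.sin (x / 2)) := by rw [Finset.sum_const, Finset.card_range]; ring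
  have h1 : |(n : ℝ) * S (n + 1)| ≤ n * (1 / Real.sin (x / 2)) := by
    rw [abs_mul, abs_of_nonneg (Nat.cast_nonneg n : (0:ℝ) ≤ n)]
    exact mul_le_mul_of_nonneg_left (hSb _) (Nat.cast_nonneg n)
  calc |(n : ℝ) * S (n + 1) - ∑ k ∈ Finset.range n, S (k + 1)|
      ≤ |(n : ℝ) * S (n + 1)| + |∑ k ∈ Finset.range n, S (k + 1)| := abs_sub _ _
    _ ≤ n * (1 / Real.sin (x / 2)) + n * (1 / Real.sin (x / 2)) := add_le_add h1 h2
    _ = 2 * n / Real.sin (x / 2) := by ring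

set_option maxHeartbeats 1000000 in
/-- For `δ ∈ (0, 1/4)`, let `I = [a,b] ⊆ [2¹⁵(δn)⁻¹, π]` be an interval of length `δ/n`,
let `g` be a `{0,1}`-cosine polynomial with `deg g ≤ n` and let `f = D_n - g`.  If there
is `x₀ ∈ I` with `|g'(x₀)| > 2⁷ n s(x₀)` (i.e. `I ⊄ E'_n(g)`), then
`Z_I(f) ≤ log(3n)/log(1/δ) + 1`. -/
theorem stmt16 (n : ℕ) (δ : ℝ) (hδ : δ ∈ Set.Ioo (0 : ℝ) (1 / 4))
    (a b : ℝ) (ha : (2 : ℝ) ^ (15 : ℕ) * (δ * n)⁻¹ ≤ a) (hab : a ≤ b) (hb : b ≤ π)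
    (hlen : b - a = δ / n)
    (ε : ℕ → ℝ) (hε : ∀ k, ε k = 0 ∨ ε k = 1)
    (g f : ℝ → ℝ)
    (hg : g = fun x => ∑ k ∈ Finset.range (n + 1), ε k * Real.cos (k * x))
    (hf : f = fun x => Dker n x - g x)
    (hx₀ : ∃ x₀ ∈ Set.Icc a b, 2 ^ (7 : ℕ) * (n : ℝ) * sfun x₀ < |deriv g x₀|) :
    (zeros f (Set.Icc a b) : ℝ) ≤ Real.log (3 * n) / Real.log (1 / δ) + 1 := by
  obtain ⟨hδ0, hδ4⟩ := hδ
  obtain ⟨x₀, hx₀mem, hx₀big⟩ := hx₀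
  -- eliminate n = 0
  rcases Nat.eq_zero_or_pos n with rfl | hn
  · have hg0 : g = fun _ => ε 0 := by rw [hg]; funext x; simp
    rw [hg0] at hx₀big
    simp at hx₀big
  have hn1 : (1 : ℝ) ≤ (n : ℝ) := by exact_mod_cast hn
  have hn0 : (0 : ℝ) < (n : ℝ) := by linarith
  -- positivity of logs
  have h1δ : (1 : ℝ) < 1 / δ := by rw [lt_div_iff₀ hδ0]; linarith
  have hlogδ : 0 < Real.log (1 / δ) := Real.log_pos h1δ
  have hlog3n : 0 ≤ Real.log (3 * n) := Real.log_nonneg (by linarith)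
  have hRHS0 : 0 ≤ Real.log (3 * n) / Real.log (1 / δ) := div_nonneg hlog3n hlogδ.le
  -- geometry of the interval
  have ha0 : 0 < a := lt_of_lt_of_le (by positivity) ha
  have hx₀pos : 0 < x₀ := lt_of_lt_of_le ha0 hx₀mem.1
  have hx₀π : x₀ ≤ π := le_trans hx₀mem.2 hb
  have hsinpos : 0 < Real.sin (x₀ / 2) :=
    Real.sin_pos_of_pos_of_lt_pi (by linarith) (by nlinarith [Real.pi_pos])
  have hsfpos : 0 < sfun x₀ := by rw [sfun]; positivity
  have hsinle : 2 * Real.sin (x₀ / 2) ≤ x₀ := by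
    have := Real.sin_le (by linarith : (0:ℝ) ≤ x₀ / 2)
    linarith
  have hsf_ge : π⁻¹ ≤ sfun x₀ := by
    rw [sfun]
    exact inv_anti₀ (by linarith) (by linarith)
  -- the derivative family
  set c : ℕ → ℝ := fun k => 1 - ε k with hc
  set F : ℕ → ℝ → ℝ :=
    fun j x => ∑ k ∈ Finset.range (n + 1), c k * (k : ℝ) ^ j * Real.cos (k * x + j * (π / 2))
    with hF
  have hFd : ∀ j x, HasDerivAt (F j) (F (j + 1) x) x := by
    intro j x
    have hterm : ∀ k ∈ Finset.range (n + 1),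
        HasDerivAt (fun y => c k * (k : ℝ) ^ j * Real.cos (k * y + j * (π / 2)))
          (c k * (k : ℝ) ^ (j + 1) * Real.cos (k * x + (j + 1 : ℕ) * (π / 2))) x := by
      intro k _
      have h1 : HasDerivAt (fun y : ℝ => (k : ℝ) * y + j * (π / 2)) (k : ℝ) x := by
        simpa using ((hasDerivAt_id x).const_mul (k : ℝ)).add_const ((j : ℝ) * (π / 2))
      have h2 := (Real.hasDerivAt_cos ((k : ℝ) * x + j * (π / 2))).comp x h1
      have h3 := h2.const_mul (c k * (k : ℝ) ^ j)
      refine h3.congr_deriv ?_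
      rw [show ((k : ℝ) * x + ((j + 1 : ℕ) : ℝ) * (π / 2)) =
          ((k : ℝ) * x + (j : ℝ) * (π / 2)) + π / 2 by push_cast; ring,
        Real.cos_add_pi_div_two]
      push_cast; ring
    exact HasDerivAt.fun_sum hterm
  have hF0 : ∀ x, F 0 x = f x := by
    intro x
    rw [hf, hF]
    simp only [pow_zero, Nat.cast_zero, zero_mul, add_zero, mul_one]
    rw [Dker, hg, ← Finset.sum_sub_distrib]
    refine Finset.sum_congr rfl fun k _ => ?_
    rw [hc]; ring
  -- the value of F 1 at x₀ and deriv g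
  have hgd : HasDerivAt g (∑ k ∈ Finset.range (n + 1),
      ε k * (-Real.sin ((k : ℝ) * x₀) * k)) x₀ := by
    rw [hg]
    apply HasDerivAt.fun_sum
    intro k _
    have h1 : HasDerivAt (fun y : ℝ => (k : ℝ) * y) (k : ℝ) x₀ := by
      simpa using (hasDerivAt_id x₀).const_mul (k : ℝ)
    exact ((Real.hasDerivAt_cos ((k : ℝ) * x₀)).comp x₀ h1).const_mul (ε k)
  have hgderiv : deriv g x₀ = ∑ k ∈ Finset.range (n + 1),
      ε k * (-Real.sin ((k : ℝ) * x₀) * k) := hgd.deriv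
  set Dsum : ℝ := ∑ k ∈ Finset.range (n + 1), (k : ℝ) * Real.sin (k * x₀) with hDsum
  have hF1val : F 1 x₀ = -Dsum - deriv g x₀ := by
    rw [hgderiv, hF, hDsum, ← Finset.sum_neg_distrib, ← Finset.sum_sub_distrib]
    refine Finset.sum_congr rfl fun k _ => ?_
    rw [show ((k : ℝ) * x₀ + ((1 : ℕ) : ℝ) * (π / 2)) = (k : ℝ) * x₀ + π / 2 by push_cast; ring,
      Real.cos_add_pi_div_two, hc]
    ring
  have hDbound : |Dsum| ≤ 4 * n * sfun x₀ := by
    have := weighted_sum_sin_abs_le x₀ hsinpos n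
    rw [← hDsum] at this
    have heq : 2 * (n : ℝ) / Real.sin (x₀ / 2) = 4 * n * sfun x₀ := by
      rw [sfun]; field_simp; ring
    linarith [this, heq ▸ this]
  have hF1low : 39 * (n : ℝ) ≤ |F 1 x₀| := by
    have h1 : |deriv g x₀| ≤ |Dsum| + |F 1 x₀| := by
      have : deriv g x₀ = -Dsum - F 1 x₀ := by rw [hF1val]; ring
      rw [this]
      calc |(-Dsum - F 1 x₀)| ≤ |(-Dsum)| + |F 1 x₀| := abs_sub _ _
        _ = |Dsum| + |F 1 x₀| := by rw [abs_neg]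
    have h2 : 124 * (n : ℝ) * sfun x₀ ≤ |F 1 x₀| := by
      have : (2:ℝ) ^ (7:ℕ) * n * sfun x₀ = 128 * n * sfun x₀ := by norm_num
      rw [this] at hx₀big
      linarith
    have h3 : (3.15 : ℝ)⁻¹ ≤ π⁻¹ := inv_anti₀ Real.pi_pos Real.pi_lt_d2.le
    have h4 : (3.15 : ℝ)⁻¹ ≤ sfun x₀ := le_trans h3 hsf_ge
    nlinarith [h2, h4, hn0]
  -- zero counting
  simp only [zeros]
  set Z : Set ℝ := {x ∈ Set.Icc a b | f x = 0} with hZ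
  by_cases hfin : Z.Finite
  case neg =>
    rw [Set.Infinite.ncard (by exact hfin)]
    push_cast
    linarith
  case pos =>
    set T : Finset ℝ := hfin.toFinset with hT
    have hcard : Z.ncard = T.card := Set.ncard_eq_toFinset_card Z hfin
    rw [hcard]
    set m : ℕ := T.card with hm
    rcases le_or_gt m 1 with hm1 | hm2
    · have : (m : ℝ) ≤ 1 := by exact_mod_cast hm1
      linarith
    -- main case : m ≥ 2
    have hmemT : ∀ z ∈ T, z ∈ Set.Icc a b ∧ f z = 0 := by
      intro z hz
      rw [hT, Set.Finite.mem_toFinset] at hz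
      exact hz
    have hTne : T.Nonempty := Finset.card_pos.mp (by omega)
    have hdiff : Differentiable ℝ (F 0) := fun y => (hFd 0 y).differentiableAt
    obtain ⟨S, hScard, hS⟩ := rolle_finset (F 0) hdiff (m - 1) T hTne (by omega)
      (fun z hz => by rw [hF0]; exact (hmemT z hz).2)
    have hminmem : T.min' hTne ∈ Set.Icc a b := (hmemT _ (T.min'_mem hTne)).1
    have hmaxmem : T.max' hTne ∈ Set.Icc a b := (hmemT _ (T.max'_mem hTne)).1
    have hSsub : (↑S : Set ℝ) ⊆ Set.Icc a b := by
      intro y hy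
      obtain ⟨_, h2, h3⟩ := hS y hy
      exact ⟨le_trans hminmem.1 h2, le_trans h3.le hmaxmem.2⟩
    have hSzero : ∀ z ∈ S, F 1 z = 0 := by
      intro z hz
      have h := (hS z hz).1
      rwa [(hFd 0 z).deriv] at h
    -- bound for the m-th derivative
    set M : ℝ := ((n : ℝ) + 1) * (n : ℝ) ^ m with hM
    have hMb : ∀ x ∈ Set.Icc a b, |F m x| ≤ M := by
      intro x _
      rw [hF]
      calc |∑ k ∈ Finset.range (n + 1), c k * (k : ℝ) ^ m * Real.cos (k * x + m * (π / 2))|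
          ≤ ∑ k ∈ Finset.range (n + 1), |c k * (k : ℝ) ^ m * Real.cos (k * x + m * (π / 2))| :=
            Finset.abs_sum_le_sum_abs _ _
        _ ≤ ∑ k ∈ Finset.range (n + 1), (n : ℝ) ^ m := by
            refine Finset.sum_le_sum fun k hk => ?_
            have hkn : (k : ℝ) ≤ (n : ℝ) := by
              exact_mod_cast Nat.lt_succ_iff.mp (Finset.mem_range.mp hk)
            have hck : |c k| ≤ 1 := by
              rcases hε k with h | h <;> simp [hc, h]
            calc |c k * (k : ℝ) ^ m * Real.cos (k * x + m * (π / 2))|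
                = |c k| * |(k : ℝ) ^ m| * |Real.cos (k * x + m * (π / 2))| := by
                  rw [abs_mul, abs_mul]
              _ ≤ 1 * (n : ℝ) ^ m * 1 := by
                  refine mul_le_mul (mul_le_mul hck ?_ (abs_nonneg _) zero_le_one)
                    (Real.abs_cos_le_one _) (abs_nonneg _) (by positivity)
                  rw [abs_pow, abs_of_nonneg (Nat.cast_nonneg k)]
                  exact pow_le_pow_left₀ (Nat.cast_nonneg k) hkn m
              _ = (n : ℝ) ^ m := by ring
        _ = ((n : ℝ) + 1) * (n : ℝ) ^ m := by
            rw [Finset.sum_const, Finset.card_range, nsmul_eq_mul]; push_cast; ring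
    -- apply the chain bound to the family shifted by one
    have hchain := chain_bound (m - 1) (fun j => F (j + 1)) (fun j x => hFd (j + 1) x)
      a b hab M (by
        intro x hx
        have e : m - 1 + 1 = m := by omega
        show |F (m - 1 + 1) x| ≤ M
        rw [e]
        exact hMb x hx) S hSsub hSzero (by omega) x₀ hx₀mem
    -- numeric conclusion
    set r : ℕ := m - 1 with hr
    have hrm : m = r + 1 := by omega
    rw [hlen] at hchain
    have hnr : (n : ℝ) ^ r ≠ 0 := by positivity
    have hcalc : (δ / n) ^ r * M = δ ^ r * (((n : ℝ) + 1) * n) := by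
      rw [hM, hrm, pow_succ, div_pow]
      field_simp
    rw [hcalc] at hchain
    have h5 : 39 * (n : ℝ) ≤ δ ^ r * (((n : ℝ) + 1) * n) := le_trans hF1low hchain
    have hkey : (1 : ℝ) ≤ 3 * n * δ ^ r := by
      have hδr : 0 < δ ^ r := by positivity
      nlinarith [h5, hn1, hδr, hn0]
    have hinv : (1 / δ) ^ r ≤ 3 * n := by
      rw [div_pow, one_pow, div_le_iff₀ (by positivity : (0:ℝ) < δ ^ r)]
      linarith
    have hlog : (r : ℝ) * Real.log (1 / δ) ≤ Real.log (3 * n) := by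
      rw [← Real.log_pow]
      exact Real.log_le_log (by positivity) hinv
    have hfin2 : (r : ℝ) ≤ Real.log (3 * n) / Real.log (1 / δ) :=
      (le_div_iff₀ hlogδ).mpr hlog
    have : (m : ℝ) = (r : ℝ) + 1 := by rw [hrm]; push_cast; ring
    rw [this]
    linarith
end

section
/- There exist an absolute constant C > 0 and a natural number m_0 such that for all m ≥ m_0 the following holds. Let x ∈ ℝ satisfy d(x, πℤ) ≥ 2^{8}/m, where d(x, πℤ) = inf_{k ∈ ℤ} |x − πk|, let g(x) = ∑_{k=0}^{m} ε_k cos(kx), where ε_0, …, ε_m are independent random variables taking values 0 and 1 each with probability 1/2, and let B ⊆ ℝ² be an open ball of diameter 2^{-5}. Then P((|g(x)|, |m^{-1} g'(x)|) ∈ B) ≤ C/m. -/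
open Real

/-- The random polynomial `g ~ G_m` determined by the Bernoulli outcomes
`e : Fin (m+1) → Bool`:  `g(x) = ∑_{k=0}^m ε_k cos(kx)`. -/
noncomputable def gB (m : ℕ) (e : Fin (m + 1) → Bool) : ℝ → ℝ :=
  fun x => ∑ k : Fin (m + 1), (if e k then (1 : ℝ) else 0) * Real.cos ((k : ℕ) * x)


-- cos u ≤ exp(-u^2/4) for |u| ≤ 1
lemma cos_le_exp_quarter {u : ℝ} (hu : |u| ≤ 1) : Real.cos u ≤ Real.exp (-(u^2)/4) := by
  have h := Real.cos_bound hu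
  have h2 : Real.cos u ≤ 1 - u^2/2 + |u|^4 * (5/96) := by
    have := abs_le.1 h
    linarith [this.2]
  have h3 : |u|^4 = u^4 := by
    rw [show (4:ℕ) = 2*2 from rfl, pow_mul, pow_mul, sq_abs]
  rw [h3] at h2
  have hu2 : u^2 ≤ 1 := by nlinarith [sq_abs u, abs_nonneg u]
  have h4 : Real.cos u ≤ -(u^2)/4 + 1 := by nlinarith [sq_nonneg u]
  exact h4.trans (Real.add_one_le_exp _)

-- |cos (c/2)| ≤ exp (-(c^2)/16) for |c| ≤ 2
lemma abs_cos_half_le {c : ℝ} (hc : |c| ≤ 2) : |Real.cos (c/2)| ≤ Real.exp (-(c^2)/16) := by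
  have h1 : |c/2| ≤ 1 := by rw [abs_div]; simp only [abs_two]; linarith
  have h0 : 0 ≤ Real.cos (c/2) := by
    apply Real.cos_nonneg_of_mem_Icc
    have := abs_le.1 h1
    constructor
    · nlinarith [Real.pi_gt_three]
    · nlinarith [Real.pi_gt_three]
  rw [abs_of_nonneg h0]
  have := cos_le_exp_quarter h1
  convert this using 2
  ring


lemma sum_exp_prod (n : ℕ) (a : Fin n → ℝ) :
    ∑ e : Fin n → Bool, ∏ k, (if e k then Complex.exp (a k * Complex.I) else 1)
      = ∏ k, (1 + Complex.exp (a k * Complex.I)) := by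
  rw [show (fun k => (1 + Complex.exp (a k * Complex.I))) = fun k => ∑ j : Bool,
      (if j then Complex.exp (a k * Complex.I) else 1) from ?_]
  · rw [Fintype.prod_sum]
  · funext k
    simp [Fintype.sum_bool]
    ring

lemma abs_one_add_exp (t : ℝ) : ‖1 + Complex.exp (t * Complex.I)‖ = 2 * |Real.cos (t/2)| := by
  have hre : (1 + Complex.exp (t * Complex.I)).re = 1 + Real.cos t := by
    simp [Complex.exp_ofReal_mul_I_re]
  have him : (1 + Complex.exp (t * Complex.I)).im = Real.sin t := by
    simp [Complex.exp_ofReal_mul_I_im]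
  rw [Complex.norm_def, Complex.normSq_apply, hre, him]
  have h : (1 + Real.cos t) * (1 + Real.cos t) + Real.sin t * Real.sin t
      = (2 * |Real.cos (t/2)|)^2 := by
    have h1 : Real.cos (t/2)^2 = 1/2 + Real.cos t / 2 := by
      have := Real.cos_sq (t/2)
      rwa [show 2 * (t/2) = t by ring] at this
    have h2 : Real.sin t ^2 + Real.cos t ^2 = 1 := Real.sin_sq_add_cos_sq t
    have h3 : |Real.cos (t/2)|^2 = Real.cos (t/2)^2 := sq_abs _
    nlinarith [h1, h2, h3]
  rw [h, Real.sqrt_sq (by positivity)]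

lemma charBound (n : ℕ) (a : Fin n → ℝ) (b : ℝ) :
    |∑ e : Fin n → Bool, Real.cos (b + ∑ k, (if e k then a k else 0))| ≤
      2^n * ∏ k, |Real.cos (a k / 2)| := by
  have key : ∑ e : Fin n → Bool, Complex.exp (↑(b + ∑ k, (if e k then a k else 0)) * Complex.I)
      = Complex.exp (b * Complex.I) * ∏ k, (1 + Complex.exp (a k * Complex.I)) := by
    rw [← sum_exp_prod n a, Finset.mul_sum]
    apply Finset.sum_congr rfl
    intro e _
    push_cast
    rw [add_mul, Complex.exp_add]
    congr 1
    rw [Finset.sum_mul, Complex.exp_sum]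
    apply Finset.prod_congr rfl
    intro k _
    by_cases h : e k <;> simp [h]
  have hre : ∀ e : Fin n → Bool, Real.cos (b + ∑ k, (if e k then a k else 0))
      = (Complex.exp (↑(b + ∑ k, (if e k then a k else 0)) * Complex.I)).re := by
    intro e; rw [Complex.exp_ofReal_mul_I_re]
  calc |∑ e : Fin n → Bool, Real.cos (b + ∑ k, (if e k then a k else 0))|
      = |(∑ e : Fin n → Bool, Complex.exp (↑(b + ∑ k, (if e k then a k else 0)) * Complex.I)).re| := by
        rw [Complex.re_sum]
        congr 1
        exact Finset.sum_congr rfl (fun e _ => hre e)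
    _ ≤ ‖∑ e : Fin n → Bool, Complex.exp (↑(b + ∑ k, (if e k then a k else 0)) * Complex.I)‖ :=
        Complex.abs_re_le_norm _
    _ = ‖Complex.exp (b * Complex.I)‖ * ‖∏ k, (1 + Complex.exp (a k * Complex.I))‖ := by
        rw [key, norm_mul]
    _ = ∏ k, (2 * |Real.cos (a k / 2)|) := by
        rw [Complex.norm_exp_ofReal_mul_I, one_mul, norm_prod]
        exact Finset.prod_congr rfl (fun k _ => abs_one_add_exp (a k))
    _ = 2^n * ∏ k, |Real.cos (a k / 2)| := by
        rw [Finset.prod_mul_distrib, Finset.prod_const]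
        simp


noncomputable def Fj (t : ℝ) : ℝ := ∫ ξ in (-1:ℝ)..1, (1 - |ξ|) * Real.cos (ξ * t)

lemma Fj_half (t : ℝ) (ht : t ≠ 0) :
    ∫ ξ in (0:ℝ)..1, (1 - ξ) * Real.cos (ξ * t) = (1 - Real.cos t)/t^2 := by
  have := intervalIntegral.integral_eq_sub_of_hasDerivAt
    (f := fun ξ => (1 - ξ) * Real.sin (ξ * t)/t - Real.cos (ξ * t)/t^2)
    (f' := fun ξ => (1 - ξ) * Real.cos (ξ * t)) (a := (0:ℝ)) (b := 1)
    ?_ ?_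
  · rw [this]
    simp
    field_simp
    ring
  · intro ξ _
    have h1 : HasDerivAt (fun ξ : ℝ => ξ * t) t ξ := by
      simpa using (hasDerivAt_id ξ).mul_const t
    have hsin : HasDerivAt (fun ξ : ℝ => Real.sin (ξ * t)) (Real.cos (ξ * t) * t) ξ := h1.sin
    have hcos : HasDerivAt (fun ξ : ℝ => Real.cos (ξ * t)) (-Real.sin (ξ * t) * t) ξ := h1.cos
    have hsub : HasDerivAt (fun ξ : ℝ => (1 - ξ)) (-1) ξ := by
      simpa using (hasDerivAt_id ξ).const_sub 1
    have h2 : HasDerivAt (fun ξ : ℝ => (1 - ξ) * Real.sin (ξ * t))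
        ((-1) * Real.sin (ξ * t) + (1 - ξ) * (Real.cos (ξ * t) * t)) ξ := hsub.mul hsin
    have h3 := (h2.div_const t).sub (hcos.div_const (t^2))
    convert h3 using 1
    · rfl
    field_simp
    ring
  · exact (Continuous.intervalIntegrable (by continuity) _ _)

lemma Fj_eq (t : ℝ) (ht : t ≠ 0) : Fj t = 2 * (1 - Real.cos t)/t^2 := by
  have hcont : Continuous (fun ξ : ℝ => (1 - |ξ|) * Real.cos (ξ * t)) := by continuity
  have hsplit : Fj t = (∫ ξ in (-1:ℝ)..0, (1 - |ξ|) * Real.cos (ξ * t))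
      + ∫ ξ in (0:ℝ)..1, (1 - |ξ|) * Real.cos (ξ * t) := by
    rw [Fj, ← intervalIntegral.integral_add_adjacent_intervals
      (hcont.intervalIntegrable _ _) (hcont.intervalIntegrable _ _)]
  have hneg : (∫ ξ in (-1:ℝ)..0, (1 - |ξ|) * Real.cos (ξ * t))
      = ∫ ξ in (0:ℝ)..1, (1 - |ξ|) * Real.cos (ξ * t) := by
    rw [show (∫ ξ in (0:ℝ)..1, (1 - |ξ|) * Real.cos (ξ * t))
        = ∫ ξ in (0:ℝ)..1, (1 - |(-ξ)|) * Real.cos ((-ξ) * t) from ?_]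
    · rw [intervalIntegral.integral_comp_neg (fun ξ => (1 - |ξ|) * Real.cos (ξ * t))]
      norm_num
    · apply intervalIntegral.integral_congr
      intro ξ _
      simp only [abs_neg, neg_mul, Real.cos_neg]
  have heq : (∫ ξ in (0:ℝ)..1, (1 - |ξ|) * Real.cos (ξ * t))
      = ∫ ξ in (0:ℝ)..1, (1 - ξ) * Real.cos (ξ * t) := by
    apply intervalIntegral.integral_congr
    intro ξ hξ
    rw [Set.uIcc_of_le (by norm_num : (0:ℝ) ≤ 1)] at hξ
    simp only [abs_of_nonneg hξ.1]
  rw [hsplit, hneg, heq, Fj_half t ht]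
  ring

lemma Fj_zero : Fj 0 = 1 := by
  have : Fj 0 = (∫ ξ in (-1:ℝ)..0, (1 - |ξ|)) + ∫ ξ in (0:ℝ)..1, (1 - |ξ|) := by
    rw [Fj]
    simp only [mul_zero, Real.cos_zero, mul_one]
    rw [← intervalIntegral.integral_add_adjacent_intervals
      ((Continuous.intervalIntegrable (by continuity) _ _))
      ((Continuous.intervalIntegrable (by continuity) _ _))]
  rw [this]
  have h1 : (∫ ξ in (0:ℝ)..1, (1 - |ξ|)) = (∫ ξ in (0:ℝ)..1, (1 - ξ)) := by
    apply intervalIntegral.integral_congr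
    intro ξ hξ
    rw [Set.uIcc_of_le (by norm_num : (0:ℝ) ≤ 1)] at hξ
    simp only [abs_of_nonneg hξ.1]
  have h2 : (∫ ξ in (-1:ℝ)..0, (1 - |ξ|)) = (∫ ξ in (-1:ℝ)..0, (1 + ξ)) := by
    apply intervalIntegral.integral_congr
    intro ξ hξ
    rw [Set.uIcc_of_le (by norm_num : (-1:ℝ) ≤ 0)] at hξ
    simp only [abs_of_nonpos hξ.2]
    ring
  rw [h1, h2]
  rw [intervalIntegral.integral_add intervalIntegrable_const (Continuous.intervalIntegrable (by continuity) _ _),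
      intervalIntegral.integral_sub intervalIntegrable_const (Continuous.intervalIntegrable (by continuity) _ _)]
  simp [integral_id]
  norm_num

lemma Fj_nonneg (t : ℝ) : 0 ≤ Fj t := by
  by_cases ht : t = 0
  · rw [ht, Fj_zero]; norm_num
  · rw [Fj_eq t ht]
    have h := Real.cos_le_one t
    have h2 : 0 ≤ 1 - Real.cos t := by linarith
    positivity

lemma Fj_ge_half {t : ℝ} (ht : |t| ≤ 1/64) : 1/2 ≤ Fj t := by
  by_cases h0 : t = 0
  · rw [h0, Fj_zero]; norm_num
  · rw [Fj_eq t h0]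
    have h1 : |t| ≤ 1 := le_trans ht (by norm_num)
    have := Real.cos_bound h1
    have h2 : Real.cos t ≤ 1 - t^2/2 + |t|^4*(5/96) := by
      have := abs_le.1 this; linarith [this.2]
    have h3 : |t|^4 = t^4 := by
      rw [show (4:ℕ) = 2*2 from rfl, pow_mul, pow_mul, sq_abs]
    rw [h3] at h2
    have ht2 : t^2 ≤ 1 := by nlinarith [sq_abs t, abs_nonneg t]
    have htpos : 0 < t^2 := by positivity
    rw [le_div_iff₀ htpos]
    nlinarith [sq_nonneg t]

lemma core (n : ℕ) (a b : Fin n → ℝ) (ha : ∀ k, |a k| ≤ 1) (hb : ∀ k, |b k| ≤ 1)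
    (R : ℝ) (hR : 0 < R)
    (hquad : ∀ s t : ℝ, R * (s^2 + t^2) ≤ ∑ k, (s * a k + t * b k)^2)
    (w1 w2 : ℝ) :
    ∑ e : Fin n → Bool,
      Fj ((∑ k, if e k then a k else 0) - w1) * Fj ((∑ k, if e k then b k else 0) - w2)
      ≤ 2^n * (16 * π / R) := by
  set A : (Fin n → Bool) → ℝ := fun e => (∑ k, if e k then a k else 0) - w1 with hA
  set B : (Fin n → Bool) → ℝ := fun e => (∑ k, if e k then b k else 0) - w2 with hB
  -- linear expansion
  have hlin : ∀ (s t : ℝ) (e : Fin n → Bool),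
      s * A e + t * B e
        = (-(s*w1) - t*w2) + ∑ k, (if e k then s * a k + t * b k else 0) := by
    intro s t e
    have h : ∑ k, (if e k then s * a k + t * b k else 0)
        = s * (∑ k, if e k then a k else 0) + t * (∑ k, if e k then b k else 0) := by
      rw [Finset.mul_sum, Finset.mul_sum, ← Finset.sum_add_distrib]
      apply Finset.sum_congr rfl
      intro k _
      by_cases h : e k <;> simp [h]
    rw [h, hA, hB]
    ring
  -- character sum bound
  have hcb : ∀ s t : ℝ, |s| ≤ 1 → |t| ≤ 1 →
      |∑ e : Fin n → Bool, Real.cos (s * A e + t * B e)|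
        ≤ 2^n * Real.exp (-(R/16) * (s^2 + t^2)) := by
    intro s t hs ht
    have hrw : ∀ e : Fin n → Bool, Real.cos (s * A e + t * B e)
        = Real.cos ((-(s*w1) - t*w2) + ∑ k, (if e k then s * a k + t * b k else 0)) := by
      intro e; rw [hlin]
    simp only [hrw]
    refine (charBound n (fun k => s * a k + t * b k) _).trans ?_
    have hprod : (∏ k, |Real.cos ((s * a k + t * b k) / 2)|)
        ≤ ∏ k, Real.exp (-((s * a k + t * b k)^2)/16) := by
      apply Finset.prod_le_prod
      · intro k _; exact abs_nonneg _
      · intro k _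
        apply abs_cos_half_le
        calc |s * a k + t * b k| ≤ |s * a k| + |t * b k| := abs_add_le _ _
          _ = |s| * |a k| + |t| * |b k| := by rw [abs_mul, abs_mul]
          _ ≤ 1 * 1 + 1 * 1 := by
              gcongr
              · exact ha k
              · exact hb k
          _ = 2 := by norm_num
    have hexp : (∏ k, Real.exp (-((s * a k + t * b k)^2)/16))
        = Real.exp (∑ k, -((s * a k + t * b k)^2)/16) := by
      rw [← Real.exp_sum]
    have hsum : (∑ k, -((s * a k + t * b k)^2)/16) ≤ -(R/16) * (s^2 + t^2) := by
      have := hquad s t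
      rw [show (∑ k, -((s * a k + t * b k)^2)/16)
          = -(∑ k, (s * a k + t * b k)^2)/16 from ?_]
      · linarith
      · rw [← Finset.sum_div, ← Finset.sum_neg_distrib]
    apply mul_le_mul_of_nonneg_left _ (by positivity)
    exact hprod.trans (le_of_eq_of_le hexp (Real.exp_le_exp.2 hsum))
  -- product-to-sum and key pointwise bound
  have key : ∀ ξ1 ξ2 : ℝ, |ξ1| ≤ 1 → |ξ2| ≤ 1 →
      ∑ e : Fin n → Bool, Real.cos (ξ1 * A e) * Real.cos (ξ2 * B e)
        ≤ 2^n * Real.exp (-(R/16) * (ξ1^2 + ξ2^2)) := by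
    intro ξ1 ξ2 h1 h2
    have hpc : ∀ e : Fin n → Bool, Real.cos (ξ1 * A e) * Real.cos (ξ2 * B e)
        = (Real.cos (ξ1 * A e + ξ2 * B e) + Real.cos (ξ1 * A e + (-ξ2) * B e))/2 := by
      intro e
      rw [show ξ1 * A e + (-ξ2) * B e = ξ1 * A e - ξ2 * B e by ring,
        Real.cos_add, Real.cos_sub]
      ring
    simp only [hpc]
    rw [← Finset.sum_div, Finset.sum_add_distrib]
    have b1 := (abs_le.1 (hcb ξ1 ξ2 h1 h2)).2
    have b2 := (abs_le.1 (hcb ξ1 (-ξ2) h1 (by rwa [abs_neg]))).2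
    rw [show (-ξ2)^2 = ξ2^2 by ring] at b2
    linarith
  -- continuity facts
  have base : ∀ t : ℝ, Continuous (fun ξ : ℝ => (1 - |ξ|) * Real.cos (ξ * t)) :=
    fun t => (continuous_const.sub continuous_abs).mul (Real.continuous_cos.comp (continuous_id'.mul continuous_const))
  -- Step 1: swap sum and the ξ1 integral
  have claim1 : ∑ e : Fin n → Bool, Fj (A e) * Fj (B e)
      = ∫ ξ1 in (-1:ℝ)..1, ∑ e : Fin n → Bool, (1 - |ξ1|) * Real.cos (ξ1 * A e) * Fj (B e) := by
    have he : ∀ e : Fin n → Bool, Fj (A e) * Fj (B e)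
        = ∫ ξ1 in (-1:ℝ)..1, (1 - |ξ1|) * Real.cos (ξ1 * A e) * Fj (B e) := by
      intro e
      simp only [Fj]
      rw [← intervalIntegral.integral_mul_const]
    rw [Finset.sum_congr rfl (fun e _ => he e), ← intervalIntegral.integral_finset_sum]
    exact fun e _ => Continuous.intervalIntegrable ((base (A e)).mul continuous_const) _ _
  -- Step 2: per ξ1, rewrite inner sum as a ξ2 integral
  have claim2 : ∀ ξ1 : ℝ, (∑ e : Fin n → Bool, (1 - |ξ1|) * Real.cos (ξ1 * A e) * Fj (B e))
      = ∫ ξ2 in (-1:ℝ)..1, ∑ e : Fin n → Bool,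
          (1 - |ξ1|) * Real.cos (ξ1 * A e) * ((1 - |ξ2|) * Real.cos (ξ2 * B e)) := by
    intro ξ1
    rw [intervalIntegral.integral_finset_sum
      (f := fun e ξ2 => (1 - |ξ1|) * Real.cos (ξ1 * A e) * ((1 - |ξ2|) * Real.cos (ξ2 * B e)))
      (fun e _ => Continuous.intervalIntegrable (continuous_const.mul (base (B e))) _ _)]
    apply Finset.sum_congr rfl
    intro e _
    simp only [Fj]
    rw [← intervalIntegral.integral_const_mul]
  set I2 : ℝ := ∫ ξ2 in (-1:ℝ)..1, Real.exp (-(R/16) * ξ2^2) with hI2def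
  have hI2nonneg : 0 ≤ I2 :=
    intervalIntegral.integral_nonneg (by norm_num) (fun x _ => (Real.exp_pos _).le)
  have claim3 : ∀ ξ1 ∈ Set.Icc (-1:ℝ) 1,
      (∑ e : Fin n → Bool, (1 - |ξ1|) * Real.cos (ξ1 * A e) * Fj (B e))
      ≤ 2^n * Real.exp (-(R/16) * ξ1^2) * I2 := by
    intro ξ1 hξ1
    have habs1 : |ξ1| ≤ 1 := abs_le.2 ⟨hξ1.1, hξ1.2⟩
    rw [claim2 ξ1]
    have hpt : ∀ ξ2 ∈ Set.Icc (-1:ℝ) 1,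
        (∑ e : Fin n → Bool,
          (1 - |ξ1|) * Real.cos (ξ1 * A e) * ((1 - |ξ2|) * Real.cos (ξ2 * B e)))
        ≤ 2^n * Real.exp (-(R/16) * ξ1^2) * Real.exp (-(R/16) * ξ2^2) := by
      intro ξ2 hξ2
      have habs2 : |ξ2| ≤ 1 := abs_le.2 ⟨hξ2.1, hξ2.2⟩
      have hfact : (∑ e : Fin n → Bool,
          (1 - |ξ1|) * Real.cos (ξ1 * A e) * ((1 - |ξ2|) * Real.cos (ξ2 * B e)))
          = ((1 - |ξ1|) * (1 - |ξ2|)) * ∑ e : Fin n → Bool,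
              Real.cos (ξ1 * A e) * Real.cos (ξ2 * B e) := by
        rw [Finset.mul_sum]
        apply Finset.sum_congr rfl
        intro e _
        ring
      rw [hfact]
      have hM : (0:ℝ) ≤ 2^n * Real.exp (-(R/16) * (ξ1^2 + ξ2^2)) := by positivity
      have hK0 : 0 ≤ (1 - |ξ1|) * (1 - |ξ2|) := by
        apply mul_nonneg <;> linarith [abs_nonneg ξ1, abs_nonneg ξ2]
      have hK1 : (1 - |ξ1|) * (1 - |ξ2|) ≤ 1 := by
        nlinarith [abs_nonneg ξ1, abs_nonneg ξ2]
      calc ((1 - |ξ1|) * (1 - |ξ2|)) * ∑ e : Fin n → Bool,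
              Real.cos (ξ1 * A e) * Real.cos (ξ2 * B e)
          ≤ ((1 - |ξ1|) * (1 - |ξ2|)) * (2^n * Real.exp (-(R/16) * (ξ1^2 + ξ2^2))) :=
            mul_le_mul_of_nonneg_left (key ξ1 ξ2 habs1 habs2) hK0
        _ ≤ 1 * (2^n * Real.exp (-(R/16) * (ξ1^2 + ξ2^2))) :=
            mul_le_mul_of_nonneg_right hK1 hM
        _ = 2^n * Real.exp (-(R/16) * ξ1^2) * Real.exp (-(R/16) * ξ2^2) := by
            rw [one_mul, show -(R/16) * (ξ1^2 + ξ2^2)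
              = -(R/16) * ξ1^2 + -(R/16) * ξ2^2 by ring, Real.exp_add]
            ring
    calc (∫ ξ2 in (-1:ℝ)..1, ∑ e : Fin n → Bool,
          (1 - |ξ1|) * Real.cos (ξ1 * A e) * ((1 - |ξ2|) * Real.cos (ξ2 * B e)))
        ≤ ∫ ξ2 in (-1:ℝ)..1, 2^n * Real.exp (-(R/16) * ξ1^2) * Real.exp (-(R/16) * ξ2^2) := by
          apply intervalIntegral.integral_mono_on (by norm_num)
          · apply Continuous.intervalIntegrable
            apply continuous_finset_sum
            intro e _
            exact continuous_const.mul (base (B e))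
          · apply Continuous.intervalIntegrable
            exact continuous_const.mul (Continuous.rexp (by fun_prop))
          · exact hpt
      _ = 2^n * Real.exp (-(R/16) * ξ1^2) * I2 := by
          rw [intervalIntegral.integral_const_mul]
  have hintH : Continuous (fun ξ1 : ℝ =>
      ∑ e : Fin n → Bool, (1 - |ξ1|) * Real.cos (ξ1 * A e) * Fj (B e)) := by
    apply continuous_finset_sum
    intro e _
    exact (base (A e)).mul continuous_const
  have claim4 : (∫ ξ1 in (-1:ℝ)..1, ∑ e : Fin n → Bool,
        (1 - |ξ1|) * Real.cos (ξ1 * A e) * Fj (B e))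
      ≤ 2^n * I2 * I2 := by
    calc (∫ ξ1 in (-1:ℝ)..1, ∑ e : Fin n → Bool,
          (1 - |ξ1|) * Real.cos (ξ1 * A e) * Fj (B e))
        ≤ ∫ ξ1 in (-1:ℝ)..1, 2^n * Real.exp (-(R/16) * ξ1^2) * I2 := by
          apply intervalIntegral.integral_mono_on (by norm_num)
          · exact Continuous.intervalIntegrable hintH _ _
          · apply Continuous.intervalIntegrable
            exact (continuous_const.mul (Continuous.rexp (by fun_prop))).mul continuous_const
          · exact claim3
      _ = 2^n * I2 * I2 := by
          rw [intervalIntegral.integral_mul_const, intervalIntegral.integral_const_mul]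
  have hI2le : I2 ≤ Real.sqrt (π / (R/16)) := by
    have hint : MeasureTheory.Integrable (fun ξ : ℝ => Real.exp (-(R/16) * ξ^2)) :=
      integrable_exp_neg_mul_sq (by positivity)
    rw [hI2def, intervalIntegral.integral_of_le (by norm_num : (-1:ℝ) ≤ 1)]
    calc (∫ ξ in Set.Ioc (-1:ℝ) 1, Real.exp (-(R/16) * ξ^2))
        ≤ ∫ ξ : ℝ, Real.exp (-(R/16) * ξ^2) :=
          MeasureTheory.setIntegral_le_integral hint
            (Filter.Eventually.of_forall fun x => (Real.exp_pos _).le)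
      _ = Real.sqrt (π / (R/16)) := integral_gaussian _
  have hsq : I2 * I2 ≤ π / (R/16) := by
    have h := mul_le_mul hI2le hI2le hI2nonneg (Real.sqrt_nonneg _)
    rwa [Real.mul_self_sqrt (by positivity)] at h
  calc ∑ e : Fin n → Bool, Fj (A e) * Fj (B e)
      ≤ 2^n * I2 * I2 := by rw [claim1]; exact claim4
    _ ≤ 2^n * (π / (R/16)) := by
        rw [mul_assoc]
        exact mul_le_mul_of_nonneg_left hsq (by positivity)
    _ = 2^n * (16 * π / R) := by
        congr 1
        field_simp


lemma abs_exp_two_sub_one (x : ℝ) :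
    ‖Complex.exp ((2*x : ℝ) * Complex.I) - 1‖ = 2 * |Real.sin x| := by
  have hre : (Complex.exp ((2*x : ℝ) * Complex.I) - 1).re = Real.cos (2*x) - 1 := by
    rw [Complex.sub_re, Complex.one_re, Complex.exp_ofReal_mul_I_re]
  have him : (Complex.exp ((2*x : ℝ) * Complex.I) - 1).im = Real.sin (2*x) := by
    rw [Complex.sub_im, Complex.one_im, Complex.exp_ofReal_mul_I_im, sub_zero]
  rw [Complex.norm_def, Complex.normSq_apply, hre, him]
  have hid : (Real.cos (2*x) - 1) * (Real.cos (2*x) - 1) + Real.sin (2*x) * Real.sin (2*x)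
      = (2 * |Real.sin x|)^2 := by
    have h1 : Real.cos (2*x) = Real.cos x ^2 - Real.sin x ^2 := Real.cos_two_mul' x
    have h2 : Real.sin x ^2 + Real.cos x ^2 = 1 := Real.sin_sq_add_cos_sq x
    have h3 : |Real.sin x|^2 = Real.sin x ^2 := sq_abs _
    have h4 : Real.sin (2*x) = 2 * Real.sin x * Real.cos x := Real.sin_two_mul x
    rw [h1, h4, mul_pow, h3]
    linear_combination (Real.sin x ^2 + Real.cos x ^2 - 1) * h2
  rw [hid, Real.sqrt_sq (by positivity)]

lemma dirichlet_abs (x : ℝ) (hx : Real.sin x ≠ 0) (a n : ℕ) :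
    ‖∑ k ∈ Finset.Ico a n, Complex.exp ((2*(k:ℝ)*x : ℝ) * Complex.I)‖
      ≤ 1 / |Real.sin x| := by
  set z : ℂ := Complex.exp ((2*x : ℝ) * Complex.I) with hzdef
  have hzk : ∀ k : ℕ, Complex.exp ((2*(k:ℝ)*x : ℝ) * Complex.I) = z ^ k := by
    intro k
    rw [hzdef, ← Complex.exp_nat_mul]
    congr 1
    push_cast
    ring
  have habs : ‖z - 1‖ = 2 * |Real.sin x| := abs_exp_two_sub_one x
  have hz1 : z ≠ 1 := by
    intro h
    rw [h, sub_self, norm_zero] at habs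
    have h0 : |Real.sin x| = 0 := by linarith
    exact hx (abs_eq_zero.1 h0)
  have hzabs : ‖z‖ = 1 := Complex.norm_exp_ofReal_mul_I _
  simp only [hzk]
  by_cases han : a ≤ n
  · rw [geom_sum_Ico hz1 han]
    rw [norm_div, habs]
    have hnum : ‖z ^ n - z ^ a‖ ≤ 2 := by
      calc ‖z ^ n - z ^ a‖ ≤ ‖z ^ n‖ + ‖z ^ a‖ :=
            norm_sub_le _ _
        _ = 2 := by rw [norm_pow, norm_pow, hzabs]; norm_num
    have hpos : 0 < |Real.sin x| := abs_pos.2 hx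
    rw [div_le_div_iff₀ (by positivity) hpos]
    calc ‖z ^ n - z ^ a‖ * |Real.sin x| ≤ 2 * |Real.sin x| :=
          mul_le_mul_of_nonneg_right hnum (abs_nonneg _)
      _ = 1 * (2 * |Real.sin x|) := by ring
  · rw [Finset.Ico_eq_empty (by omega), Finset.sum_empty, norm_zero]
    positivity

lemma dirichlet_cos (x : ℝ) (hx : Real.sin x ≠ 0) (a n : ℕ) :
    |∑ k ∈ Finset.Ico a n, Real.cos (2*(k:ℝ)*x)| ≤ 1 / |Real.sin x| := by
  have h : (∑ k ∈ Finset.Ico a n, Real.cos (2*(k:ℝ)*x))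
      = (∑ k ∈ Finset.Ico a n, Complex.exp ((2*(k:ℝ)*x : ℝ) * Complex.I)).re := by
    rw [Complex.re_sum]
    exact Finset.sum_congr rfl (fun k _ => (Complex.exp_ofReal_mul_I_re _).symm)
  rw [h]
  exact (Complex.abs_re_le_norm _).trans (dirichlet_abs x hx a n)

lemma dirichlet_sin (x : ℝ) (hx : Real.sin x ≠ 0) (a n : ℕ) :
    |∑ k ∈ Finset.Ico a n, Real.sin (2*(k:ℝ)*x)| ≤ 1 / |Real.sin x| := by
  have h : (∑ k ∈ Finset.Ico a n, Real.sin (2*(k:ℝ)*x))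
      = (∑ k ∈ Finset.Ico a n, Complex.exp ((2*(k:ℝ)*x : ℝ) * Complex.I)).im := by
    rw [Complex.im_sum]
    exact Finset.sum_congr rfl (fun k _ => (Complex.exp_ofReal_mul_I_im _).symm)
  rw [h]
  exact (Complex.abs_im_le_norm _).trans (dirichlet_abs x hx a n)

-- Abel-type rearrangement
lemma abel_sum (w : ℕ → ℝ) (n : ℕ) :
    ∑ k ∈ Finset.range n, (k:ℝ) * w k
      = ∑ j ∈ Finset.range n, ∑ k ∈ Finset.Ico (j+1) n, w k := by
  induction n with
  | zero => simp
  | succ n ih =>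
    rw [Finset.sum_range_succ, ih, Finset.sum_range_succ]
    rw [Finset.Ico_eq_empty (by omega : ¬ n + 1 < n + 1), Finset.sum_empty, add_zero]
    have h : ∀ j ∈ Finset.range n, (∑ k ∈ Finset.Ico (j+1) (n+1), w k)
        = (∑ k ∈ Finset.Ico (j+1) n, w k) + w n := by
      intro j hj
      have hj' := Finset.mem_range.1 hj
      rw [Finset.sum_Ico_succ_top (by omega : j + 1 ≤ n)]
    rw [Finset.sum_congr rfl h, Finset.sum_add_distrib, Finset.sum_const, Finset.card_range]
    ring

lemma quadform (m : ℕ) (hm : 100 ≤ m) (x : ℝ) (hsx : Real.sin x ≠ 0)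
    (hD : 1/|Real.sin x| ≤ (m:ℝ)/160) (s t : ℝ) :
    (m:ℝ)/20 * (s^2 + t^2) ≤
      ∑ k ∈ Finset.range (m+1),
        (s * Real.cos ((k:ℝ) * x) + t * (-((k:ℝ)/m) * Real.sin ((k:ℝ) * x)))^2 := by
  have hm0 : (0:ℕ) < m := by omega
  have mpos : (0:ℝ) < m := by exact_mod_cast hm0
  have h100 : (100:ℝ) ≤ m := by exact_mod_cast hm
  have hmne : (m:ℝ) ≠ 0 := ne_of_gt mpos
  set M11 : ℝ := ∑ k ∈ Finset.range (m+1), Real.cos ((k:ℝ)*x)^2 with hM11def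
  set M22 : ℝ := ∑ k ∈ Finset.range (m+1), ((k:ℝ)/m)^2 * Real.sin ((k:ℝ)*x)^2 with hM22def
  set M12 : ℝ := ∑ k ∈ Finset.range (m+1),
      Real.cos ((k:ℝ)*x) * (-((k:ℝ)/m) * Real.sin ((k:ℝ)*x)) with hM12def
  have hsplit : (∑ k ∈ Finset.range (m+1),
        (s * Real.cos ((k:ℝ) * x) + t * (-((k:ℝ)/m) * Real.sin ((k:ℝ) * x)))^2)
      = s^2 * M11 + t^2 * M22 + 2*s*t*M12 := by
    rw [hM11def, hM22def, hM12def, Finset.mul_sum, Finset.mul_sum, Finset.mul_sum,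
      ← Finset.sum_add_distrib, ← Finset.sum_add_distrib]
    apply Finset.sum_congr rfl
    intro k _
    ring
  -- sum of cos(2kx) over any Ico is at most m/160
  have hdir : ∀ a n : ℕ, |∑ k ∈ Finset.Ico a n, Real.cos (2*(k:ℝ)*x)| ≤ (m:ℝ)/160 :=
    fun a n => (dirichlet_cos x hsx a n).trans hD
  have hdirs : ∀ a n : ℕ, |∑ k ∈ Finset.Ico a n, Real.sin (2*(k:ℝ)*x)| ≤ (m:ℝ)/160 :=
    fun a n => (dirichlet_sin x hsx a n).trans hD
  -- M11 lower bound
  have hM11 : (m:ℝ)*159/320 ≤ M11 := by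
    have hterm : ∀ k : ℕ, Real.cos ((k:ℝ)*x)^2 = 1/2 + Real.cos (2*(k:ℝ)*x)/2 := by
      intro k
      have := Real.cos_sq ((k:ℝ)*x)
      rwa [show 2*((k:ℝ)*x) = 2*(k:ℝ)*x by ring] at this
    rw [hM11def, Finset.sum_congr rfl (fun k _ => hterm k), Finset.sum_add_distrib,
      Finset.sum_const, Finset.card_range]
    have hs2 : (∑ k ∈ Finset.range (m+1), Real.cos (2*(k:ℝ)*x)/2)
        = (∑ k ∈ Finset.range (m+1), Real.cos (2*(k:ℝ)*x))/2 := by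
      rw [Finset.sum_div]
    rw [hs2]
    have hlow : -((m:ℝ)/160) ≤ ∑ k ∈ Finset.range (m+1), Real.cos (2*(k:ℝ)*x) := by
      have := hdir 0 (m+1)
      rw [← Finset.range_eq_Ico] at this
      linarith [(abs_le.1 this).1]
    simp only [nsmul_eq_mul]
    push_cast
    linarith [hlow]
  -- M22 lower bound
  have hM22 : (m:ℝ)/17 ≤ M22 := by
    set q : ℕ := (m+1)/2 with hqdef
    have hsub : Finset.Ico q (m+1) ⊆ Finset.range (m+1) := by
      rw [Finset.range_eq_Ico]
      exact Finset.Ico_subset_Ico (Nat.zero_le q) le_rfl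
    have step1 : (∑ k ∈ Finset.Ico q (m+1), ((k:ℝ)/m)^2 * Real.sin ((k:ℝ)*x)^2) ≤ M22 := by
      rw [hM22def]
      apply Finset.sum_le_sum_of_subset_of_nonneg hsub
      intro k _ _
      positivity
    have step2 : (∑ k ∈ Finset.Ico q (m+1), (1/4) * Real.sin ((k:ℝ)*x)^2)
        ≤ ∑ k ∈ Finset.Ico q (m+1), ((k:ℝ)/m)^2 * Real.sin ((k:ℝ)*x)^2 := by
      apply Finset.sum_le_sum
      intro k hk
      have hk' := Finset.mem_Ico.1 hk
      have h2k : m ≤ 2*k := by omega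
      have hkm : (1:ℝ)/2 ≤ (k:ℝ)/m := by
        rw [div_le_div_iff₀ (by norm_num) mpos]
        exact_mod_cast by omega
      have : (1:ℝ)/4 ≤ ((k:ℝ)/m)^2 := by nlinarith
      exact mul_le_mul_of_nonneg_right this (sq_nonneg _)
    have step3 : ((m:ℝ)/4 - (m:ℝ)/320)
        ≤ ∑ k ∈ Finset.Ico q (m+1), Real.sin ((k:ℝ)*x)^2 := by
      have hterm : ∀ k : ℕ, Real.sin ((k:ℝ)*x)^2 = 1/2 - Real.cos (2*(k:ℝ)*x)/2 := by
        intro k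
        have h1 := Real.sin_sq_add_cos_sq ((k:ℝ)*x)
        have h2 := Real.cos_sq ((k:ℝ)*x)
        rw [show 2*((k:ℝ)*x) = 2*(k:ℝ)*x by ring] at h2
        linarith
      rw [Finset.sum_congr rfl (fun k _ => hterm k), Finset.sum_sub_distrib,
        Finset.sum_const, Nat.card_Ico]
      have hcard : (m:ℝ)/2 ≤ ((m+1-q : ℕ) : ℝ) := by
        have h2 : m ≤ (m+1-q)*2 := by omega
        rw [div_le_iff₀ (by norm_num : (0:ℝ) < 2)]
        exact_mod_cast h2
      have hcos : (∑ k ∈ Finset.Ico q (m+1), Real.cos (2*(k:ℝ)*x)/2)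
          ≤ (m:ℝ)/320 := by
        rw [← Finset.sum_div]
        have := (abs_le.1 (hdir q (m+1))).2
        linarith
      simp only [nsmul_eq_mul]
      have hge : ((m+1-q:ℕ):ℝ) * (1/2) ≥ (m:ℝ)/4 := by linarith [hcard]
      linarith
    calc (m:ℝ)/17 ≤ (1/4) * ((m:ℝ)/4 - (m:ℝ)/320) := by linarith
      _ ≤ (1/4) * ∑ k ∈ Finset.Ico q (m+1), Real.sin ((k:ℝ)*x)^2 := by
          apply mul_le_mul_of_nonneg_left step3 (by norm_num)
      _ = ∑ k ∈ Finset.Ico q (m+1), (1/4) * Real.sin ((k:ℝ)*x)^2 := by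
          rw [Finset.mul_sum]
      _ ≤ M22 := step2.trans step1
  -- M12 bound
  have hM12 : |M12| ≤ (m:ℝ)/300 := by
    have hterm : ∀ k : ℕ, Real.cos ((k:ℝ)*x) * (-((k:ℝ)/m) * Real.sin ((k:ℝ)*x))
        = (-(1/(2*m))) * ((k:ℝ) * Real.sin (2*(k:ℝ)*x)) := by
      intro k
      have h := Real.sin_two_mul ((k:ℝ)*x)
      rw [show 2*((k:ℝ)*x) = 2*(k:ℝ)*x by ring] at h
      rw [h]
      field_simp
    rw [hM12def, Finset.sum_congr rfl (fun k _ => hterm k), ← Finset.mul_sum,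
      abel_sum (fun k => Real.sin (2*(k:ℝ)*x)) (m+1)]
    rw [abs_mul, abs_neg]
    have habs : |∑ j ∈ Finset.range (m+1), ∑ k ∈ Finset.Ico (j+1) (m+1),
        Real.sin (2*(k:ℝ)*x)| ≤ ((m:ℝ)+1) * ((m:ℝ)/160) := by
      calc |∑ j ∈ Finset.range (m+1), ∑ k ∈ Finset.Ico (j+1) (m+1), Real.sin (2*(k:ℝ)*x)|
          ≤ ∑ j ∈ Finset.range (m+1), |∑ k ∈ Finset.Ico (j+1) (m+1), Real.sin (2*(k:ℝ)*x)| :=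
            Finset.abs_sum_le_sum_abs _ _
        _ ≤ ∑ j ∈ Finset.range (m+1), (m:ℝ)/160 :=
            Finset.sum_le_sum (fun j _ => hdirs (j+1) (m+1))
        _ = ((m:ℝ)+1) * ((m:ℝ)/160) := by
            rw [Finset.sum_const, Finset.card_range]
            push_cast
            ring
    have h1 : |(1:ℝ)/(2*m)| = 1/(2*m) := abs_of_pos (by positivity)
    rw [h1]
    have hmb : ((m:ℝ)+1) ≤ 2*(m:ℝ) := by linarith
    calc 1/(2*(m:ℝ)) * |∑ j ∈ Finset.range (m+1), ∑ k ∈ Finset.Ico (j+1) (m+1),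
          Real.sin (2*(k:ℝ)*x)|
        ≤ 1/(2*(m:ℝ)) * (((m:ℝ)+1) * ((m:ℝ)/160)) :=
          mul_le_mul_of_nonneg_left habs (by positivity)
      _ ≤ (m:ℝ)/300 := by
          rw [div_mul_eq_mul_div, one_mul,
            div_le_div_iff₀ (by positivity) (by norm_num : (0:ℝ) < 300)]
          nlinarith [h100, mpos]
  -- assemble
  rw [hsplit]
  have habs12 := abs_le.1 hM12
  have h1 : 0 ≤ (s+t)^2 * (M12 + (m:ℝ)/300) := mul_nonneg (sq_nonneg _) (by linarith)
  have h2 : 0 ≤ (s-t)^2 * ((m:ℝ)/300 - M12) := mul_nonneg (sq_nonneg _) (by linarith)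
  have h3 : 0 ≤ s^2 * (M11 - (m:ℝ)/17) := by
    apply mul_nonneg (sq_nonneg _)
    have : (m:ℝ)/17 ≤ (m:ℝ)*159/320 := by linarith
    linarith
  have h4 : 0 ≤ t^2 * (M22 - (m:ℝ)/17) := mul_nonneg (sq_nonneg _) (by linarith)
  nlinarith [h1, h2, h3, h4, sq_nonneg s, sq_nonneg t, mpos]




lemma sin_lower_s18 (m : ℕ) (hm : 100 ≤ m) (x : ℝ)
    (hx : ∀ k : ℤ, (256:ℝ) / m ≤ |x - π * k|) :
    Real.sin x ≠ 0 ∧ 1/|Real.sin x| ≤ (m:ℝ)/160 := by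
  have hm0 : (0:ℕ) < m := by omega
  have mpos : (0:ℝ) < m := by exact_mod_cast hm0
  set r : ℤ := round (x / π) with hrdef
  set u : ℝ := x - π * r with hudef
  have hpi : (0:ℝ) < π := Real.pi_pos
  have hu2 : |u| ≤ π / 2 := by
    have h := abs_sub_round (x / π)
    have heq : u = π * (x / π - r) := by
      rw [hudef]; field_simp
    rw [heq, abs_mul, abs_of_pos hpi]
    calc π * |x / π - r| ≤ π * (1/2) := mul_le_mul_of_nonneg_left h hpi.le
      _ = π / 2 := by ring
  have hu1 : (256:ℝ)/m ≤ |u| := hx r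
  have hsx : |Real.sin x| = |Real.sin u| := by
    have hxe : x = u + r * π := by rw [hudef]; ring
    have hpow : |((-1:ℝ))^r| = 1 := by
      rcases Int.even_or_odd r with he | ho
      · rw [he.neg_one_zpow, abs_one]
      · rw [ho.neg_one_zpow, abs_neg, abs_one]
    rw [hxe, Real.sin_add_int_mul_pi, abs_mul, hpow, one_mul]
  have habs : Real.sin |u| = |Real.sin u| := by
    rcases le_or_gt 0 u with h | h
    · rw [abs_of_nonneg h, abs_of_nonneg (Real.sin_nonneg_of_nonneg_of_le_pi h (by linarith [abs_of_nonneg h, abs_le.1 hu2]))]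
    · have hneg : Real.sin u < 0 := by
        apply Real.sin_neg_of_neg_of_neg_pi_lt h
        have := (abs_le.1 hu2).1
        linarith
      rw [abs_of_neg h, abs_of_neg hneg, Real.sin_neg]
  have hjordan : 2/π * |u| ≤ Real.sin |u| := Real.mul_le_sin (abs_nonneg u) hu2
  have hpilt : π < 3.15 := Real.pi_lt_d2
  have hchain : (160:ℝ)/m ≤ |Real.sin x| := by
    rw [hsx, ← habs]
    calc (160:ℝ)/m ≤ 2/π * ((256:ℝ)/m) := by
          rw [div_mul_div_comm, div_le_div_iff₀ mpos (by positivity)]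
          nlinarith [mul_le_mul_of_nonneg_right hpilt.le mpos.le]
      _ ≤ 2/π * |u| := mul_le_mul_of_nonneg_left hu1 (by positivity)
      _ ≤ Real.sin |u| := hjordan
  have hpos' : 0 < |Real.sin x| := lt_of_lt_of_le (by positivity) hchain
  constructor
  · exact fun h => by rw [h] at hpos'; simp at hpos'
  · rw [div_le_div_iff₀ hpos' (by norm_num : (0:ℝ) < 160)]
    rw [div_le_iff₀ mpos] at hchain
    linarith [hchain]

lemma gB_deriv (m : ℕ) (e : Fin (m+1) → Bool) (x : ℝ) :
    deriv (gB m e) x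
      = ∑ k : Fin (m+1), (if e k then (1:ℝ) else 0) * (-Real.sin ((k:ℕ) * x) * (k:ℕ)) := by
  have h : HasDerivAt (gB m e)
      (∑ k : Fin (m+1), (if e k then (1:ℝ) else 0) * (-Real.sin ((k:ℕ) * x) * (k:ℕ))) x := by
    apply HasDerivAt.fun_sum
    intro k _
    have h1 : HasDerivAt (fun y : ℝ => ((k:ℕ):ℝ) * y) ((k:ℕ):ℝ) x := by
      simpa using (hasDerivAt_id x).const_mul (((k:ℕ):ℝ))
    exact (h1.cos).const_mul _
  exact h.deriv

-- coordinate extraction from the ball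
lemma coord_bound (A B : ℝ) (z : EuclideanSpace ℝ (Fin 2)) (r : ℝ)
    (h : (WithLp.toLp 2 ![A, B] : EuclideanSpace ℝ (Fin 2)) ∈ Metric.ball z r) :
    |A - z 0| < r ∧ |B - z 1| < r := by
  have hd := (Metric.mem_ball (α := EuclideanSpace ℝ (Fin 2))).1 h
  rw [EuclideanSpace.dist_eq] at hd
  have key : ∀ i : Fin 2, dist ((WithLp.toLp 2 ![A, B] : EuclideanSpace ℝ (Fin 2)) i) (z i) < r := by
    intro i
    have h1 : dist ((WithLp.toLp 2 ![A, B] : EuclideanSpace ℝ (Fin 2)) i) (z i) ^2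
        ≤ ∑ j : Fin 2, dist ((WithLp.toLp 2 ![A, B] : EuclideanSpace ℝ (Fin 2)) j) (z j) ^2 :=
      Finset.single_le_sum (f := fun j => dist ((WithLp.toLp 2 ![A, B] : EuclideanSpace ℝ (Fin 2)) j) (z j) ^2)
        (fun j _ => sq_nonneg _) (Finset.mem_univ i)
    have h2 : dist ((WithLp.toLp 2 ![A, B] : EuclideanSpace ℝ (Fin 2)) i) (z i)
        ≤ Real.sqrt (∑ j : Fin 2, dist ((WithLp.toLp 2 ![A, B] : EuclideanSpace ℝ (Fin 2)) j) (z j) ^2) := by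
      rw [show dist ((WithLp.toLp 2 ![A, B] : EuclideanSpace ℝ (Fin 2)) i) (z i)
          = Real.sqrt (dist ((WithLp.toLp 2 ![A, B] : EuclideanSpace ℝ (Fin 2)) i) (z i) ^2) from
        (Real.sqrt_sq dist_nonneg).symm]
      exact Real.sqrt_le_sqrt h1
    exact lt_of_le_of_lt h2 hd
  constructor
  · have := key 0
    rwa [show ((WithLp.toLp 2 ![A, B] : EuclideanSpace ℝ (Fin 2)) 0) = A from rfl, Real.dist_eq] at this
  · have := key 1
    rwa [show ((WithLp.toLp 2 ![A, B] : EuclideanSpace ℝ (Fin 2)) 1) = B from rfl, Real.dist_eq] at this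


open scoped Classical in
/-- There is `C > 0` and `m₀ ∈ ℕ` such that for all `m ≥ m₀`: if `x` satisfies
`d(x, πℤ) ≥ 2⁸/m`, `g ~ G_m`, and `B ⊆ ℝ²` is an open ball of diameter `2⁻⁵` (i.e. of
radius `2⁻⁶`), then `P((|g(x)|, |m⁻¹g'(x)|) ∈ B) ≤ C/m`, the probability being the
proportion of the `2^(m+1)` Bernoulli outcomes. -/
theorem stmt18 :
    ∃ C : ℝ, 0 < C ∧ ∃ m₀ : ℕ, ∀ m : ℕ, m₀ ≤ m →
      ∀ x : ℝ, (∀ k : ℤ, (2 : ℝ) ^ (8 : ℕ) / m ≤ |x - π * k|) →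
      ∀ z : EuclideanSpace ℝ (Fin 2),
        (∑ e : Fin (m + 1) → Bool,
          if (WithLp.toLp 2 ![|gB m e x|, |(m : ℝ)⁻¹ * deriv (gB m e) x|] : EuclideanSpace ℝ (Fin 2)) ∈
              Metric.ball z (((2 : ℝ) ^ (6 : ℕ))⁻¹) then (1 : ℝ) else 0) / 2 ^ (m + 1) ≤
          C / m := by
  refine ⟨20000, by norm_num, 100, ?_⟩
  intro m hm x hx z
  have hm0 : (0:ℕ) < m := by omega
  have mpos : (0:ℝ) < m := by exact_mod_cast hm0
  have hx' : ∀ k : ℤ, (256:ℝ)/m ≤ |x - π * k| := by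
    intro k
    rw [show (256:ℝ) = 2^(8:ℕ) by norm_num]
    exact hx k
  obtain ⟨hsx, hD⟩ := sin_lower_s18 m hm x hx'
  set a : Fin (m+1) → ℝ := fun k => Real.cos (((k:ℕ):ℝ) * x) with hadef
  set b : Fin (m+1) → ℝ := fun k => -(((k:ℕ):ℝ)/(m:ℝ)) * Real.sin (((k:ℕ):ℝ) * x) with hbdef
  have ha : ∀ k, |a k| ≤ 1 := fun k => Real.abs_cos_le_one _
  have hb : ∀ k, |b k| ≤ 1 := by
    intro k
    rw [hbdef]
    simp only
    rw [abs_mul, abs_neg, abs_div, abs_of_nonneg (Nat.cast_nonneg (k:ℕ)),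
      abs_of_pos mpos]
    have hk : ((k:ℕ):ℝ) ≤ m := by
      exact_mod_cast Nat.lt_succ_iff.mp k.isLt
    have h1 : ((k:ℕ):ℝ)/m ≤ 1 := by rw [div_le_one mpos]; exact hk
    calc ((k:ℕ):ℝ)/m * |Real.sin (((k:ℕ):ℝ) * x)| ≤ 1 * 1 := by
          apply mul_le_mul h1 (Real.abs_sin_le_one _) (abs_nonneg _) (by norm_num)
      _ = 1 := by norm_num
  have hquadFin : ∀ s t : ℝ, (m:ℝ)/20 * (s^2 + t^2) ≤ ∑ k : Fin (m+1), (s * a k + t * b k)^2 := by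
    intro s t
    have h := quadform m hm x hsx hD s t
    rw [← Fin.sum_univ_eq_sum_range (fun k : ℕ => (s * Real.cos ((k:ℝ) * x)
      + t * (-((k:ℝ)/m) * Real.sin ((k:ℝ) * x)))^2) (m+1)] at h
    exact h
  have hcore : ∀ w1 w2 : ℝ, (∑ e : Fin (m+1) → Bool,
      Fj ((∑ k, if e k then a k else 0) - w1) * Fj ((∑ k, if e k then b k else 0) - w2))
      ≤ 2^(m+1) * (16 * π / ((m:ℝ)/20)) :=
    fun w1 w2 => core (m+1) a b ha hb ((m:ℝ)/20) (by positivity) hquadFin w1 w2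
  have hbridge1 : ∀ e : Fin (m+1) → Bool, gB m e x = ∑ k, if e k then a k else 0 := by
    intro e
    rw [gB]
    apply Finset.sum_congr rfl
    intro k _
    by_cases h : e k <;> simp [h, hadef]
  have hbridge2 : ∀ e : Fin (m+1) → Bool,
      (m:ℝ)⁻¹ * deriv (gB m e) x = ∑ k, if e k then b k else 0 := by
    intro e
    rw [gB_deriv m e x, Finset.mul_sum]
    apply Finset.sum_congr rfl
    intro k _
    by_cases h : e k
    · simp only [h, if_true, one_mul, hbdef]
      ring
    · simp [h]
  set r64 : ℝ := ((2:ℝ)^(6:ℕ))⁻¹ with hr64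
  have hr64' : r64 = 1/64 := by rw [hr64]; norm_num
  have hT : ∀ w1 w2 : ℝ, (∑ e : Fin (m+1) → Bool,
      Fj (gB m e x - w1) * Fj ((m:ℝ)⁻¹ * deriv (gB m e) x - w2))
      ≤ 2^(m+1) * (16 * π / ((m:ℝ)/20)) := by
    intro w1 w2
    rw [Finset.sum_congr rfl (fun e _ => by rw [hbridge1 e, hbridge2 e])]
    exact hcore w1 w2
  have hpoint : ∀ e : Fin (m+1) → Bool,
      (if (WithLp.toLp 2 ![|gB m e x|, |(m:ℝ)⁻¹ * deriv (gB m e) x|] : EuclideanSpace ℝ (Fin 2)) ∈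
          Metric.ball z r64 then (1:ℝ) else 0)
      ≤ 4 * (Fj (gB m e x - z 0) * Fj ((m:ℝ)⁻¹ * deriv (gB m e) x - z 1)
          + Fj (gB m e x - z 0) * Fj ((m:ℝ)⁻¹ * deriv (gB m e) x - (-(z 1)))
          + Fj (gB m e x - (-(z 0))) * Fj ((m:ℝ)⁻¹ * deriv (gB m e) x - z 1)
          + Fj (gB m e x - (-(z 0))) * Fj ((m:ℝ)⁻¹ * deriv (gB m e) x - (-(z 1)))) := by
    intro e
    have nn11 : 0 ≤ Fj (gB m e x - z 0) * Fj ((m:ℝ)⁻¹ * deriv (gB m e) x - z 1) :=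
      mul_nonneg (Fj_nonneg _) (Fj_nonneg _)
    have nn12 : 0 ≤ Fj (gB m e x - z 0) * Fj ((m:ℝ)⁻¹ * deriv (gB m e) x - (-(z 1))) :=
      mul_nonneg (Fj_nonneg _) (Fj_nonneg _)
    have nn21 : 0 ≤ Fj (gB m e x - (-(z 0))) * Fj ((m:ℝ)⁻¹ * deriv (gB m e) x - z 1) :=
      mul_nonneg (Fj_nonneg _) (Fj_nonneg _)
    have nn22 : 0 ≤ Fj (gB m e x - (-(z 0))) * Fj ((m:ℝ)⁻¹ * deriv (gB m e) x - (-(z 1))) :=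
      mul_nonneg (Fj_nonneg _) (Fj_nonneg _)
    by_cases hev : (WithLp.toLp 2 ![|gB m e x|, |(m:ℝ)⁻¹ * deriv (gB m e) x|] : EuclideanSpace ℝ (Fin 2)) ∈
        Metric.ball z r64
    · rw [if_pos hev]
      obtain ⟨h1, h2⟩ := coord_bound (|gB m e x|) (|(m:ℝ)⁻¹ * deriv (gB m e) x|) z r64 hev
      rw [hr64'] at h1 h2
      have c1 : |gB m e x - z 0| ≤ 1/64 ∨ |gB m e x - (-(z 0))| ≤ 1/64 := by
        rcases abs_cases (gB m e x) with ⟨hA, _⟩ | ⟨hA, _⟩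
        · left; rw [hA] at h1; linarith
        · right
          rw [hA] at h1
          have heq : gB m e x - (-(z 0)) = -(-(gB m e x) - z 0) := by ring
          rw [heq, abs_neg]
          linarith
      have c2 : |(m:ℝ)⁻¹ * deriv (gB m e) x - z 1| ≤ 1/64
          ∨ |(m:ℝ)⁻¹ * deriv (gB m e) x - (-(z 1))| ≤ 1/64 := by
        rcases abs_cases ((m:ℝ)⁻¹ * deriv (gB m e) x) with ⟨hA, _⟩ | ⟨hA, _⟩
        · left; rw [hA] at h2; linarith
        · right
          rw [hA] at h2
          have heq : (m:ℝ)⁻¹ * deriv (gB m e) x - (-(z 1))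
              = -(-((m:ℝ)⁻¹ * deriv (gB m e) x) - z 1) := by ring
          rw [heq, abs_neg]
          linarith
      rcases c1 with c1 | c1 <;> rcases c2 with c2 | c2 <;>
        · have hp := mul_le_mul (Fj_ge_half c1) (Fj_ge_half c2)
            (by norm_num : (0:ℝ) ≤ 1/2) (Fj_nonneg _)
          linarith [nn11, nn12, nn21, nn22, hp]
    · rw [if_neg hev]
      linarith [nn11, nn12, nn21, nn22]
  have hsum : (∑ e : Fin (m+1) → Bool,
      if (WithLp.toLp 2 ![|gB m e x|, |(m:ℝ)⁻¹ * deriv (gB m e) x|] : EuclideanSpace ℝ (Fin 2)) ∈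
          Metric.ball z r64 then (1:ℝ) else 0)
      ≤ 16 * (2^(m+1) * (16 * π / ((m:ℝ)/20))) := by
    calc (∑ e : Fin (m+1) → Bool,
        if (WithLp.toLp 2 ![|gB m e x|, |(m:ℝ)⁻¹ * deriv (gB m e) x|] : EuclideanSpace ℝ (Fin 2)) ∈
            Metric.ball z r64 then (1:ℝ) else 0)
        ≤ ∑ e : Fin (m+1) → Bool,
            4 * (Fj (gB m e x - z 0) * Fj ((m:ℝ)⁻¹ * deriv (gB m e) x - z 1)
            + Fj (gB m e x - z 0) * Fj ((m:ℝ)⁻¹ * deriv (gB m e) x - (-(z 1)))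
            + Fj (gB m e x - (-(z 0))) * Fj ((m:ℝ)⁻¹ * deriv (gB m e) x - z 1)
            + Fj (gB m e x - (-(z 0))) * Fj ((m:ℝ)⁻¹ * deriv (gB m e) x - (-(z 1)))) :=
          Finset.sum_le_sum (fun e _ => hpoint e)
      _ = 4 * ((∑ e : Fin (m+1) → Bool,
              Fj (gB m e x - z 0) * Fj ((m:ℝ)⁻¹ * deriv (gB m e) x - z 1))
          + (∑ e : Fin (m+1) → Bool,
              Fj (gB m e x - z 0) * Fj ((m:ℝ)⁻¹ * deriv (gB m e) x - (-(z 1))))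
          + (∑ e : Fin (m+1) → Bool,
              Fj (gB m e x - (-(z 0))) * Fj ((m:ℝ)⁻¹ * deriv (gB m e) x - z 1))
          + (∑ e : Fin (m+1) → Bool,
              Fj (gB m e x - (-(z 0))) * Fj ((m:ℝ)⁻¹ * deriv (gB m e) x - (-(z 1))))) := by
          rw [← Finset.mul_sum, Finset.sum_add_distrib, Finset.sum_add_distrib,
            Finset.sum_add_distrib]
      _ ≤ 4 * ((2^(m+1) * (16 * π / ((m:ℝ)/20))) + (2^(m+1) * (16 * π / ((m:ℝ)/20)))
          + (2^(m+1) * (16 * π / ((m:ℝ)/20))) + (2^(m+1) * (16 * π / ((m:ℝ)/20)))) := by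
          have t1 := hT (z 0) (z 1)
          have t2 := hT (z 0) (-(z 1))
          have t3 := hT (-(z 0)) (z 1)
          have t4 := hT (-(z 0)) (-(z 1))
          linarith
      _ = 16 * (2^(m+1) * (16 * π / ((m:ℝ)/20))) := by ring
  have h2p : (0:ℝ) < 2^(m+1) := by positivity
  calc (∑ e : Fin (m+1) → Bool,
      if (WithLp.toLp 2 ![|gB m e x|, |(m:ℝ)⁻¹ * deriv (gB m e) x|] : EuclideanSpace ℝ (Fin 2)) ∈
          Metric.ball z r64 then (1:ℝ) else 0) / 2^(m+1)
      ≤ (16 * (2^(m+1) * (16 * π / ((m:ℝ)/20)))) / 2^(m+1) := by gcongr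
    _ = 5120 * π / m := by field_simp; ring
    _ ≤ 20000 / m := by
        rw [div_le_div_iff₀ mpos mpos]
        nlinarith [Real.pi_lt_d2, mpos]
end
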